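/- arXiv:2005.03441 — 11 statements merged into one kernel-verified Lean document; each statement's English description precedes it below -/
import Mathlib

section
/- For every fixed integer k ≥ 5 and every natural number n, there exists a k-vertex-critical graph G that is 2P2-free (and hence also P5-free) with more than n vertices. In particular, there are infinitely many k-vertex-critical (P5,2P2)-free graphs. -/
open SimpleGraph

/-- `SGFree G H` means `G` contains no induced subgraph isomorphic to `H`,
i.e. `G` is `H`-free. -/
def SGFree {V : Type*} {W : Type*} (G : SimpleGraph V) (H : SimpleGraph W) : Prop :=
  IsEmpty (H ↪g G)

/-- `G` is `k`-vertex-critical: `χ(G) = k` and `χ(G - v) < k` for every vertex `v`. -/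
def IsKVertexCritical {V : Type*} (G : SimpleGraph V) (k : ℕ) : Prop :=
  G.chromaticNumber = (k : ℕ∞) ∧
    ∀ v : V, (G.induce ({v}ᶜ : Set V)).chromaticNumber < (k : ℕ∞)

/-- `2P2`: the disjoint union of two edges, on 4 vertices. -/
def twoP2 : SimpleGraph (Fin 4) := fromEdgeSet {s(0,1), s(2,3)}

/-- `P1 + K3`: the disjoint union of a vertex and a triangle. -/
def P1K3 : SimpleGraph (Fin 4) := fromEdgeSet {s(1,2), s(1,3), s(2,3)}

/-- `P2 + 2P1`: the disjoint union of an edge and two isolated vertices. -/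
def P2plus2P1 : SimpleGraph (Fin 4) := fromEdgeSet {s(0,1)}

/-- `P1 + P3`: the disjoint union of a vertex and a path on 3 vertices. -/
def P1P3 : SimpleGraph (Fin 4) := fromEdgeSet {s(1,2), s(2,3)}

/-- The diamond: `K4` minus an edge. -/
def diamond : SimpleGraph (Fin 4) := fromEdgeSet {s(0,2), s(0,3), s(1,2), s(1,3), s(2,3)}

/-- The 5-wheel `W5`: a 5-cycle plus a vertex adjacent to all five cycle vertices. -/
def W5 : SimpleGraph (Fin 6) :=
  fromEdgeSet {s(0,1), s(1,2), s(2,3), s(3,4), s(4,0), s(5,0), s(5,1), s(5,2), s(5,3), s(5,4)}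

/-- The graph `F`: a 5-cycle plus a vertex adjacent to exactly four of the cycle vertices. -/
def Fgraph : SimpleGraph (Fin 6) :=
  fromEdgeSet {s(0,1), s(1,2), s(2,3), s(3,4), s(4,0), s(5,0), s(5,1), s(5,2), s(5,3)}

namespace CritAux

/-- circular distance on `ZMod N`. -/
def cd (N : ℕ) (x y : ZMod N) : ℕ := (x - y).valMinAbs.natAbs

/-- The circulant graph on `ZMod N`: adjacent iff circular distance at least `q`. -/
def circ (N q : ℕ) : SimpleGraph (ZMod N) where
  Adj x y := x ≠ y ∧ q ≤ cd N x y
  symm := ⟨by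
    intro x y ⟨h1, h2⟩
    refine ⟨h1.symm, ?_⟩
    unfold cd at *
    rwa [show y - x = -(x - y) by ring, ZMod.natAbs_valMinAbs_neg]⟩
  loopless := ⟨fun x h => h.1 rfl⟩

lemma vma_eq {N : ℕ} [NeZero N] (z : ZMod N) (m : ℤ) (h : (m : ZMod N) = z)
    (hm : 2 * m.natAbs < N) : z.valMinAbs = m := by
  have hd : (N : ℤ) ∣ z.valMinAbs - m := by
    rw [← ZMod.intCast_zmod_eq_zero_iff_dvd]
    push_cast
    rw [h, sub_self]
  have h2 := ZMod.natAbs_valMinAbs_le z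
  have h3 := Int.eq_zero_of_dvd_of_natAbs_lt_natAbs hd
    (by simpa using (by omega : (z.valMinAbs - m).natAbs < N))
  omega

lemma cd_eq {N : ℕ} [NeZero N] (x y : ZMod N) (m : ℤ) (h : (m : ZMod N) = x - y)
    (hm : 2 * m.natAbs < N) : cd N x y = m.natAbs := by
  rw [cd, vma_eq _ m h hm]

/-- Core combinatorial lemma: there is no "2P2 pattern" in `circ N q`. -/
lemma no_pattern {N q : ℕ} [NeZero N] (hN : 4 * q + 1 ≤ N)
    {a b c d : ZMod N}
    (hab : q ≤ cd N a b) (hcd : q ≤ cd N c d)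
    (hac : cd N a c < q) (had : cd N a d < q)
    (hbc : cd N b c < q) (hbd : cd N b d < q) : False := by
  set sc := (c - a).valMinAbs with hsc
  set sd := (d - a).valMinAbs with hsd
  set tc := (c - b).valMinAbs with htc
  set td := (d - b).valMinAbs with htd
  have hsc' : sc.natAbs < q := by
    rw [hsc, show c - a = -(a - c) by ring, ZMod.natAbs_valMinAbs_neg]; exact hac
  have hsd' : sd.natAbs < q := by
    rw [hsd, show d - a = -(a - d) by ring, ZMod.natAbs_valMinAbs_neg]; exact had
  have htc' : tc.natAbs < q := by
    rw [htc, show c - b = -(b - c) by ring, ZMod.natAbs_valMinAbs_neg]; exact hbc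
  have htd' : td.natAbs < q := by
    rw [htd, show d - b = -(b - d) by ring, ZMod.natAbs_valMinAbs_neg]; exact hbd
  have hscz : ((sc : ℤ) : ZMod N) = c - a := ZMod.coe_valMinAbs _
  have hsdz : ((sd : ℤ) : ZMod N) = d - a := ZMod.coe_valMinAbs _
  have htcz : ((tc : ℤ) : ZMod N) = c - b := ZMod.coe_valMinAbs _
  have htdz : ((td : ℤ) : ZMod N) = d - b := ZMod.coe_valMinAbs _
  have e1 : cd N a b = (tc - sc).natAbs := by
    apply cd_eq
    · push_cast; rw [htcz, hscz]; ring
    · omega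
  have e3 : cd N c d = (sc - sd).natAbs := by
    apply cd_eq
    · push_cast; rw [hscz, hsdz]; ring
    · omega
  have e4 : tc - sc = td - sd := by
    have h5 := vma_eq (a - b) (tc - sc) (by push_cast; rw [htcz, hscz]; ring) (by omega)
    have h6 := vma_eq (a - b) (td - sd) (by push_cast; rw [htdz, hsdz]; ring) (by omega)
    omega
  omega

/-- Any set of vertices with pairwise circular distance < q has at most q elements. -/
lemma indep_bound {N q : ℕ} [NeZero N] (hq : 1 ≤ q) (hN : 4 * q + 1 ≤ N)
    (S : Finset (ZMod N)) (hS : ∀ x ∈ S, ∀ y ∈ S, x ≠ y → cd N x y < q) :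
    S.card ≤ q := by
  rcases S.eq_empty_or_nonempty with rfl | ⟨a, ha⟩
  · simp
  · set f : ZMod N → ℤ := fun x => (x - a).valMinAbs with hf
    have hfz : ∀ x, ((f x : ℤ) : ZMod N) = x - a := fun x => ZMod.coe_valMinAbs _
    have hfb : ∀ x ∈ S, (f x).natAbs < q := by
      intro x hx
      rcases eq_or_ne x a with rfl | hne
      · simp [hf]; omega
      · have := hS x hx a ha hne
        rw [cd] at this
        rwa [hf]
    have hclose : ∀ x ∈ S, ∀ y ∈ S, (f x - f y).natAbs < q := by
      intro x hx y hy
      rcases eq_or_ne x y with rfl | hne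
      · simp; omega
      · have h1 := hfb x hx
        have h2 := hfb y hy
        have h3 : cd N x y = (f x - f y).natAbs := by
          apply cd_eq
          · push_cast; rw [hfz, hfz]; ring
          · omega
        have := hS x hx y hy hne
        omega
    have hinj : Set.InjOn f S := by
      intro x hx y hy hxy
      have h4 : ((f x : ℤ) : ZMod N) = ((f y : ℤ) : ZMod N) := by rw [hxy]
      rw [hfz, hfz] at h4
      exact sub_left_injective h4
    set T := S.image f with hT
    have hcard : T.card = S.card := Finset.card_image_of_injOn hinj
    have hTne : T.Nonempty := ⟨f a, Finset.mem_image_of_mem f ha⟩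
    set m := T.min' hTne with hm
    have hmT := T.min'_mem hTne
    obtain ⟨x0, hx0, hfx0⟩ := Finset.mem_image.mp hmT
    have hsub : T ⊆ Finset.Icc m (m + (q - 1 : ℕ)) := by
      intro t ht
      obtain ⟨x, hx, rfl⟩ := Finset.mem_image.mp ht
      rw [Finset.mem_Icc]
      refine ⟨T.min'_le _ ht, ?_⟩
      have := hclose x hx x0 hx0
      rw [hfx0] at this
      omega
    have hle := Finset.card_le_card hsub
    rw [hcard] at hle
    have hIcc : (Finset.Icc m (m + (q - 1 : ℕ))).card = q := by
      rw [Int.card_Icc]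
      omega
    omega

lemma close_of_div_eq {a b q : ℕ} (hq : 0 < q) (h : a / q = b / q) :
    a < b + q ∧ b < a + q := by
  have h1 := Nat.div_add_mod a q
  have h2 := Nat.div_add_mod b q
  have h3 := Nat.mod_lt a hq
  have h4 := Nat.mod_lt b hq
  rw [h] at h1
  set u := q * (b / q) with hu
  omega

/-- Vertices with close values are non-adjacent. -/
lemma cd_lt_of_val_close {N q : ℕ} [NeZero N] (hN : 4 * q + 1 ≤ N) (x y : ZMod N)
    (h : x.val < y.val + q ∧ y.val < x.val + q) : cd N x y < q := by
  have hc : cd N x y = ((x.val : ℤ) - (y.val : ℤ)).natAbs := by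
    apply cd_eq
    · push_cast
      rw [ZMod.natCast_rightInverse x, ZMod.natCast_rightInverse y]
    · omega
  omega

section Main

variable {k q : ℕ} (hk : 5 ≤ k) (hq : 1 ≤ q)

lemma N_pos : NeZero ((k-1)*q+1) := ⟨Nat.succ_ne_zero _⟩

lemma hN_ge (hk : 5 ≤ k) : 4 * q + 1 ≤ (k-1)*q+1 := by
  have : 4 * q ≤ (k-1) * q := Nat.mul_le_mul_right q (by omega)
  omega

lemma colorable_k (hk : 5 ≤ k) (hq : 1 ≤ q) :
    (circ ((k-1)*q+1) q).Colorable k := by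
  set N := (k-1)*q+1 with hNdef
  haveI : NeZero N := N_pos
  have hN : 4 * q + 1 ≤ N := hN_ge hk
  refine ⟨Coloring.mk (fun x => ⟨x.val / q, ?_⟩) ?_⟩
  · have hx := ZMod.val_lt x
    rw [Nat.div_lt_iff_lt_mul hq]
    have h5 : (k-1) * q + q ≤ k * q := by
      rw [← Nat.succ_mul]
      exact Nat.mul_le_mul_right q (by omega)
    omega
  · intro x y hadj hcol
    simp only [Fin.mk.injEq] at hcol
    exact absurd (cd_lt_of_val_close hN x y (close_of_div_eq hq hcol)) (not_lt.mpr hadj.2)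

lemma not_colorable (hk : 5 ≤ k) (hq : 1 ≤ q) :
    ¬ (circ ((k-1)*q+1) q).Colorable (k-1) := by
  set N := (k-1)*q+1 with hNdef
  haveI : NeZero N := N_pos
  have hN : 4 * q + 1 ≤ N := hN_ge hk
  rintro ⟨C⟩
  have hcard : Fintype.card (Fin (k-1)) * q < Fintype.card (ZMod N) := by
    rw [Fintype.card_fin, ZMod.card]
    omega
  obtain ⟨i, hi⟩ := Fintype.exists_lt_card_fiber_of_mul_lt_card C hcard
  set S := ({x | C x = i} : Finset (ZMod N)) with hS
  have hind : ∀ x ∈ S, ∀ y ∈ S, x ≠ y → cd N x y < q := by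
    intro x hx y hy hne
    by_contra hge
    rw [hS, Finset.mem_filter] at hx hy
    exact C.valid ⟨hne, not_lt.mp hge⟩ (hx.2.trans hy.2.symm)
  have := indep_bound hq hN S hind
  omega

lemma colorable_del {N : ℕ} [NeZero N] (hk : 5 ≤ k) (hq : 1 ≤ q)
    (hNdef : N = (k-1)*q+1) (v : ZMod N) :
    ((circ N q).induce ({v}ᶜ : Set (ZMod N))).Colorable (k-1) := by
  have hN : 4 * q + 1 ≤ N := by
    have : 4 * q ≤ (k-1) * q := Nat.mul_le_mul_right q (by omega)
    omega
  have hbound : ∀ x : ZMod N, ((x - v).val - 1) / q < k - 1 := by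
    intro x
    have h3 := ZMod.val_lt (x - v)
    rw [Nat.div_lt_iff_lt_mul hq]
    have h8 : (x - v).val ≤ (k-1)*q := by omega
    have h9 : 1 * q ≤ (k-1) * q := Nat.mul_le_mul_right q (by omega)
    omega
  have hvalid : ∀ x y : ZMod N, x ≠ v → y ≠ v → (circ N q).Adj x y →
      ((x - v).val - 1) / q ≠ ((y - v).val - 1) / q := by
    intro x y hxv hyv hadj hcol
    have hx1 : (x - v).val ≠ 0 := fun h =>
      (sub_ne_zero.mpr hxv) (by rwa [← ZMod.val_eq_zero])
    have hy1 : (y - v).val ≠ 0 := fun h =>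
      (sub_ne_zero.mpr hyv) (by rwa [← ZMod.val_eq_zero])
    have hclose := close_of_div_eq hq hcol
    have hcd : cd N x y < q := by
      have hc : cd N x y = (((x - v).val : ℤ) - ((y - v).val : ℤ)).natAbs := by
        apply cd_eq
        · push_cast
          rw [ZMod.natCast_rightInverse (x - v), ZMod.natCast_rightInverse (y - v)]
          ring
        · omega
      omega
    exact absurd hcd (not_lt.mpr hadj.2)
  exact ⟨Coloring.mk (fun x => ⟨((x.1 - v).val - 1) / q, hbound x.1⟩)
    (fun {x y} hadj h => hvalid x.1 y.1 (Set.mem_compl_singleton_iff.mp x.2)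
      (Set.mem_compl_singleton_iff.mp y.2) hadj (congrArg Fin.val h))⟩

lemma chrom_eq (hk : 5 ≤ k) (hq : 1 ≤ q) :
    (circ ((k-1)*q+1) q).chromaticNumber = (k : ℕ∞) := by
  apply le_antisymm (colorable_k hk hq).chromaticNumber_le
  by_contra h
  push_neg at h
  have h2 : (circ ((k-1)*q+1) q).chromaticNumber ≤ ((k-1 : ℕ) : ℕ∞) := by
    have hk1 : (k : ℕ∞) = ((k-1 : ℕ) : ℕ∞) + 1 := by
      have h9 : k - 1 + 1 = k := by omega
      calc (k : ℕ∞) = ((k - 1 + 1 : ℕ) : ℕ∞) := by rw [h9]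
        _ = ((k-1 : ℕ) : ℕ∞) + 1 := by push_cast; ring
    rw [hk1] at h
    exact Order.le_of_lt_add_one h
  exact not_colorable hk hq (chromaticNumber_le_iff_colorable.mp h2)

end Main

end CritAux

open CritAux in
/-- For every fixed `k ≥ 5` and every `n`, there is a `k`-vertex-critical
`(P5, 2P2)`-free graph with more than `n` vertices. -/
theorem stmt_1 (k : ℕ) (hk : 5 ≤ k) (n : ℕ) :
    ∃ (V : Type) (inst : Fintype V) (G : SimpleGraph V),
      IsKVertexCritical G k ∧ SGFree G (pathGraph 5) ∧ SGFree G twoP2 ∧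
        n < @Fintype.card V inst := by
  set q := n + 1 with hqdef
  have hq : 1 ≤ q := by omega
  set N := (k-1)*q+1 with hNdef
  haveI : NeZero N := N_pos
  have hN : 4 * q + 1 ≤ N := hN_ge hk
  refine ⟨ZMod N, inferInstance, circ N q, ⟨chrom_eq hk hq, ?_⟩, ?_, ?_, ?_⟩
  · intro v
    have hcol := colorable_del hk hq hNdef v
    calc ((circ N q).induce ({v}ᶜ : Set (ZMod N))).chromaticNumber
        ≤ ((k-1 : ℕ) : ℕ∞) := hcol.chromaticNumber_le
      _ < (k : ℕ∞) := by
          rw [Nat.cast_lt]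
          omega
  · -- P5-free
    constructor
    intro g
    have h01 : (pathGraph 5).Adj 0 1 := by rw [pathGraph_adj]; decide
    have h34 : (pathGraph 5).Adj 3 4 := by rw [pathGraph_adj]; decide
    have h03 : ¬ (pathGraph 5).Adj 0 3 := by rw [pathGraph_adj]; decide
    have h04 : ¬ (pathGraph 5).Adj 0 4 := by rw [pathGraph_adj]; decide
    have h13 : ¬ (pathGraph 5).Adj 1 3 := by rw [pathGraph_adj]; decide
    have h14 : ¬ (pathGraph 5).Adj 1 4 := by rw [pathGraph_adj]; decide
    have a01 : (circ N q).Adj (g 0) (g 1) := g.map_rel_iff.mpr h01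
    have a34 : (circ N q).Adj (g 3) (g 4) := g.map_rel_iff.mpr h34
    have ncd : ∀ (i j : Fin 5), ¬ (pathGraph 5).Adj i j → i ≠ j → cd N (g i) (g j) < q := by
      intro i j hij hne
      have h1 : ¬ (circ N q).Adj (g i) (g j) := fun h => hij (g.map_rel_iff.mp h)
      have h2 : g i ≠ g j := fun h => hne (g.injective h)
      by_contra hge
      exact h1 ⟨h2, not_lt.mp hge⟩
    exact no_pattern hN a01.2 a34.2
      (ncd 0 3 h03 (by decide)) (ncd 0 4 h04 (by decide))
      (ncd 1 3 h13 (by decide)) (ncd 1 4 h14 (by decide))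
  · -- 2P2-free
    constructor
    intro f
    have h01 : twoP2.Adj 0 1 := by
      rw [twoP2, fromEdgeSet_adj]
      exact ⟨Set.mem_insert _ _, by decide⟩
    have h23 : twoP2.Adj 2 3 := by
      rw [twoP2, fromEdgeSet_adj]
      exact ⟨Set.mem_insert_of_mem _ rfl, by decide⟩
    have hnadj : ∀ (i j : Fin 4), s(i,j) ≠ s(0,1) → s(i,j) ≠ s(2,3) → ¬ twoP2.Adj i j := by
      intro i j h1 h2 hadj
      rw [twoP2, fromEdgeSet_adj] at hadj
      rcases hadj.1 with h | h
      · exact h1 h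
      · exact h2 h
    have h02 : ¬ twoP2.Adj 0 2 := hnadj 0 2 (by decide) (by decide)
    have h03 : ¬ twoP2.Adj 0 3 := hnadj 0 3 (by decide) (by decide)
    have h12 : ¬ twoP2.Adj 1 2 := hnadj 1 2 (by decide) (by decide)
    have h13 : ¬ twoP2.Adj 1 3 := hnadj 1 3 (by decide) (by decide)
    have a01 : (circ N q).Adj (f 0) (f 1) := f.map_rel_iff.mpr h01
    have a23 : (circ N q).Adj (f 2) (f 3) := f.map_rel_iff.mpr h23
    have ncd : ∀ (i j : Fin 4), ¬ twoP2.Adj i j → i ≠ j → cd N (f i) (f j) < q := by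
      intro i j hij hne
      have h1 : ¬ (circ N q).Adj (f i) (f j) := fun h => hij (f.map_rel_iff.mp h)
      have h2 : f i ≠ f j := fun h => hne (f.injective h)
      by_contra hge
      exact h1 ⟨h2, not_lt.mp hge⟩
    exact no_pattern hN a01.2 a23.2
      (ncd 0 2 h02 (by decide)) (ncd 0 3 h03 (by decide))
      (ncd 1 2 h12 (by decide)) (ncd 1 3 h13 (by decide))
  · rw [ZMod.card]
    have : 1 * q ≤ (k-1) * q := Nat.mul_le_mul_right q (by omega)
    omega
end

section
/- For every fixed integer k ≥ 5 and every natural number n, there exists a k-vertex-critical (P5, P1+K3)-free graph with more than n vertices. In particular, there are infinitely many k-vertex-critical (P5, P1+K3)-free graphs. -/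
open SimpleGraph

instance instNZ (m : ℕ) : NeZero (4*m+1) := ⟨by omega⟩

/-- difference-value case analysis in `ZMod N` -/
lemma vsub_cases {N : ℕ} [NeZero N] (a b : ZMod N) :
    (b.val ≤ a.val ∧ (a - b).val = a.val - b.val) ∨
    (a.val < b.val ∧ (a - b).val = a.val + N - b.val) := by
  by_cases hb : b = 0
  · subst hb; left; simp [ZMod.val_zero]
  · have hbv : b.val ≠ 0 := fun h => hb ((ZMod.val_eq_zero b).mp h)
    have hav := ZMod.val_lt a
    have hbv' := ZMod.val_lt b
    have : (a - b).val = (a.val + (N - b.val)) % N := by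
      rw [sub_eq_add_neg, ZMod.val_add, ZMod.neg_val, if_neg hb]
    rcases le_or_gt b.val a.val with h | h
    · left
      refine ⟨h, ?_⟩
      rw [this]
      have : a.val + (N - b.val) = (a.val - b.val) + N := by omega
      rw [this, Nat.add_mod_right, Nat.mod_eq_of_lt (by omega)]
    · right
      refine ⟨h, ?_⟩
      rw [this, Nat.mod_eq_of_lt (by omega)]
      omega

/-- The circulant graph on `ZMod (4m+1)` with connection set `{d : m ≤ d ≤ 3m+1}`. -/
def circ (m : ℕ) : SimpleGraph (ZMod (4*m+1)) where
  Adj x y := m ≤ (x - y).val ∧ (x - y).val ≤ 3*m+1 ∧ (x - y).val ≠ 0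
  symm := by
    constructor
    intro x y ⟨h1, h2, h3⟩
    have hne : x - y ≠ 0 := fun h => h3 (by rw [h]; exact ZMod.val_zero)
    have hval : (y - x).val = 4*m+1 - (x - y).val := by
      rw [show y - x = -(x - y) by ring, ZMod.neg_val, if_neg hne]
    have := ZMod.val_lt (x - y)
    refine ⟨by omega, by omega, by omega⟩
  loopless := by constructor; intro x ⟨h1, h2, h3⟩; simp at h3

lemma circ_adj {m : ℕ} {x y : ZMod (4*m+1)} :
    (circ m).Adj x y ↔ m ≤ (x - y).val ∧ (x - y).val ≤ 3*m+1 ∧ (x - y).val ≠ 0 := Iff.rfl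

lemma sub_ne_zero_of_ne' {m : ℕ} {x y : ZMod (4*m+1)} (h : x ≠ y) : (x - y).val ≠ 0 :=
  fun hv => h (sub_eq_zero.mp ((ZMod.val_eq_zero _).mp hv))


set_option maxHeartbeats 1000000 in
theorem p5arith (m v1 v2 v3 v4 d12 d23 d34 d13 d14 d24 : ℕ)
    (hm : 1 ≤ m)
    (h12 : (v2 ≤ v1 ∧ d12 = v1 - v2) ∨ (v1 < v2 ∧ d12 = v1 + (4*m+1) - v2))
    (h23 : (v3 ≤ v2 ∧ d23 = v2 - v3) ∨ (v2 < v3 ∧ d23 = v2 + (4*m+1) - v3))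
    (h34 : (v4 ≤ v3 ∧ d34 = v3 - v4) ∨ (v3 < v4 ∧ d34 = v3 + (4*m+1) - v4))
    (h13 : (v3 ≤ v1 ∧ d13 = v1 - v3) ∨ (v1 < v3 ∧ d13 = v1 + (4*m+1) - v3))
    (h14 : (v4 ≤ v1 ∧ d14 = v1 - v4) ∨ (v1 < v4 ∧ d14 = v1 + (4*m+1) - v4))
    (h24 : (v4 ≤ v2 ∧ d24 = v2 - v4) ∨ (v2 < v4 ∧ d24 = v2 + (4*m+1) - v4))
    (b1 : 0 < v1 ∧ v1 < 4*m+1) (b2 : 0 < v2 ∧ v2 < 4*m+1)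
    (b3 : 0 < v3 ∧ v3 < 4*m+1) (b4 : 0 < v4 ∧ v4 < 4*m+1)
    (e01 : m ≤ 4*m+1 - v1 ∧ 4*m+1 - v1 ≤ 3*m+1)
    (e12 : m ≤ d12 ∧ d12 ≤ 3*m+1)
    (e23 : m ≤ d23 ∧ d23 ≤ 3*m+1) (e34 : m ≤ d34 ∧ d34 ≤ 3*m+1)
    (n02 : ¬ (m ≤ 4*m+1 - v2 ∧ 4*m+1 - v2 ≤ 3*m+1))
    (n03 : ¬ (m ≤ 4*m+1 - v3 ∧ 4*m+1 - v3 ≤ 3*m+1))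
    (n04 : ¬ (m ≤ 4*m+1 - v4 ∧ 4*m+1 - v4 ≤ 3*m+1))
    (n13 : ¬ (m ≤ d13 ∧ d13 ≤ 3*m+1))
    (n14 : ¬ (m ≤ d14 ∧ d14 ≤ 3*m+1)) (n24 : ¬ (m ≤ d24 ∧ d24 ≤ 3*m+1)) : False := by
  omega

theorem circ_p5free (m : ℕ) (hm : 1 ≤ m) : IsEmpty (pathGraph 5 ↪g circ m) := by
  constructor
  intro f
  set y : Fin 5 → ZMod (4*m+1) := fun i => f i - f 0 with hy
  have hyinj : Function.Injective y := by
    intro a b h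
    exact f.injective (sub_left_inj.mp h)
  have key : ∀ i j : Fin 5, (pathGraph 5).Adj i j ↔ (circ m).Adj (y i) (y j) := by
    intro i j
    rw [← f.map_rel_iff]
    have : y i - y j = f i - f j := by simp [hy]
    rw [circ_adj, circ_adj, this]
  have y0 : y 0 = 0 := by simp [hy]
  have pa : ∀ i j : Fin 5, (pathGraph 5).Adj i j ↔ (i.val + 1 = j.val ∨ j.val + 1 = i.val) := by
    intro i j; rw [pathGraph_adj]
  have e01 := (key 0 1).mp (by rw [pa]; omega)
  have e12 := (key 1 2).mp (by rw [pa]; omega)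
  have e23 := (key 2 3).mp (by rw [pa]; omega)
  have e34 := (key 3 4).mp (by rw [pa]; omega)
  have n02 := (key 0 2).not.mp (by rw [pa]; omega)
  have n03 := (key 0 3).not.mp (by rw [pa]; omega)
  have n04 := (key 0 4).not.mp (by rw [pa]; omega)
  have n13 := (key 1 3).not.mp (by rw [pa]; omega)
  have n14 := (key 1 4).not.mp (by rw [pa]; omega)
  have n24 := (key 2 4).not.mp (by rw [pa]; omega)
  rw [circ_adj] at e01 e12 e23 e34
  rw [circ_adj] at n02 n03 n04 n13 n14 n24
  have dne : ∀ i j : Fin 5, i ≠ j → (y i - y j).val ≠ 0 := by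
    intro i j h; exact sub_ne_zero_of_ne' (fun hh => h (hyinj hh))
  have d13 := dne 1 3 (by decide)
  have d14 := dne 1 4 (by decide); have d24 := dne 2 4 (by decide)
  rw [y0] at e01 n02 n03 n04
  rw [zero_sub] at e01 n02 n03 n04
  have negval : ∀ i : Fin 5, y i ≠ 0 → (-(y i)).val = 4*m+1 - (y i).val := by
    intro i h; rw [ZMod.neg_val, if_neg h]
  have yne : ∀ i : Fin 5, i ≠ 0 → y i ≠ 0 := by
    intro i hi; rw [← y0]; exact fun h => hi (hyinj h)
  rw [negval 1 (yne 1 (by decide))] at e01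
  rw [negval 2 (yne 2 (by decide))] at n02
  rw [negval 3 (yne 3 (by decide))] at n03
  rw [negval 4 (yne 4 (by decide))] at n04
  have b1 := ZMod.val_lt (y 1); have b2 := ZMod.val_lt (y 2)
  have b3 := ZMod.val_lt (y 3); have b4 := ZMod.val_lt (y 4)
  have yz : ∀ i : Fin 5, i ≠ 0 → 0 < (y i).val := by
    intro i hi
    exact Nat.pos_of_ne_zero (fun h => (yne i hi) ((ZMod.val_eq_zero _).mp h))
  -- clean versions
  refine p5arith m (y 1).val (y 2).val (y 3).val (y 4).val
    (y 1 - y 2).val (y 2 - y 3).val (y 3 - y 4).val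
    (y 1 - y 3).val (y 1 - y 4).val (y 2 - y 4).val hm
    (vsub_cases _ _) (vsub_cases _ _) (vsub_cases _ _)
    (vsub_cases _ _) (vsub_cases _ _) (vsub_cases _ _)
    ⟨yz 1 (by decide), b1⟩ ⟨yz 2 (by decide), b2⟩ ⟨yz 3 (by decide), b3⟩ ⟨yz 4 (by decide), b4⟩
    ⟨e01.1, e01.2.1⟩ ⟨e12.1, e12.2.1⟩ ⟨e23.1, e23.2.1⟩ ⟨e34.1, e34.2.1⟩
    (fun h => n02 ⟨h.1, h.2, by omega⟩)
    (fun h => n03 ⟨h.1, h.2, by omega⟩)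
    (fun h => n04 ⟨h.1, h.2, by omega⟩)
    (fun h => n13 ⟨h.1, h.2, d13⟩)
    (fun h => n14 ⟨h.1, h.2, d14⟩)
    (fun h => n24 ⟨h.1, h.2, d24⟩)


theorem p1k3arith (m v1 v2 v3 d12 d13 d23 : ℕ)
    (hm : 1 ≤ m)
    (h12 : (v2 ≤ v1 ∧ d12 = v1 - v2) ∨ (v1 < v2 ∧ d12 = v1 + (4*m+1) - v2))
    (h13 : (v3 ≤ v1 ∧ d13 = v1 - v3) ∨ (v1 < v3 ∧ d13 = v1 + (4*m+1) - v3))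
    (h23 : (v3 ≤ v2 ∧ d23 = v2 - v3) ∨ (v2 < v3 ∧ d23 = v2 + (4*m+1) - v3))
    (b1 : 0 < v1 ∧ v1 < 4*m+1) (b2 : 0 < v2 ∧ v2 < 4*m+1) (b3 : 0 < v3 ∧ v3 < 4*m+1)
    (n01 : ¬ (m ≤ 4*m+1 - v1 ∧ 4*m+1 - v1 ≤ 3*m+1))
    (n02 : ¬ (m ≤ 4*m+1 - v2 ∧ 4*m+1 - v2 ≤ 3*m+1))
    (n03 : ¬ (m ≤ 4*m+1 - v3 ∧ 4*m+1 - v3 ≤ 3*m+1))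
    (e12 : m ≤ d12 ∧ d12 ≤ 3*m+1) (e13 : m ≤ d13 ∧ d13 ≤ 3*m+1)
    (e23 : m ≤ d23 ∧ d23 ≤ 3*m+1) : False := by
  omega

theorem circ_p1k3free (m : ℕ) (hm : 1 ≤ m) : IsEmpty (P1K3 ↪g circ m) := by
  constructor
  intro f
  set y : Fin 4 → ZMod (4*m+1) := fun i => f i - f 0 with hy
  have hyinj : Function.Injective y := by
    intro a b h
    exact f.injective (sub_left_inj.mp h)
  have key : ∀ i j : Fin 4, P1K3.Adj i j ↔ (circ m).Adj (y i) (y j) := by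
    intro i j
    rw [← f.map_rel_iff]
    have : y i - y j = f i - f j := by simp [hy]
    rw [circ_adj, circ_adj, this]
  have y0 : y 0 = 0 := by simp [hy]
  have e12 := (key 1 2).mp (by rw [P1K3, fromEdgeSet_adj]; exact ⟨by simp, by decide⟩)
  have e13 := (key 1 3).mp (by rw [P1K3, fromEdgeSet_adj]; exact ⟨by simp, by decide⟩)
  have e23 := (key 2 3).mp (by rw [P1K3, fromEdgeSet_adj]; exact ⟨by simp, by decide⟩)
  have n01 := (key 0 1).not.mp (by rw [P1K3, fromEdgeSet_adj]; simp [Sym2.eq_iff])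
  have n02 := (key 0 2).not.mp (by rw [P1K3, fromEdgeSet_adj]; simp [Sym2.eq_iff])
  have n03 := (key 0 3).not.mp (by rw [P1K3, fromEdgeSet_adj]; simp [Sym2.eq_iff])
  rw [circ_adj] at e12 e13 e23 n01 n02 n03
  rw [y0, zero_sub] at n01 n02 n03
  have yne : ∀ i : Fin 4, i ≠ 0 → y i ≠ 0 := by
    intro i hi; rw [← y0]; exact fun h => hi (hyinj h)
  rw [ZMod.neg_val, if_neg (yne 1 (by decide))] at n01
  rw [ZMod.neg_val, if_neg (yne 2 (by decide))] at n02
  rw [ZMod.neg_val, if_neg (yne 3 (by decide))] at n03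
  have b1 := ZMod.val_lt (y 1); have b2 := ZMod.val_lt (y 2); have b3 := ZMod.val_lt (y 3)
  have yz : ∀ i : Fin 4, i ≠ 0 → 0 < (y i).val := by
    intro i hi
    exact Nat.pos_of_ne_zero (fun h => (yne i hi) ((ZMod.val_eq_zero _).mp h))
  refine p1k3arith m (y 1).val (y 2).val (y 3).val
    (y 1 - y 2).val (y 1 - y 3).val (y 2 - y 3).val hm
    (vsub_cases _ _) (vsub_cases _ _) (vsub_cases _ _)
    ⟨yz 1 (by decide), b1⟩ ⟨yz 2 (by decide), b2⟩ ⟨yz 3 (by decide), b3⟩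
    (fun h => n01 ⟨h.1, h.2, by omega⟩)
    (fun h => n02 ⟨h.1, h.2, by omega⟩)
    (fun h => n03 ⟨h.1, h.2, by omega⟩)
    ⟨e12.1, e12.2.1⟩ ⟨e13.1, e13.2.1⟩ ⟨e23.1, e23.2.1⟩

/-- Vertices in the same class `((· - v).val - 1)/m` are non-adjacent. -/
lemma class_ne {m : ℕ} (hm : 1 ≤ m) {v x y : ZMod (4*m+1)} (hx : x ≠ v) (hy : y ≠ v)
    (hadj : (circ m).Adj x y) : ((x - v).val - 1) / m ≠ ((y - v).val - 1) / m := by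
  intro hq
  have hD : (circ m).Adj x y := hadj
  rw [circ_adj] at hD
  have hxy : x - y = (x - v) - (y - v) := by ring
  rw [hxy] at hD
  have L := vsub_cases (x - v) (y - v)
  have bx := ZMod.val_lt (x - v); have by' := ZMod.val_lt (y - v)
  have hxz : 0 < (x - v).val :=
    Nat.pos_of_ne_zero (sub_ne_zero_of_ne' hx)
  have hyz : 0 < (y - v).val :=
    Nat.pos_of_ne_zero (sub_ne_zero_of_ne' hy)
  -- division facts
  have dx := Nat.div_add_mod ((x - v).val - 1) m
  have dy := Nat.div_add_mod ((y - v).val - 1) m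
  have mx := Nat.mod_lt ((x - v).val - 1) (show 0 < m by omega)
  have my := Nat.mod_lt ((y - v).val - 1) (show 0 < m by omega)
  rw [hq] at dx
  generalize m * (((y - v).val - 1) / m) = t at dx dy
  omega

/-- the 4-coloring classes away from a deleted vertex -/
def colorAt (m : ℕ) (v x : ZMod (4*m+1)) : ℕ := ((x - v).val - 1) / m

lemma colorAt_lt {m : ℕ} (hm : 1 ≤ m) {v x : ZMod (4*m+1)} (hx : x ≠ v) :
    colorAt m v x < 4 := by
  have b := ZMod.val_lt (x - v)
  have hz : 0 < (x - v).val := Nat.pos_of_ne_zero (sub_ne_zero_of_ne' hx)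
  rw [colorAt, Nat.div_lt_iff_lt_mul (show 0 < m by omega)]
  omega

/-- `circ m` minus any vertex is 4-colorable. -/
theorem circ_del_col4 (m : ℕ) (hm : 1 ≤ m) (v : ZMod (4*m+1)) :
    ((circ m).induce ({v}ᶜ : Set (ZMod (4*m+1)))).Colorable 4 := by
  refine ⟨Coloring.mk (fun x => ⟨colorAt m v x.1, colorAt_lt hm x.2⟩) ?_⟩
  intro x y hadj
  have : (circ m).Adj x.1 y.1 := hadj
  intro hc
  exact class_ne hm x.2 y.2 this (by simpa [colorAt] using congrArg Fin.val hc)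

/-- `circ m` is 5-colorable. -/
theorem circ_col5 (m : ℕ) (hm : 1 ≤ m) : (circ m).Colorable 5 := by
  classical
  refine ⟨Coloring.mk
    (fun x => if h : x = 0 then ⟨4, by omega⟩ else ⟨colorAt m 0 x, by have := colorAt_lt hm h; omega⟩) ?_⟩
  intro x y hadj hc
  by_cases hx : x = 0 <;> by_cases hy : y = 0
  · subst hx; subst hy; exact (circ m).irrefl hadj
  · rw [dif_pos hx, dif_neg hy] at hc
    have := colorAt_lt hm hy
    have := congrArg Fin.val hc
    simp at this; omega
  · rw [dif_neg hx, dif_pos hy] at hc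
    have := colorAt_lt hm hx
    have := congrArg Fin.val hc
    simp at this; omega
  · rw [dif_neg hx, dif_neg hy] at hc
    exact class_ne hm hx hy hadj (by simpa [colorAt] using congrArg Fin.val hc)

/-- Independent sets in `circ m` have at most `m` vertices. -/
lemma circ_indep_bound (m : ℕ) (hm : 1 ≤ m) (S : Finset (ZMod (4*m+1)))
    (hS : ∀ x ∈ S, ∀ y ∈ S, ¬ (circ m).Adj x y) : S.card ≤ m := by
  classical
  rcases S.eq_empty_or_nonempty with h | ⟨a, ha⟩
  · simp [h]
  · -- every x ∈ S is circularly within m-1 of a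
    have hclose : ∀ x ∈ S, (x - a).val ≤ m - 1 ∨ (x - a).val ≥ 3*m+2 := by
      intro x hx
      by_cases hxa : x = a
      · left; simp [hxa, ZMod.val_zero]
      · have hna := hS x hx a ha
        rw [circ_adj] at hna
        have hnz : (x - a).val ≠ 0 := sub_ne_zero_of_ne' hxa
        have := ZMod.val_lt (x - a)
        omega
    set c0 : ZMod (4*m+1) := ((m-1 : ℕ) : ZMod (4*m+1)) with hc0
    have hc0v : c0.val = m - 1 := ZMod.val_cast_of_lt (by omega)
    set g : ZMod (4*m+1) → ℕ := fun x => (x - a + c0).val with hg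
    have hginj : Set.InjOn g S := by
      intro x _ y _ h
      have := ZMod.val_injective _ h
      have : x - a = y - a := by
        have := add_right_cancel this
        exact this
      exact sub_left_inj.mp this
    have hgbound : ∀ x ∈ S, g x ≤ 2*m - 2 := by
      intro x hx
      have h1 := hclose x hx
      have h2 := ZMod.val_lt (x - a)
      have : g x = ((x - a).val + (m - 1)) % (4*m+1) := by
        rw [hg]; simp only []
        rw [ZMod.val_add, hc0v]
      rcases h1 with h | h
      · rw [this, Nat.mod_eq_of_lt (by omega)]; omega
      · rw [this, show (x-a).val + (m-1) = ((x-a).val + (m-1) - (4*m+1)) + (4*m+1) by omega,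
          Nat.add_mod_right, Nat.mod_eq_of_lt (by omega)]
        omega
    -- pairwise: |g x - g y| ≤ m - 1
    have hpair : ∀ x ∈ S, ∀ y ∈ S, g x ≤ g y + (m - 1) := by
      intro x hx y hy
      by_cases hxy : x = y
      · subst hxy; omega
      · have hna := hS x hx y hy
        rw [circ_adj] at hna
        have hnz : (x - y).val ≠ 0 := sub_ne_zero_of_ne' hxy
        have hvb := ZMod.val_lt (x - y)
        have hrel : x - y = (x - a + c0) - (y - a + c0) := by ring
        have L := vsub_cases (x - a + c0) (y - a + c0)
        rw [← hrel] at L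
        have gx := hgbound x hx; have gy := hgbound y hy
        have : g x = (x - a + c0).val := rfl
        have : g y = (y - a + c0).val := rfl
        omega
    -- image is inside an interval of m naturals
    have himg : S.card ≤ m := by
      have hcard : S.card = (S.image g).card := (Finset.card_image_of_injOn hginj).symm
      have hne : (S.image g).Nonempty := ⟨g a, Finset.mem_image_of_mem g ha⟩
      set t0 := (S.image g).min' hne with ht0
      have hsub : S.image g ⊆ Finset.Icc t0 (t0 + (m-1)) := by
        intro u hu
        rcases Finset.mem_image.mp hu with ⟨x, hx, rfl⟩
        rcases Finset.mem_image.mp ((S.image g).min'_mem hne) with ⟨z, hz, hz2⟩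
        refine Finset.mem_Icc.mpr ⟨(S.image g).min'_le _ hu, ?_⟩
        have := hpair x hx z hz
        omega
      calc S.card = (S.image g).card := hcard
        _ ≤ (Finset.Icc t0 (t0 + (m-1))).card := Finset.card_le_card hsub
        _ = m := by rw [Nat.card_Icc]; omega
    exact himg

theorem circ_not_col4 (m : ℕ) (hm : 1 ≤ m) : ¬ (circ m).Colorable 4 := by
  classical
  rintro ⟨c⟩
  have hmaps : ∀ a ∈ (Finset.univ : Finset (ZMod (4*m+1))), c a ∈ (Finset.univ : Finset (Fin 4)) :=
    fun a _ => Finset.mem_univ _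
  have hcard : (Finset.univ : Finset (Fin 4)).card * m < (Finset.univ : Finset (ZMod (4*m+1))).card := by
    rw [Finset.card_univ, Finset.card_univ, ZMod.card, Fintype.card_fin]
    omega
  obtain ⟨y, -, hy⟩ := Finset.exists_lt_card_fiber_of_mul_lt_card_of_maps_to hmaps hcard
  set S := Finset.filter (fun x => c x = y) Finset.univ with hSdef
  have hSind : ∀ x ∈ S, ∀ z ∈ S, ¬ (circ m).Adj x z := by
    intro x hx z hz hadj
    have hx' := (Finset.mem_filter.mp hx).2
    have hz' := (Finset.mem_filter.mp hz).2
    exact c.valid hadj (hx'.trans hz'.symm)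
  have := circ_indep_bound m hm S hSind
  omega

/-- `circ m` joined with a clique on `Fin r`. -/
def bigG (m r : ℕ) : SimpleGraph (ZMod (4*m+1) ⊕ Fin r) where
  Adj u v := match u, v with
    | .inl x, .inl y => (circ m).Adj x y
    | .inr i, .inr j => i ≠ j
    | _, _ => True
  symm := by
    constructor
    rintro (x | i) (y | j) h
    · exact (circ m).adj_symm h
    · trivial
    · trivial
    · exact Ne.symm h
  loopless := by
    constructor
    rintro (x | i) h
    · exact (circ m).irrefl h
    · exact h rfl

lemma bigG_adj_ll {m r : ℕ} {x y : ZMod (4*m+1)} :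
    (bigG m r).Adj (.inl x) (.inl y) ↔ (circ m).Adj x y := Iff.rfl
lemma bigG_adj_lr {m r : ℕ} {x : ZMod (4*m+1)} {j : Fin r} :
    (bigG m r).Adj (.inl x) (.inr j) := trivial
lemma bigG_adj_rl {m r : ℕ} {x : ZMod (4*m+1)} {i : Fin r} :
    (bigG m r).Adj (.inr i) (.inl x) := trivial
lemma bigG_adj_rr {m r : ℕ} {i j : Fin r} :
    (bigG m r).Adj (.inr i) (.inr j) ↔ i ≠ j := Iff.rfl

/-- lifting `H`-freeness from `circ` to `bigG` for graphs with no dominating vertex. -/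
lemma bigG_free {W : Type*} (H : SimpleGraph W) (m r : ℕ)
    (hH : ∀ a : W, ∃ b : W, a ≠ b ∧ ¬ H.Adj a b)
    (hfree : IsEmpty (H ↪g circ m)) : IsEmpty (H ↪g bigG m r) := by
  constructor
  intro f
  have hl : ∀ a : W, ∃ x, f a = .inl x := by
    intro a
    rcases h : f a with x | i
    · exact ⟨x, rfl⟩
    · exfalso
      obtain ⟨b, hab, hnadj⟩ := hH a
      have hfne : f a ≠ f b := fun hh => hab (f.injective hh)
      have : (bigG m r).Adj (f a) (f b) := by
        rw [h] at hfne ⊢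
        rcases h' : f b with y | j
        · exact bigG_adj_rl
        · rw [h'] at hfne
          exact bigG_adj_rr.mpr (fun hij => hfne (by rw [hij]))
      exact hnadj (f.map_rel_iff.mp this)
  choose g hg using hl
  have : H ↪g circ m := by
    refine ⟨⟨g, ?_⟩, ?_⟩
    · intro a b h
      apply f.injective
      rw [hg a, hg b, h]
    · intro a b
      constructor
      · intro h
        have : (bigG m r).Adj (f a) (f b) := by rw [hg a, hg b]; exact h
        exact f.map_rel_iff.mp this
      · intro h
        have := f.map_rel_iff.mpr h
        rw [hg a, hg b] at this
        exact this
  exact hfree.false this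

theorem bigG_col (m r : ℕ) (hm : 1 ≤ m) : (bigG m r).Colorable (5 + r) := by
  classical
  obtain ⟨c5⟩ := circ_col5 m hm
  refine ⟨Coloring.mk (fun u => match u with
    | .inl x => ⟨(c5 x).val, by have := (c5 x).isLt; omega⟩
    | .inr i => ⟨5 + i.val, by have := i.isLt; omega⟩) ?_⟩
  rintro (x | i) (y | j) hadj hc
  · exact c5.valid hadj (by simpa [Fin.val_inj] using congrArg Fin.val hc)
  · have hc' : (c5 x).val = 5 + j.val := congrArg Fin.val hc
    have := (c5 x).isLt
    omega
  · have hc' : 5 + i.val = (c5 y).val := congrArg Fin.val hc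
    have := (c5 y).isLt
    omega
  · have hij : i ≠ j := hadj
    have := congrArg Fin.val hc
    simp at this
    exact hij (Fin.val_inj.mp (by omega))

theorem bigG_not_col (m r : ℕ) (hm : 1 ≤ m) : ¬ (bigG m r).Colorable (4 + r) := by
  classical
  rintro ⟨c⟩
  set R : Finset (Fin (4+r)) := Finset.image (fun i => c (.inr i)) Finset.univ with hR
  have hRcard : R.card = r := by
    rw [hR, Finset.card_image_of_injective _ ?_, Finset.card_univ, Fintype.card_fin]
    intro i j hij
    by_contra hne
    exact c.valid (bigG_adj_rr.mpr hne) hij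
  set S : Finset (Fin (4+r)) := Finset.univ \ R with hS
  have hScard : S.card = 4 := by
    rw [hS, Finset.card_sdiff_of_subset (Finset.subset_univ R), Finset.card_univ, Fintype.card_fin, hRcard]
    omega
  have hmem : ∀ x : ZMod (4*m+1), c (.inl x) ∈ S := by
    intro x
    rw [hS, Finset.mem_sdiff]
    refine ⟨Finset.mem_univ _, ?_⟩
    rw [hR, Finset.mem_image]
    rintro ⟨i, -, hi⟩
    exact c.valid (bigG_adj_lr (j := i)) hi.symm
  have hcol : (circ m).Coloring ↥S :=
    Coloring.mk (fun x => ⟨c (.inl x), hmem x⟩)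
      (fun hadj hc => c.valid (bigG_adj_ll.mpr hadj) (by simpa using congrArg Subtype.val hc))
  have := hcol.colorable
  rw [Fintype.card_coe, hScard] at this
  exact circ_not_col4 m hm this

theorem bigG_del_col (m r : ℕ) (hm : 1 ≤ m) (v : ZMod (4*m+1) ⊕ Fin r) :
    ((bigG m r).induce ({v}ᶜ : Set (ZMod (4*m+1) ⊕ Fin r))).Colorable (4 + r) := by
  classical
  rcases v with x0 | i0
  · -- deleted a circulant vertex
    refine ⟨Coloring.mk (fun u => match hu : u.1 with
      | .inl x => ⟨min (colorAt m x0 x) 3, by omega⟩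
      | .inr i => ⟨4 + i.val, by have := i.isLt; omega⟩) ?_⟩
    rintro ⟨(x | i), ha⟩ ⟨(y | j), hb⟩ hadj hc
    · have hxa : x ≠ x0 := fun h => ha (by simp [h])
      have hyb : y ≠ x0 := fun h => hb (by simp [h])
      have hAdj : (circ m).Adj x y := hadj
      have h1 := colorAt_lt hm (v := x0) hxa
      have h2 := colorAt_lt hm (v := x0) hyb
      have := congrArg Fin.val hc
      simp only [min_def] at this
      have heq : colorAt m x0 x = colorAt m x0 y := by
        split_ifs at this <;> omega
      exact class_ne hm hxa hyb hAdj heq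
    · have := congrArg Fin.val hc
      have h1 : min (colorAt m x0 x) 3 ≤ 3 := min_le_right _ _
      simp at this; omega
    · have := congrArg Fin.val hc
      have h1 : min (colorAt m x0 y) 3 ≤ 3 := min_le_right _ _
      simp at this; omega
    · have hij : i ≠ j := hadj
      have := congrArg Fin.val hc
      simp at this
      exact hij (Fin.val_inj.mp (by omega))
  · -- deleted a clique vertex
    obtain ⟨c5⟩ := circ_col5 m hm
    have hr : 1 ≤ r := by have := i0.isLt; omega
    refine ⟨Coloring.mk (fun u => match hu : u.1 with
      | .inl x => ⟨(c5 x).val, by have := (c5 x).isLt; omega⟩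
      | .inr i => ⟨if i.val < i0.val then 5 + i.val else 4 + i.val,
          by have := i.isLt; have := i0.isLt; split_ifs <;> omega⟩) ?_⟩
    rintro ⟨(x | i), ha⟩ ⟨(y | j), hb⟩ hadj hc
    · exact c5.valid hadj (by simpa [Fin.val_inj] using congrArg Fin.val hc)
    · have hj : j ≠ i0 := fun h => hb (by simp [h])
      have := congrArg Fin.val hc
      have h5 := (c5 x).isLt
      have hj' : j.val ≠ i0.val := fun h => hj (Fin.val_inj.mp h)
      simp at this
      split_ifs at this <;> omega
    · have hi : i ≠ i0 := fun h => ha (by simp [h])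
      have := congrArg Fin.val hc
      have h5 := (c5 y).isLt
      have hi' : i.val ≠ i0.val := fun h => hi (Fin.val_inj.mp h)
      simp at this
      split_ifs at this <;> omega
    · have hij : i ≠ j := hadj
      have hi : i ≠ i0 := fun h => ha (by simp [h])
      have hj : j ≠ i0 := fun h => hb (by simp [h])
      have hi' : i.val ≠ i0.val := fun h => hi (Fin.val_inj.mp h)
      have hj' : j.val ≠ i0.val := fun h => hj (Fin.val_inj.mp h)
      have hij' : i.val ≠ j.val := fun h => hij (Fin.val_inj.mp h)
      have := congrArg Fin.val hc
      simp at this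
      split_ifs at this <;> omega


theorem bigG_chrom (m r : ℕ) (hm : 1 ≤ m) :
    (bigG m r).chromaticNumber = ((5 + r : ℕ) : ℕ∞) := by
  apply le_antisymm
  · exact chromaticNumber_le_iff_colorable.mpr (bigG_col m r hm)
  · have h4 : ¬ ((bigG m r).chromaticNumber ≤ ((4 + r : ℕ) : ℕ∞)) :=
      fun hle => bigG_not_col m r hm (chromaticNumber_le_iff_colorable.mp hle)
    have hlt := not_le.mp h4
    have := Order.add_one_le_of_lt hlt
    calc ((5 + r : ℕ) : ℕ∞) = ((4 + r : ℕ) : ℕ∞) + 1 := by push_cast; ring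
      _ ≤ _ := this

theorem bigG_critical (m r : ℕ) (hm : 1 ≤ m) :
    IsKVertexCritical (bigG m r) (5 + r) := by
  constructor
  · exact bigG_chrom m r hm
  · intro v
    have h := chromaticNumber_le_iff_colorable.mpr (bigG_del_col m r hm v)
    calc ((bigG m r).induce ({v}ᶜ)).chromaticNumber ≤ ((4 + r : ℕ) : ℕ∞) := h
      _ < ((5 + r : ℕ) : ℕ∞) := by
          rw [Nat.cast_lt]; omega

theorem pathGraph5_nodom : ∀ a : Fin 5, ∃ b : Fin 5, a ≠ b ∧ ¬ (pathGraph 5).Adj a b := by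
  intro a
  by_cases h : a.val ≤ 1
  · refine ⟨3, ?_, ?_⟩
    · intro hh; rw [hh] at h; exact absurd h (by decide)
    · rw [pathGraph_adj]
      omega
  · refine ⟨0, ?_, ?_⟩
    · intro hh; rw [hh] at h; exact h (by decide)
    · rw [pathGraph_adj]
      omega

theorem P1K3_nodom : ∀ a : Fin 4, ∃ b : Fin 4, a ≠ b ∧ ¬ P1K3.Adj a b := by
  intro a
  by_cases h : a = 0
  · refine ⟨1, by rw [h]; decide, ?_⟩
    rw [h, P1K3, fromEdgeSet_adj]
    simp [Sym2.eq_iff]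
  · refine ⟨0, h, ?_⟩
    intro hadj
    rw [P1K3, fromEdgeSet_adj] at hadj
    rcases hadj with ⟨hmem, -⟩
    fin_cases a <;> simp [Sym2.eq_iff] at hmem <;> try exact h rfl

/-- For every fixed `k ≥ 5` and every `n`, there is a `k`-vertex-critical
`(P5, P1 + K3)`-free graph with more than `n` vertices. -/
theorem stmt_2 (k : ℕ) (hk : 5 ≤ k) (n : ℕ) :
    ∃ (V : Type) (inst : Fintype V) (G : SimpleGraph V),
      IsKVertexCritical G k ∧ SGFree G (pathGraph 5) ∧ SGFree G P1K3 ∧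
        n < @Fintype.card V inst := by
  set m := n + 1 with hm
  set r := k - 5 with hr
  have hm1 : 1 ≤ m := by omega
  refine ⟨ZMod (4*m+1) ⊕ Fin r, inferInstance, bigG m r, ?_, ?_, ?_, ?_⟩
  · have := bigG_critical m r hm1
    rwa [show 5 + r = k by omega] at this
  · exact bigG_free _ m r pathGraph5_nodom (circ_p5free m hm1)
  · exact bigG_free _ m r P1K3_nodom (circ_p1k3free m hm1)
  · rw [Fintype.card_sum, ZMod.card, Fintype.card_fin]
    omega
end

section
/- Let G be a k-vertex-critical graph. Then G has no two nonempty disjoint vertex subsets X and Y such that: (i) there is no edge between X and Y (X and Y are anticomplete to each other); (ii) χ(G[X]) ≤ χ(G[Y]); and (iii) every vertex of Y is adjacent to every vertex of N(X), where N(X) denotes the set of vertices outside X having a neighbor in X. -/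
open SimpleGraph

/-- A `k`-vertex-critical graph has no two nonempty disjoint anticomplete sets `X, Y`
with `χ(G[X]) ≤ χ(G[Y])` such that `Y` is complete to `N(X)`. -/
theorem stmt_5 {V : Type} [Fintype V] (G : SimpleGraph V) (k : ℕ)
    (hG : IsKVertexCritical G k) :
    ¬ ∃ X Y : Set V, X.Nonempty ∧ Y.Nonempty ∧ Disjoint X Y ∧
        (∀ x ∈ X, ∀ y ∈ Y, ¬ G.Adj x y) ∧
        (G.induce X).chromaticNumber ≤ (G.induce Y).chromaticNumber ∧
        (∀ y ∈ Y, ∀ z : V, z ∉ X → (∃ x ∈ X, G.Adj x z) → G.Adj y z) := by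
  classical
  rintro ⟨X, Y, hXne, hYne, hdisj, hanti, hle, hcompl⟩
  obtain ⟨x, hx⟩ := hXne
  obtain ⟨hχ, hcrit⟩ := hG
  have hx' := hcrit x
  cases k with
  | zero => simp at hx'
  | succ k =>
    -- G - x is k-colorable
    have hle' : (G.induce ({x}ᶜ : Set V)).chromaticNumber ≤ (k : ℕ∞) := by
      have h1 : ((k+1 : ℕ) : ℕ∞) = Order.succ (k : ℕ∞) := by
        rw [Order.succ_eq_add_one]; push_cast; ring
      rw [h1] at hx'
      exact Order.le_of_lt_succ hx'
    have hcol : (G.induce ({x}ᶜ : Set V)).Colorable k :=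
      chromaticNumber_le_iff_colorable.mp hle'
    obtain ⟨φ⟩ := hcol
    -- every vertex of Y avoids x
    have hYx : ∀ y ∈ Y, y ∈ ({x}ᶜ : Set V) := by
      intro y hy
      simp only [Set.mem_compl_iff, Set.mem_singleton_iff]
      rintro rfl
      exact hdisj.ne_of_mem hx hy rfl
    set f : Y → Fin k := fun y => φ ⟨(y : V), hYx y y.2⟩ with hf
    set S : Set (Fin k) := Set.range f with hS
    -- Y is colorable with the colors of S
    have cY : (G.induce Y).Coloring S := by
      refine Coloring.mk (fun y => ⟨f y, Set.mem_range_self y⟩) ?_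
      rintro y₁ y₂ hadj h
      have h' : f y₁ = f y₂ := congrArg Subtype.val h
      exact φ.valid (by exact hadj : G.Adj _ _) h'
    have hcardY : (G.induce Y).chromaticNumber ≤ (Fintype.card S : ℕ∞) :=
      (cY.colorable).chromaticNumber_le
    have hX : (G.induce X).Colorable (Fintype.card S) :=
      chromaticNumber_le_iff_colorable.mp (hle.trans hcardY)
    obtain ⟨ψ₀⟩ := hX
    set e : Fin (Fintype.card S) ≃ S := (Fintype.equivFin S).symm with he
    set ψ : X → Fin k := fun v => (e (ψ₀ v) : Fin k) with hψ
    have hψS : ∀ v : X, ψ v ∈ S := fun v => (e (ψ₀ v)).2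
    have hnx : ∀ v : V, v ∉ X → v ∈ ({x}ᶜ : Set V) := by
      intro v hv
      simp only [Set.mem_compl_iff, Set.mem_singleton_iff]
      rintro rfl; exact hv hx
    set c : V → Fin k := fun v => if h : v ∈ X then ψ ⟨v, h⟩ else φ ⟨v, hnx v h⟩ with hc
    -- key mixed case
    have key : ∀ u v : V, G.Adj u v → u ∈ X → v ∉ X → c u ≠ c v := by
      intro u v hadj hu hv
      have hcu : c u = ψ ⟨u, hu⟩ := by simp [hc, hu]
      have hcv : c v = φ ⟨v, hnx v hv⟩ := by simp [hc, hv]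
      obtain ⟨y, hy⟩ := hψS ⟨u, hu⟩
      have hyY : (y : V) ∈ Y := y.2
      have hadj' : G.Adj (y : V) v := hcompl y hyY v hv ⟨u, hu, hadj⟩
      have : φ ⟨(y : V), hYx y hyY⟩ ≠ φ ⟨v, hnx v hv⟩ :=
        φ.valid (by exact hadj' : G.Adj _ _)
      rw [hcu, hcv, ← hy]
      exact this
    have hcol' : G.Colorable (k) := by
      refine ⟨Coloring.mk c ?_⟩
      intro u v hadj
      by_cases hu : u ∈ X <;> by_cases hv : v ∈ X
      · have hcu : c u = ψ ⟨u, hu⟩ := by simp [hc, hu]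
        have hcv : c v = ψ ⟨v, hv⟩ := by simp [hc, hv]
        rw [hcu, hcv]
        intro h
        have h1 : e (ψ₀ ⟨u, hu⟩) = e (ψ₀ ⟨v, hv⟩) := Subtype.ext h
        have h2 : ψ₀ ⟨u, hu⟩ = ψ₀ ⟨v, hv⟩ := e.injective h1
        exact ψ₀.valid (by exact hadj : G.Adj _ _) h2
      · exact key u v hadj hu hv
      · exact (key v u hadj.symm hv hu).symm
      · have hcu : c u = φ ⟨u, hnx u hu⟩ := by simp [hc, hu]
        have hcv : c v = φ ⟨v, hnx v hv⟩ := by simp [hc, hv]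
        rw [hcu, hcv]
        exact φ.valid (by exact hadj : G.Adj _ _)
    have : G.chromaticNumber ≤ (k : ℕ∞) := hcol'.chromaticNumber_le
    rw [hχ] at this
    exact Nat.not_succ_le_self k (by exact_mod_cast this)
end

section
/- Let G be a connected graph that is P5-free, K4-free, W5-free and F-free, and let v1,...,v7 be vertices of G inducing a 7-antihole, where v_i v_{i+1} (indices modulo 7) are exactly the nonedges among them. Then every vertex x of G outside {v1,...,v7} satisfies, for some index i (modulo 7): either N(x) ∩ {v1,...,v7} = {v_{i−1}, v_i, v_{i+1}}, or N(x) ∩ {v1,...,v7} = {v1,...,v7} \ {v_{i−1}, v_i, v_{i+1}}. -/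
open SimpleGraph

/-! ### Auxiliary machinery for stmt_10 -/

namespace Stmt10

/-- Boolean adjacency of the 7-antihole (on natural-number indices `< 7`). -/
def antiB (i j : ℕ) : Bool :=
  decide (i ≠ j) && decide (j % 7 ≠ (i + 1) % 7) && decide (i % 7 ≠ (j + 1) % 7)

/-- Adjacency matrix on 8 vertices: vertices `0..6` form the antihole, vertex `7`
is an extra vertex whose neighbourhood on the antihole is given by `s`. -/
def M8 (s : Fin 7 → Bool) (a b : Fin 8) : Bool :=
  if ha : a.val < 7 then
    if hb : b.val < 7 then antiB a.val b.val else s ⟨a.val, ha⟩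
  else if hb : b.val < 7 then s ⟨b.val, hb⟩ else false

/-- Adjacency matrix on 9 vertices: antihole `0..6`, vertex `7` with pattern `s`,
vertex `8` adjacent only to vertex `7`. -/
def M9 (s : Fin 7 → Bool) (a b : Fin 9) : Bool :=
  if ha : a.val < 7 then
    if hb : b.val < 7 then antiB a.val b.val
    else if b.val = 7 then s ⟨a.val, ha⟩ else false
  else if a.val = 7 then
    if hb : b.val < 7 then s ⟨b.val, hb⟩ else decide (b.val = 8)
  else decide (b.val = 7)

def P5B (a b : Fin 5) : Bool := decide (a.val + 1 = b.val) || decide (b.val + 1 = a.val)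

def K4B (a b : Fin 4) : Bool := decide (a ≠ b)

def W5edges : List (ℕ × ℕ) :=
  [(0,1),(1,2),(2,3),(3,4),(4,0),(5,0),(5,1),(5,2),(5,3),(5,4)]

def Fedges : List (ℕ × ℕ) :=
  [(0,1),(1,2),(2,3),(3,4),(4,0),(5,0),(5,1),(5,2),(5,3)]

def W5B (a b : Fin 6) : Bool :=
  decide ((a.val, b.val) ∈ W5edges ∨ (b.val, a.val) ∈ W5edges)

def FB (a b : Fin 6) : Bool :=
  decide ((a.val, b.val) ∈ Fedges ∨ (b.val, a.val) ∈ Fedges)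

/-- Boolean check that `f` realizes an induced copy (pattern `TB`) inside `MM`. -/
def okB {N k : ℕ} (MM : Fin N → Fin N → Bool) (TB : Fin k → Fin k → Bool)
    (f : Fin k → Fin N) : Bool :=
  decide (∀ a b : Fin k, (f a = f b → a = b) ∧ MM (f a) (f b) = TB a b)

def transfer {V : Type} (G : SimpleGraph V) {N k : ℕ} (MM : Fin N → Fin N → Bool)
    (g : Fin N → V) (hg : Function.Injective g)
    (hMM : ∀ a b, G.Adj (g a) (g b) ↔ MM a b = true)
    (T : SimpleGraph (Fin k)) (TB : Fin k → Fin k → Bool)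
    (hT : ∀ a b, T.Adj a b ↔ TB a b = true)
    (f : Fin k → Fin N) (hok : okB MM TB f = true) : T ↪g G := by
  rw [okB, decide_eq_true_iff] at hok
  exact
    { toFun := g ∘ f
      inj' := fun a b h => (hok a b).1 (hg h)
      map_rel_iff' := by
        intro a b
        show G.Adj (g (f a)) (g (f b)) ↔ T.Adj a b
        rw [hMM, (hok a b).2, hT] }

def consecB (i : Fin 7) : Fin 7 → Bool := fun j => decide (j = i - 1 ∨ j = i ∨ j = i + 1)

def allowedB (s : Fin 7 → Bool) : Bool :=
  decide (∃ i : Fin 7, s = consecB i ∨ s = fun j => !consecB i j)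

def idx (s : Fin 7 → Bool) : ℕ :=
  (if s 0 then 1 else 0) + (if s 1 then 2 else 0) + (if s 2 then 4 else 0) +
  (if s 3 then 8 else 0) + (if s 4 then 16 else 0) + (if s 5 then 32 else 0) +
  (if s 6 then 64 else 0)

def tagList : List ℕ := [1, 0, 0, 3, 0, 0, 3, 1, 0, 0, 0, 0, 3, 0, 1, 1, 0, 0, 0, 0, 0, 0, 0, 0, 3, 0, 0, 2, 1, 0, 1, 1, 0, 0, 0, 0, 0, 0, 0, 0, 0, 0, 0, 1, 0, 1, 0, 1, 3, 0, 0, 2, 0, 1, 2, 1, 1, 0, 0, 1, 1, 1, 1, 1, 0, 3, 0, 1, 0, 0, 0, 1, 0, 0, 0, 0, 0, 2, 0, 1, 0, 0, 0, 0, 0, 1, 1, 1, 0, 2, 1, 1, 0, 1, 1, 1, 3, 1, 0, 1, 0, 0, 2, 1, 0, 0, 1, 1, 2, 1, 1, 1, 1, 1, 0, 1, 0, 1, 1, 1, 1, 1, 1, 1, 1, 1, 1, 1]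

def wmList : List (List Nat) := [[0, 0, 0, 0, 0, 0],
  [1, 6, 2, 0, 7, 0],
  [0, 2, 6, 1, 7, 0],
  [0, 2, 6, 1, 7, 4],
  [1, 3, 0, 2, 7, 0],
  [3, 1, 4, 2, 7, 0],
  [1, 3, 0, 2, 7, 5],
  [0, 0, 0, 0, 0, 0],
  [2, 4, 1, 3, 7, 0],
  [1, 6, 2, 0, 7, 0],
  [0, 2, 6, 1, 7, 0],
  [4, 2, 5, 3, 7, 0],
  [2, 4, 1, 3, 7, 6],
  [6, 1, 5, 0, 7, 0],
  [0, 0, 0, 0, 0, 0],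
  [0, 0, 0, 0, 0, 0],
  [3, 5, 2, 4, 7, 0],
  [1, 6, 2, 0, 7, 0],
  [0, 2, 6, 1, 7, 0],
  [3, 5, 2, 4, 7, 0],
  [1, 3, 0, 2, 7, 0],
  [5, 3, 6, 4, 7, 0],
  [5, 3, 6, 4, 7, 0],
  [5, 3, 6, 4, 7, 0],
  [3, 5, 2, 4, 7, 0],
  [1, 6, 2, 0, 7, 0],
  [0, 2, 6, 1, 7, 0],
  [0, 2, 6, 1, 7, 4],
  [0, 0, 0, 0, 0, 0],
  [6, 1, 5, 0, 7, 0],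
  [0, 0, 0, 0, 0, 0],
  [0, 2, 4, 7, 0, 0],
  [4, 6, 3, 5, 7, 0],
  [1, 6, 2, 0, 7, 0],
  [0, 2, 6, 1, 7, 0],
  [4, 6, 3, 5, 7, 0],
  [1, 3, 0, 2, 7, 0],
  [3, 1, 4, 2, 7, 0],
  [4, 6, 3, 5, 7, 0],
  [4, 6, 3, 5, 7, 0],
  [2, 4, 1, 3, 7, 0],
  [1, 6, 2, 0, 7, 0],
  [0, 2, 6, 1, 7, 0],
  [0, 3, 5, 7, 0, 0],
  [6, 4, 0, 5, 7, 0],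
  [0, 2, 5, 7, 0, 0],
  [6, 4, 0, 5, 7, 0],
  [0, 2, 5, 7, 0, 0],
  [4, 6, 3, 5, 7, 1],
  [1, 6, 2, 0, 7, 0],
  [0, 2, 6, 1, 7, 0],
  [0, 2, 6, 1, 7, 4],
  [1, 3, 0, 2, 7, 0],
  [0, 2, 4, 7, 0, 0],
  [0, 2, 7, 1, 3, 5],
  [0, 2, 4, 7, 0, 0],
  [0, 0, 0, 0, 0, 0],
  [1, 6, 2, 0, 7, 0],
  [0, 2, 6, 1, 7, 0],
  [0, 3, 5, 7, 0, 0],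
  [0, 0, 0, 0, 0, 0],
  [0, 2, 4, 7, 0, 0],
  [1, 3, 5, 7, 0, 0],
  [0, 2, 4, 7, 0, 0],
  [0, 5, 1, 6, 7, 0],
  [0, 5, 1, 6, 7, 3],
  [2, 0, 3, 1, 7, 0],
  [0, 0, 0, 0, 0, 0],
  [0, 5, 1, 6, 7, 0],
  [3, 1, 4, 2, 7, 0],
  [5, 0, 4, 6, 7, 0],
  [0, 0, 0, 0, 0, 0],
  [0, 5, 1, 6, 7, 0],
  [2, 4, 1, 3, 7, 0],
  [4, 2, 5, 3, 7, 0],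
  [4, 2, 5, 3, 7, 0],
  [0, 5, 1, 6, 7, 0],
  [0, 5, 1, 6, 7, 3],
  [5, 0, 4, 6, 7, 0],
  [1, 3, 6, 7, 0, 0],
  [0, 5, 1, 6, 7, 0],
  [3, 5, 2, 4, 7, 0],
  [2, 0, 3, 1, 7, 0],
  [3, 5, 2, 4, 7, 0],
  [0, 5, 1, 6, 7, 0],
  [0, 2, 4, 7, 0, 0],
  [1, 4, 6, 7, 0, 0],
  [0, 2, 4, 7, 0, 0],
  [0, 5, 1, 6, 7, 0],
  [0, 5, 1, 6, 7, 3],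
  [1, 3, 6, 7, 0, 0],
  [1, 3, 6, 7, 0, 0],
  [0, 5, 1, 6, 7, 0],
  [0, 2, 4, 7, 0, 0],
  [1, 3, 6, 7, 0, 0],
  [0, 2, 4, 7, 0, 0],
  [5, 0, 4, 6, 7, 2],
  [0, 0, 0, 0, 0, 0],
  [2, 0, 3, 1, 7, 0],
  [0, 0, 0, 0, 0, 0],
  [1, 3, 0, 2, 7, 0],
  [3, 1, 4, 2, 7, 0],
  [0, 2, 7, 1, 3, 5],
  [0, 2, 5, 7, 0, 0],
  [2, 4, 1, 3, 7, 0],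
  [2, 4, 1, 3, 7, 0],
  [1, 3, 5, 7, 0, 0],
  [0, 3, 5, 7, 0, 0],
  [0, 4, 6, 7, 5, 2],
  [0, 2, 5, 7, 0, 0],
  [1, 3, 5, 7, 0, 0],
  [0, 2, 5, 7, 0, 0],
  [0, 0, 0, 0, 0, 0],
  [0, 0, 0, 0, 0, 0],
  [2, 0, 3, 1, 7, 0],
  [1, 4, 6, 7, 0, 0],
  [1, 3, 0, 2, 7, 0],
  [0, 2, 4, 7, 0, 0],
  [1, 4, 6, 7, 0, 0],
  [0, 2, 4, 7, 0, 0],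
  [0, 0, 0, 0, 0, 0],
  [0, 3, 5, 7, 0, 0],
  [1, 3, 5, 7, 0, 0],
  [0, 3, 5, 7, 0, 0],
  [2, 4, 6, 7, 0, 0],
  [0, 2, 4, 7, 0, 0],
  [1, 3, 5, 7, 0, 0],
  [0, 2, 4, 7, 0, 0]]

def w9List : List (List Nat) := [[0, 0, 0, 0, 0, 0],
  [0, 0, 0, 0, 0, 0],
  [0, 0, 0, 0, 0, 0],
  [0, 0, 0, 0, 0, 0],
  [0, 0, 0, 0, 0, 0],
  [0, 0, 0, 0, 0, 0],
  [0, 0, 0, 0, 0, 0],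
  [3, 5, 2, 7, 8, 0],
  [0, 0, 0, 0, 0, 0],
  [0, 0, 0, 0, 0, 0],
  [0, 0, 0, 0, 0, 0],
  [0, 0, 0, 0, 0, 0],
  [0, 0, 0, 0, 0, 0],
  [0, 0, 0, 0, 0, 0],
  [0, 4, 1, 7, 8, 0],
  [4, 6, 3, 7, 8, 0],
  [0, 0, 0, 0, 0, 0],
  [0, 0, 0, 0, 0, 0],
  [0, 0, 0, 0, 0, 0],
  [0, 0, 0, 0, 0, 0],
  [0, 0, 0, 0, 0, 0],
  [0, 0, 0, 0, 0, 0],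
  [0, 0, 0, 0, 0, 0],
  [0, 0, 0, 0, 0, 0],
  [0, 0, 0, 0, 0, 0],
  [0, 0, 0, 0, 0, 0],
  [0, 0, 0, 0, 0, 0],
  [0, 0, 0, 0, 0, 0],
  [1, 5, 2, 7, 8, 0],
  [0, 0, 0, 0, 0, 0],
  [0, 5, 1, 7, 8, 0],
  [0, 0, 0, 0, 0, 0],
  [0, 0, 0, 0, 0, 0],
  [0, 0, 0, 0, 0, 0],
  [0, 0, 0, 0, 0, 0],
  [0, 0, 0, 0, 0, 0],
  [0, 0, 0, 0, 0, 0],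
  [0, 0, 0, 0, 0, 0],
  [0, 0, 0, 0, 0, 0],
  [0, 0, 0, 0, 0, 0],
  [0, 0, 0, 0, 0, 0],
  [0, 0, 0, 0, 0, 0],
  [0, 0, 0, 0, 0, 0],
  [0, 0, 0, 0, 0, 0],
  [0, 0, 0, 0, 0, 0],
  [0, 0, 0, 0, 0, 0],
  [0, 0, 0, 0, 0, 0],
  [0, 0, 0, 0, 0, 0],
  [0, 0, 0, 0, 0, 0],
  [0, 0, 0, 0, 0, 0],
  [0, 0, 0, 0, 0, 0],
  [0, 0, 0, 0, 0, 0],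
  [0, 0, 0, 0, 0, 0],
  [0, 0, 0, 0, 0, 0],
  [0, 0, 0, 0, 0, 0],
  [0, 0, 0, 0, 0, 0],
  [2, 0, 3, 7, 8, 0],
  [0, 0, 0, 0, 0, 0],
  [0, 0, 0, 0, 0, 0],
  [0, 0, 0, 0, 0, 0],
  [1, 6, 2, 7, 8, 0],
  [0, 0, 0, 0, 0, 0],
  [0, 0, 0, 0, 0, 0],
  [0, 0, 0, 0, 0, 0],
  [0, 0, 0, 0, 0, 0],
  [0, 0, 0, 0, 0, 0],
  [0, 0, 0, 0, 0, 0],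
  [2, 4, 1, 7, 8, 0],
  [0, 0, 0, 0, 0, 0],
  [0, 0, 0, 0, 0, 0],
  [0, 0, 0, 0, 0, 0],
  [3, 5, 2, 7, 8, 0],
  [0, 0, 0, 0, 0, 0],
  [0, 0, 0, 0, 0, 0],
  [0, 0, 0, 0, 0, 0],
  [0, 0, 0, 0, 0, 0],
  [0, 0, 0, 0, 0, 0],
  [0, 0, 0, 0, 0, 0],
  [0, 0, 0, 0, 0, 0],
  [0, 0, 0, 0, 0, 0],
  [0, 0, 0, 0, 0, 0],
  [0, 0, 0, 0, 0, 0],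
  [0, 0, 0, 0, 0, 0],
  [0, 0, 0, 0, 0, 0],
  [0, 0, 0, 0, 0, 0],
  [0, 0, 0, 0, 0, 0],
  [0, 0, 0, 0, 0, 0],
  [0, 0, 0, 0, 0, 0],
  [0, 0, 0, 0, 0, 0],
  [0, 0, 0, 0, 0, 0],
  [0, 0, 0, 0, 0, 0],
  [0, 0, 0, 0, 0, 0],
  [0, 0, 0, 0, 0, 0],
  [0, 0, 0, 0, 0, 0],
  [0, 0, 0, 0, 0, 0],
  [0, 0, 0, 0, 0, 0],
  [0, 0, 0, 0, 0, 0],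
  [1, 3, 0, 7, 8, 0],
  [0, 0, 0, 0, 0, 0],
  [2, 4, 1, 7, 8, 0],
  [0, 0, 0, 0, 0, 0],
  [0, 0, 0, 0, 0, 0],
  [0, 0, 0, 0, 0, 0],
  [0, 0, 0, 0, 0, 0],
  [0, 0, 0, 0, 0, 0],
  [0, 0, 0, 0, 0, 0],
  [0, 0, 0, 0, 0, 0],
  [0, 0, 0, 0, 0, 0],
  [0, 0, 0, 0, 0, 0],
  [0, 0, 0, 0, 0, 0],
  [0, 0, 0, 0, 0, 0],
  [0, 0, 0, 0, 0, 0],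
  [0, 2, 6, 7, 8, 0],
  [1, 3, 0, 7, 8, 0],
  [0, 0, 0, 0, 0, 0],
  [0, 0, 0, 0, 0, 0],
  [0, 0, 0, 0, 0, 0],
  [0, 0, 0, 0, 0, 0],
  [0, 0, 0, 0, 0, 0],
  [0, 0, 0, 0, 0, 0],
  [0, 2, 6, 7, 8, 0],
  [0, 0, 0, 0, 0, 0],
  [0, 0, 0, 0, 0, 0],
  [0, 0, 0, 0, 0, 0],
  [0, 0, 0, 0, 0, 0],
  [0, 0, 0, 0, 0, 0],
  [0, 0, 0, 0, 0, 0],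
  [0, 0, 0, 0, 0, 0]]


def wmap8 (s : Fin 7 → Bool) : Fin 6 → Fin 8 := fun a =>
  ⟨((wmList.getD (idx s) []).getD a.val 0) % 8, Nat.mod_lt _ (by norm_num)⟩

def wmap9 (s : Fin 7 → Bool) : Fin 5 → Fin 9 := fun a =>
  ⟨((w9List.getD (idx s) []).getD a.val 0) % 9, Nat.mod_lt _ (by norm_num)⟩

def check8 (s : Fin 7 → Bool) : Bool :=
  match tagList.getD (idx s) 0 with
  | 0 => okB (M8 s) P5B (fun a => wmap8 s (Fin.castLE (by norm_num) a))
  | 1 => okB (M8 s) K4B (fun a => wmap8 s (Fin.castLE (by norm_num) a))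
  | 2 => okB (M8 s) W5B (wmap8 s)
  | _ => okB (M8 s) FB (wmap8 s)

set_option maxRecDepth 40000 in
theorem key8 : ∀ s : Fin 7 → Bool,
    s = (fun _ => false) ∨ allowedB s = true ∨ check8 s = true := by decide

set_option maxRecDepth 40000 in
theorem key9 : ∀ s : Fin 7 → Bool, allowedB s = true → s ≠ (fun _ => false) →
    okB (M9 s) P5B (wmap9 s) = true := by decide

end Stmt10

open Stmt10 in
theorem hP5B : ∀ a b : Fin 5, (pathGraph 5).Adj a b ↔ P5B a b = true := by
  intro a b
  rw [SimpleGraph.pathGraph_adj]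
  simp [P5B]

open Stmt10 in
theorem hK4B : ∀ a b : Fin 4, (completeGraph (Fin 4)).Adj a b ↔ K4B a b = true := by
  intro a b
  simp [completeGraph, K4B]

open Stmt10 in
theorem hW5B : ∀ a b : Fin 6, W5.Adj a b ↔ W5B a b = true := by
  intro a b
  fin_cases a <;> fin_cases b <;>
    simp only [W5, SimpleGraph.fromEdgeSet_adj, Set.mem_insert_iff,
      Set.mem_singleton_iff, Sym2.eq, Sym2.rel_iff', Prod.mk.injEq, Prod.swap_prod_mk,
      ne_eq] <;> decide

open Stmt10 in
theorem hFB : ∀ a b : Fin 6, Fgraph.Adj a b ↔ FB a b = true := by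
  intro a b
  fin_cases a <;> fin_cases b <;>
    simp only [Fgraph, SimpleGraph.fromEdgeSet_adj, Set.mem_insert_iff,
      Set.mem_singleton_iff, Sym2.eq, Sym2.rel_iff', Prod.mk.injEq, Prod.swap_prod_mk,
      ne_eq] <;> decide

/-- In a connected `(P5, K4, W5, F)`-free graph, every vertex outside a 7-antihole
`v₁,…,v₇` has neighborhood on the antihole equal to `{v_{i-1}, v_i, v_{i+1}}` or to its
complement in the antihole, for some `i`. -/
theorem stmt_10 {V : Type} [Fintype V] (G : SimpleGraph V)
    (hconn : G.Connected)
    (hP5 : SGFree G (pathGraph 5))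
    (hK4 : SGFree G (completeGraph (Fin 4)))
    (hW5 : SGFree G W5)
    (hF : SGFree G Fgraph)
    (v : Fin 7 → V) (hv : Function.Injective v)
    (hadj : ∀ i j : Fin 7, G.Adj (v i) (v j) ↔ (i ≠ j ∧ j ≠ i + 1 ∧ i ≠ j + 1))
    (x : V) (hx : x ∉ Set.range v) :
    ∃ i : Fin 7,
      (∀ j : Fin 7, G.Adj x (v j) ↔ (j = i - 1 ∨ j = i ∨ j = i + 1)) ∨
      (∀ j : Fin 7, G.Adj x (v j) ↔ ¬ (j = i - 1 ∨ j = i ∨ j = i + 1)) := by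
  classical
  open Stmt10 in
  -- the neighbourhood pattern of a vertex
  let S : V → Fin 7 → Bool := fun y j => decide (G.Adj y (v j))
  have hSdef : ∀ y j, S y j = true ↔ G.Adj y (v j) := by
    intro y j; simp [S]
  have hAnti : ∀ i j : Fin 7, G.Adj (v i) (v j) ↔ antiB i.val j.val = true := by
    intro i j
    rw [hadj]
    revert i j
    decide
  -- the 8-vertex embedding data for any vertex outside the antihole
  have hg8 : ∀ y, y ∉ Set.range v →
      ∃ g : Fin 8 → V, Function.Injective g ∧
        ∀ a b, G.Adj (g a) (g b) ↔ M8 (S y) a b = true := by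
    intro y hy
    refine ⟨fun a => if h : a.val < 7 then v ⟨a.val, h⟩ else y, ?_, ?_⟩
    · intro a b hab
      by_cases ha : a.val < 7 <;> by_cases hb : b.val < 7 <;>
        simp only [ha, hb, dif_pos, dif_neg, not_false_iff] at hab
      · have h' := hv hab
        injection h' with h''
        exact Fin.ext h''
      · exact absurd ⟨_, hab⟩ hy
      · exact absurd ⟨_, hab.symm⟩ hy
      · exact Fin.ext (by omega)
    · intro a b
      by_cases ha : a.val < 7 <;> by_cases hb : b.val < 7 <;>
        simp only [M8, ha, hb, dif_pos, dif_neg, not_false_iff]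
      · exact hAnti _ _
      · rw [G.adj_comm]; exact (hSdef y _).symm
      · exact (hSdef y _).symm
      · exact iff_of_false (fun h => G.loopless.irrefl y h) (by simp)
  -- classification of neighbourhood patterns
  have classify : ∀ y, y ∉ Set.range v →
      (∀ j, ¬ G.Adj y (v j)) ∨ allowedB (S y) = true := by
    intro y hy
    rcases key8 (S y) with h0 | hA | hC
    · left
      intro j hj
      have := congrFun h0 j
      rw [(hSdef y j).mpr hj] at this
      exact Bool.noConfusion this
    · right; exact hA
    · exfalso
      obtain ⟨g, hginj, hgiff⟩ := hg8 y hy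
      rcases e : tagList.getD (idx (S y)) 0 with _ | _ | _ | n
      · rw [check8, e] at hC
        exact hP5.false (transfer G (M8 (S y)) g hginj hgiff _ P5B hP5B _ hC)
      · rw [check8, e] at hC
        exact hK4.false (transfer G (M8 (S y)) g hginj hgiff _ K4B hK4B _ hC)
      · rw [check8, e] at hC
        exact hW5.false (transfer G (M8 (S y)) g hginj hgiff _ W5B hW5B _ hC)
      · rw [check8, e] at hC
        exact hF.false (transfer G (M8 (S y)) g hginj hgiff _ FB hFB _ hC)
  -- the cut argument: every vertex outside the antihole has a neighbour on it
  set B : Set V := {u | u ∈ Set.range v ∨ ∃ j, G.Adj u (v j)} with hB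
  have hcut : ∀ {a b : V}, G.Walk a b → b ∈ B → a ∉ B →
      ∃ z y, G.Adj z y ∧ z ∉ B ∧ y ∈ B := by
    intro a b w
    induction w with
    | nil => intro hb ha; exact absurd hb ha
    | @cons u c d h p ih =>
      intro hd ha
      by_cases hc : c ∈ B
      · exact ⟨u, c, h, ha, hc⟩
      · exact ih hd hc
  have hxB : x ∈ B := by
    by_contra hxB
    obtain ⟨w⟩ := hconn.preconnected x (v 0)
    obtain ⟨z, y, hzy, hzB, hyB⟩ := hcut w (Or.inl ⟨0, rfl⟩) hxB
    have hz1 : z ∉ Set.range v := fun h => hzB (Or.inl h)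
    have hz2 : ∀ j, ¬ G.Adj z (v j) := fun j hj => hzB (Or.inr ⟨j, hj⟩)
    have hy1 : y ∉ Set.range v := by
      rintro ⟨m, rfl⟩
      exact hz2 m hzy
    have hy2 : ∃ j, G.Adj y (v j) := hyB.resolve_left hy1
    have hA : allowedB (S y) = true := by
      rcases classify y hy1 with h | h
      · obtain ⟨j, hj⟩ := hy2
        exact absurd hj (h j)
      · exact h
    have hne : S y ≠ (fun _ => false) := by
      obtain ⟨j, hj⟩ := hy2
      intro h
      have := congrFun h j
      rw [(hSdef y j).mpr hj] at this
      exact Bool.noConfusion this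
    have hok := key9 (S y) hA hne
    -- build the 9-vertex embedding data
    have hzy' : z ≠ y := G.ne_of_adj hzy
    refine hP5.false (transfer G (M9 (S y))
      (fun a => if h : a.val < 7 then v ⟨a.val, h⟩ else if a.val = 7 then y else z)
      ?_ ?_ _ P5B hP5B _ hok)
    · intro a b hab
      by_cases ha : a.val < 7 <;> by_cases hb : b.val < 7 <;>
        simp only [ha, hb, dif_pos, dif_neg, not_false_iff] at hab
      · have h' := hv hab
        injection h' with h''
        exact Fin.ext h''
      · split at hab
        · exact absurd ⟨_, hab⟩ hy1
        · exact absurd ⟨_, hab⟩ hz1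
      · split at hab
        · exact absurd ⟨_, hab.symm⟩ hy1
        · exact absurd ⟨_, hab.symm⟩ hz1
      · by_cases h7a : a.val = 7 <;> by_cases h7b : b.val = 7 <;>
          simp only [h7a, h7b, if_pos, if_neg, not_false_iff] at hab ⊢
        · exact Fin.ext (by omega)
        · exact absurd hab hzy'.symm
        · exact absurd hab hzy'
        · exact Fin.ext (by omega)
    · intro a b
      by_cases ha : a.val < 7 <;> by_cases hb : b.val < 7 <;>
        simp only [M9, ha, hb, dif_pos, dif_neg, not_false_iff]
      · exact hAnti _ _
      · by_cases h7b : b.val = 7 <;> simp only [h7b, if_pos, if_neg, not_false_iff]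
        · rw [G.adj_comm]; exact (hSdef y _).symm
        · simp only [Bool.false_eq_true, iff_false]
          rw [G.adj_comm]; exact hz2 _
      · by_cases h7a : a.val = 7 <;> simp only [h7a, if_pos, if_neg, not_false_iff]
        · exact (hSdef y _).symm
        · simp only [decide_eq_true_iff]
          constructor
          · intro h; exact absurd h (hz2 _)
          · omega
      · by_cases h7a : a.val = 7 <;> by_cases h7b : b.val = 7 <;>
          simp only [h7a, h7b, if_pos, if_neg, not_false_iff, decide_eq_true_iff]
        · exact iff_of_false (fun h => G.loopless.irrefl y (by simpa [h7a, h7b] using h)) (by omega)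
        · constructor
          · intro _; omega
          · intro _; exact hzy.symm
        · constructor
          · intro _; trivial
          · intro _; exact hzy
        · exact iff_of_false (fun h => G.loopless.irrefl z (by simpa [h7a, h7b] using h))
            (by simp [h7b])
  -- conclude
  have hx2 : ∃ j, G.Adj x (v j) := hxB.resolve_left hx
  have hA : allowedB (S x) = true := by
    rcases classify x hx with h | h
    · obtain ⟨j, hj⟩ := hx2
      exact absurd hj (h j)
    · exact h
  rw [allowedB, decide_eq_true_iff] at hA
  obtain ⟨i, hc | hc⟩ := hA
  · refine ⟨i, Or.inl fun j => ?_⟩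
    rw [← hSdef x j, congrFun hc j, consecB, decide_eq_true_iff]
  · refine ⟨i, Or.inr fun j => ?_⟩
    rw [← hSdef x j, congrFun hc j, consecB]
    simp
end

section
/- Let G be a graph that is P5-free, K4-free, W5-free and F-free, and let v1,...,v7 induce a 7-antihole in G, with v_i v_{i+1} (indices modulo 7) the nonedges among them. For each i let T_i be the set of vertices outside {v1,...,v7} whose neighborhood on the antihole is exactly {v_{i−1}, v_i, v_{i+1}}. Then for each i (indices modulo 7), T_i is anticomplete to T_{i+1} (no edges between them) and T_i is complete to T_{i+3} (all edges present between them). -/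
open SimpleGraph

lemma embed_p5 {V : Type} (G : SimpleGraph V) (x0 x1 x2 x3 x4 : V)
    (h01 : G.Adj x0 x1) (h12 : G.Adj x1 x2) (h23 : G.Adj x2 x3) (h34 : G.Adj x3 x4)
    (h02 : ¬G.Adj x0 x2) (h03 : ¬G.Adj x0 x3) (h04 : ¬G.Adj x0 x4)
    (h13 : ¬G.Adj x1 x3) (h14 : ¬G.Adj x1 x4) (h24 : ¬G.Adj x2 x4) :
    Nonempty (pathGraph 5 ↪g G) := by
  have h10 := h01.symm; have h21 := h12.symm; have h32 := h23.symm; have h43 := h34.symm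
  have h20 : ¬G.Adj x2 x0 := fun h => h02 h.symm
  have h30 : ¬G.Adj x3 x0 := fun h => h03 h.symm
  have h40 : ¬G.Adj x4 x0 := fun h => h04 h.symm
  have h31 : ¬G.Adj x3 x1 := fun h => h13 h.symm
  have h41 : ¬G.Adj x4 x1 := fun h => h14 h.symm
  have h42 : ¬G.Adj x4 x2 := fun h => h24 h.symm
  have d01 : x0 ≠ x1 := G.ne_of_adj h01
  have d12 : x1 ≠ x2 := G.ne_of_adj h12
  have d23 : x2 ≠ x3 := G.ne_of_adj h23
  have d34 : x3 ≠ x4 := G.ne_of_adj h34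
  have d02 : x0 ≠ x2 := fun h => h03 (by rw [h]; exact h23)
  have d03 : x0 ≠ x3 := fun h => h02 (by rw [h]; exact h32)
  have d04 : x0 ≠ x4 := fun h => h03 (by rw [h]; exact h43)
  have d13 : x1 ≠ x3 := fun h => h03 (by rw [← h]; exact h01)
  have d14 : x1 ≠ x4 := fun h => h13 (by rw [h]; exact h43)
  have d24 : x2 ≠ x4 := fun h => h14 (by rw [← h]; exact h12)
  let f : Fin 5 → V := ![x0, x1, x2, x3, x4]
  have hinj : Function.Injective f := by
    intro p q h
    fin_cases p <;> fin_cases q <;> simp_all [f]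
  exact ⟨⟨⟨f, hinj⟩, by
    intro a b
    fin_cases a <;> fin_cases b <;>
      simp_all [f, pathGraph_adj] <;> decide ⟩⟩

/-- With `T i` the set of vertices outside a 7-antihole whose neighborhood on it is
exactly `{v_{i-1}, v_i, v_{i+1}}`: `T i` is anticomplete to `T (i+1)` and complete to
`T (i+3)`. -/
theorem stmt_11 {V : Type} [Fintype V] (G : SimpleGraph V)
    (hP5 : SGFree G (pathGraph 5))
    (hK4 : SGFree G (completeGraph (Fin 4)))
    (hW5 : SGFree G W5)
    (hF : SGFree G Fgraph)
    (v : Fin 7 → V) (hv : Function.Injective v)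
    (hadj : ∀ i j : Fin 7, G.Adj (v i) (v j) ↔ (i ≠ j ∧ j ≠ i + 1 ∧ i ≠ j + 1))
    (T : Fin 7 → Set V)
    (hT : ∀ (i : Fin 7) (x : V), x ∈ T i ↔
      x ∉ Set.range v ∧ ∀ j : Fin 7, G.Adj x (v j) ↔ (j = i - 1 ∨ j = i ∨ j = i + 1)) :
    ∀ i : Fin 7,
      (∀ x ∈ T i, ∀ y ∈ T (i + 1), ¬ G.Adj x y) ∧
      (∀ x ∈ T i, ∀ y ∈ T (i + 3), G.Adj x y) := by
  intro i
  have hvadj : ∀ a b : Fin 7,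
      (∀ k : Fin 7, k + a ≠ k + b ∧ k + b ≠ k + a + 1 ∧ k + a ≠ k + b + 1) →
      G.Adj (v (i + a)) (v (i + b)) := fun a b h => (hadj _ _).mpr (h i)
  have hvnon : ∀ a b : Fin 7,
      (∀ k : Fin 7, ¬(k + a ≠ k + b ∧ k + b ≠ k + a + 1 ∧ k + a ≠ k + b + 1)) →
      ¬ G.Adj (v (i + a)) (v (i + b)) := fun a b h hc => h i ((hadj _ _).mp hc)
  constructor
  · rintro x hx y hy hxy
    obtain ⟨hxr, hxadj⟩ := (hT i x).mp hx
    obtain ⟨hyr, hyadj⟩ := (hT (i+1) y).mp hy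
    have h12 : G.Adj y (v (i+2)) :=
      (hyadj (i+2)).mpr (Or.inr (Or.inr ((by decide : ∀ k : Fin 7, k+2 = k+1+1) i)))
    have h23 : G.Adj (v (i+2)) (v (i+5)) := hvadj 2 5 (by decide)
    have h34 : G.Adj (v (i+5)) (v (i+3)) := hvadj 5 3 (by decide)
    have h02 : ¬ G.Adj x (v (i+2)) := fun h =>
      (by decide : ∀ k : Fin 7, ¬(k+2 = k-1 ∨ k+2 = k ∨ k+2 = k+1)) i ((hxadj (i+2)).mp h)
    have h03 : ¬ G.Adj x (v (i+5)) := fun h =>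
      (by decide : ∀ k : Fin 7, ¬(k+5 = k-1 ∨ k+5 = k ∨ k+5 = k+1)) i ((hxadj (i+5)).mp h)
    have h04 : ¬ G.Adj x (v (i+3)) := fun h =>
      (by decide : ∀ k : Fin 7, ¬(k+3 = k-1 ∨ k+3 = k ∨ k+3 = k+1)) i ((hxadj (i+3)).mp h)
    have h13 : ¬ G.Adj y (v (i+5)) := fun h =>
      (by decide : ∀ k : Fin 7, ¬(k+5 = k+1-1 ∨ k+5 = k+1 ∨ k+5 = k+1+1)) i ((hyadj (i+5)).mp h)
    have h14 : ¬ G.Adj y (v (i+3)) := fun h =>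
      (by decide : ∀ k : Fin 7, ¬(k+3 = k+1-1 ∨ k+3 = k+1 ∨ k+3 = k+1+1)) i ((hyadj (i+3)).mp h)
    have h24 : ¬ G.Adj (v (i+2)) (v (i+3)) := hvnon 2 3 (by decide)
    exact (hP5 : IsEmpty _).false
      (embed_p5 G x y (v (i+2)) (v (i+5)) (v (i+3)) hxy h12 h23 h34 h02 h03 h04 h13 h14 h24).some
  · rintro x hx y hy
    obtain ⟨hxr, hxadj⟩ := (hT i x).mp hx
    obtain ⟨hyr, hyadj⟩ := (hT (i+3) y).mp hy
    by_contra hxy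
    have h01 : G.Adj x (v (i+1)) := (hxadj (i+1)).mpr (Or.inr (Or.inr rfl))
    have h12 : G.Adj (v (i+1)) (v (i+5)) := hvadj 1 5 (by decide)
    have h23 : G.Adj (v (i+5)) (v (i+2)) := hvadj 5 2 (by decide)
    have h34 : G.Adj (v (i+2)) y :=
      ((hyadj (i+2)).mpr (Or.inl ((by decide : ∀ k : Fin 7, k+2 = k+3-1) i))).symm
    have h02 : ¬ G.Adj x (v (i+5)) := fun h =>
      (by decide : ∀ k : Fin 7, ¬(k+5 = k-1 ∨ k+5 = k ∨ k+5 = k+1)) i ((hxadj (i+5)).mp h)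
    have h03 : ¬ G.Adj x (v (i+2)) := fun h =>
      (by decide : ∀ k : Fin 7, ¬(k+2 = k-1 ∨ k+2 = k ∨ k+2 = k+1)) i ((hxadj (i+2)).mp h)
    have h13 : ¬ G.Adj (v (i+1)) (v (i+2)) := hvnon 1 2 (by decide)
    have h14 : ¬ G.Adj (v (i+1)) y := fun h =>
      (by decide : ∀ k : Fin 7, ¬(k+1 = k+3-1 ∨ k+1 = k+3 ∨ k+1 = k+3+1)) i ((hyadj (i+1)).mp h.symm)
    have h24 : ¬ G.Adj (v (i+5)) y := fun h =>
      (by decide : ∀ k : Fin 7, ¬(k+5 = k+3-1 ∨ k+5 = k+3 ∨ k+5 = k+3+1)) i ((hyadj (i+5)).mp h.symm)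
    exact (hP5 : IsEmpty _).false
      (embed_p5 G x (v (i+1)) (v (i+5)) (v (i+2)) y h01 h12 h23 h34 h02 h03 hxy h13 h14 h24).some
end

section
/- Let G be a graph that is P5-free, K4-free, W5-free and F-free, and let v1,...,v7 induce a 7-antihole in G, with v_i v_{i+1} (indices modulo 7) the nonedges among them. For each i let T_i be the set of vertices outside the antihole whose neighborhood on {v1,...,v7} is exactly {v_{i−1}, v_i, v_{i+1}}, and let F_i be the set of vertices outside the antihole whose neighborhood on {v1,...,v7} is exactly {v1,...,v7} \ {v_{i−1}, v_i, v_{i+1}}. Then for each i (indices modulo 7), F_i is complete to T_{i−1} ∪ T_i ∪ T_{i+1}, and F_i is anticomplete to T_{i+3}. -/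
open SimpleGraph

set_option synthInstance.maxSize 10000
set_option synthInstance.maxHeartbeats 1000000
set_option maxHeartbeats 1000000
set_option maxRecDepth 10000

/-- With `T i` and `Fs i` the sets of vertices outside a 7-antihole whose neighborhood
on it is exactly `{v_{i-1}, v_i, v_{i+1}}`, resp. its complement in the antihole:
`Fs i` is complete to `T (i-1) ∪ T i ∪ T (i+1)` and anticomplete to `T (i+3)`. -/
theorem stmt_12 {V : Type} [Fintype V] (G : SimpleGraph V)
    (hP5 : SGFree G (pathGraph 5))
    (hK4 : SGFree G (completeGraph (Fin 4)))
    (hW5 : SGFree G W5)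
    (hF : SGFree G Fgraph)
    (v : Fin 7 → V) (hv : Function.Injective v)
    (hadj : ∀ i j : Fin 7, G.Adj (v i) (v j) ↔ (i ≠ j ∧ j ≠ i + 1 ∧ i ≠ j + 1))
    (T : Fin 7 → Set V)
    (hT : ∀ (i : Fin 7) (x : V), x ∈ T i ↔
      x ∉ Set.range v ∧ ∀ j : Fin 7, G.Adj x (v j) ↔ (j = i - 1 ∨ j = i ∨ j = i + 1))
    (Fs : Fin 7 → Set V)
    (hFs : ∀ (i : Fin 7) (x : V), x ∈ Fs i ↔
      x ∉ Set.range v ∧ ∀ j : Fin 7, G.Adj x (v j) ↔ ¬ (j = i - 1 ∨ j = i ∨ j = i + 1)) :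
    ∀ i : Fin 7,
      (∀ x ∈ Fs i, ∀ y ∈ T (i - 1) ∪ T i ∪ T (i + 1), G.Adj x y) ∧
      (∀ x ∈ Fs i, ∀ y ∈ T (i + 3), ¬ G.Adj x y) := by
  
  intro i
  have hvv : ∀ c d : Fin 7, G.Adj (v (i + c)) (v (i + d)) ↔ ¬(c = d ∨ d = c + 1 ∨ c = d + 1) := by
    intro c d
    rw [hadj]
    simp only [ne_eq, add_assoc, add_right_inj]
    tauto
  have hvv' : ∀ c d : Fin 7, v (i + c) = v (i + d) ↔ c = d :=
    fun c d => ⟨fun h => add_left_cancel (hv h), fun h => by rw [h]⟩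
  have hsub : i - 1 = i + 6 := by rw [sub_eq_add_neg]; congr 1
  have hTa : ∀ (t : Fin 7) (y : V), y ∈ T (i + t) →
      ∀ c : Fin 7, G.Adj y (v (i + c)) ↔ (c = t - 1 ∨ c = t ∨ c = t + 1) := by
    intro t y hy c
    rw [((hT (i + t) y).1 hy).2 (i + c)]
    simp only [add_sub_assoc, add_assoc, add_right_inj]
  have hFa : ∀ x : V, x ∈ Fs i → ∀ c : Fin 7, G.Adj x (v (i + c)) ↔ ¬(c = 6 ∨ c = 0 ∨ c = 1) := by
    intro x hx c
    rw [((hFs i x).1 hx).2 (i + c), hsub]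
    simp only [add_right_inj, add_eq_left]
  constructor
  · intro x hx y hy
    have Ex := hFa x hx
    have Ex' : ∀ c : Fin 7, G.Adj (v (i + c)) x ↔ ¬(c = 6 ∨ c = 0 ∨ c = 1) :=
      fun c => (G.adj_comm _ _).trans (Ex c)
    have hxv : ∀ c : Fin 7, x ≠ v (i + c) := fun c h => ((hFs i x).1 hx).1 ⟨i + c, h.symm⟩
    have hvx : ∀ c : Fin 7, v (i + c) ≠ x := fun c h => hxv c h.symm
    by_contra hxy
    have hyx : ¬ G.Adj y x := fun h => hxy h.symm
    have hxyI : G.Adj x y ↔ False := iff_false_intro hxy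
    have hyxI : G.Adj y x ↔ False := iff_false_intro hyx
    have hxxI : G.Adj x x ↔ False := iff_false_intro G.irrefl
    have hyyI : G.Adj y y ↔ False := iff_false_intro G.irrefl
    rcases hy with (hy | hy) | hy
    · -- y ∈ T (i - 1) : F-graph
      rw [hsub] at hy
      have Ey := hTa 6 y hy
      have Ey' : ∀ c : Fin 7, G.Adj (v (i + c)) y ↔ (c = 6 - 1 ∨ c = 6 ∨ c = 6 + 1) :=
        fun c => (G.adj_comm _ _).trans (Ey c)
      have hyv : ∀ c : Fin 7, y ≠ v (i + c) := fun c h => ((hT (i + 6) y).1 hy).1 ⟨i + c, h.symm⟩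
      have hvy : ∀ c : Fin 7, v (i + c) ≠ y := fun c h => hyv c h.symm
      have hxyne : x ≠ y := by
        intro h
        have h3 : G.Adj x (v (i + 3)) := by rw [Ex 3]; decide
        rw [h, Ey 3] at h3
        revert h3; decide
      have hyxne : y ≠ x := fun h => hxyne h.symm
      have hinj : Function.Injective (![v (i+6), v (i+4), x, v (i+5), y, v (i+2)] : Fin 6 → V) := by
        have key : ∀ a b : Fin 6, (![v (i+6), v (i+4), x, v (i+5), y, v (i+2)] : Fin 6 → V) a = (![v (i+6), v (i+4), x, v (i+5), y, v (i+2)] : Fin 6 → V) b → a = b := by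
          simp only [Fin.forall_fin_succ, IsEmpty.forall_iff, Matrix.cons_val_zero,
            Matrix.cons_val_succ, hvv', hxv, hvx, hyv, hvy, hxyne, hyxne,
            eq_self_iff_true, true_implies, false_implies, implies_true, and_true, true_and]
          all_goals decide
        exact fun a b h => key a b h
      refine IsEmpty.elim hF ⟨⟨_, hinj⟩, ?_⟩
      have key : ∀ a b : Fin 6, G.Adj ((![v (i+6), v (i+4), x, v (i+5), y, v (i+2)] : Fin 6 → V) a) ((![v (i+6), v (i+4), x, v (i+5), y, v (i+2)] : Fin 6 → V) b) ↔ (Fgraph).Adj a b := by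
        simp only [Fin.forall_fin_succ, IsEmpty.forall_iff, Matrix.cons_val_zero,
          Matrix.cons_val_succ, Ex, Ex', Ey, Ey', hvv, hxyI, hyxI, hxxI, hyyI,
          Fgraph, fromEdgeSet_adj, Set.mem_insert_iff, Set.mem_singleton_iff]
        all_goals decide
      exact fun {a b} => key a b
    · -- y ∈ T i : P5
      have hy0 : y ∈ T (i + 0) := by rwa [add_zero]
      have Ey := hTa 0 y hy0
      have Ey' : ∀ c : Fin 7, G.Adj (v (i + c)) y ↔ (c = 0 - 1 ∨ c = 0 ∨ c = 0 + 1) :=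
        fun c => (G.adj_comm _ _).trans (Ey c)
      have hyv : ∀ c : Fin 7, y ≠ v (i + c) := fun c h => ((hT (i + 0) y).1 hy0).1 ⟨i + c, h.symm⟩
      have hvy : ∀ c : Fin 7, v (i + c) ≠ y := fun c h => hyv c h.symm
      have hxyne : x ≠ y := by
        intro h
        have h3 : G.Adj x (v (i + 3)) := by rw [Ex 3]; decide
        rw [h, Ey 3] at h3
        revert h3; decide
      have hyxne : y ≠ x := fun h => hxyne h.symm
      have hinj : Function.Injective (![v (i+1), y, v (i+0), v (i+2), x] : Fin 5 → V) := by
        have key : ∀ a b : Fin 5, (![v (i+1), y, v (i+0), v (i+2), x] : Fin 5 → V) a = (![v (i+1), y, v (i+0), v (i+2), x] : Fin 5 → V) b → a = b := by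
          simp only [Fin.forall_fin_succ, IsEmpty.forall_iff, Matrix.cons_val_zero,
            Matrix.cons_val_succ, hvv', hxv, hvx, hyv, hvy, hxyne, hyxne,
            eq_self_iff_true, true_implies, false_implies, implies_true, and_true, true_and]
          all_goals decide
        exact fun a b h => key a b h
      refine IsEmpty.elim hP5 ⟨⟨_, hinj⟩, ?_⟩
      have key : ∀ a b : Fin 5, G.Adj ((![v (i+1), y, v (i+0), v (i+2), x] : Fin 5 → V) a) ((![v (i+1), y, v (i+0), v (i+2), x] : Fin 5 → V) b) ↔ (pathGraph 5).Adj a b := by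
        simp only [Fin.forall_fin_succ, IsEmpty.forall_iff, Matrix.cons_val_zero,
          Matrix.cons_val_succ, Ex, Ex', Ey, Ey', hvv, hxyI, hyxI, hxxI, hyyI,
          pathGraph_adj]
        all_goals decide
      exact fun {a b} => key a b
    · -- y ∈ T (i + 1) : F-graph
      have Ey := hTa 1 y hy
      have Ey' : ∀ c : Fin 7, G.Adj (v (i + c)) y ↔ (c = 1 - 1 ∨ c = 1 ∨ c = 1 + 1) :=
        fun c => (G.adj_comm _ _).trans (Ey c)
      have hyv : ∀ c : Fin 7, y ≠ v (i + c) := fun c h => ((hT (i + 1) y).1 hy).1 ⟨i + c, h.symm⟩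
      have hvy : ∀ c : Fin 7, v (i + c) ≠ y := fun c h => hyv c h.symm
      have hxyne : x ≠ y := by
        intro h
        have h3 : G.Adj x (v (i + 3)) := by rw [Ex 3]; decide
        rw [h, Ey 3] at h3
        revert h3; decide
      have hyxne : y ≠ x := fun h => hxyne h.symm
      have hinj : Function.Injective (![v (i+1), v (i+3), x, v (i+2), y, v (i+5)] : Fin 6 → V) := by
        have key : ∀ a b : Fin 6, (![v (i+1), v (i+3), x, v (i+2), y, v (i+5)] : Fin 6 → V) a = (![v (i+1), v (i+3), x, v (i+2), y, v (i+5)] : Fin 6 → V) b → a = b := by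
          simp only [Fin.forall_fin_succ, IsEmpty.forall_iff, Matrix.cons_val_zero,
            Matrix.cons_val_succ, hvv', hxv, hvx, hyv, hvy, hxyne, hyxne,
            eq_self_iff_true, true_implies, false_implies, implies_true, and_true, true_and]
          all_goals decide
        exact fun a b h => key a b h
      refine IsEmpty.elim hF ⟨⟨_, hinj⟩, ?_⟩
      have key : ∀ a b : Fin 6, G.Adj ((![v (i+1), v (i+3), x, v (i+2), y, v (i+5)] : Fin 6 → V) a) ((![v (i+1), v (i+3), x, v (i+2), y, v (i+5)] : Fin 6 → V) b) ↔ (Fgraph).Adj a b := by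
        simp only [Fin.forall_fin_succ, IsEmpty.forall_iff, Matrix.cons_val_zero,
          Matrix.cons_val_succ, Ex, Ex', Ey, Ey', hvv, hxyI, hyxI, hxxI, hyyI,
          Fgraph, fromEdgeSet_adj, Set.mem_insert_iff, Set.mem_singleton_iff]
        all_goals decide
      exact fun {a b} => key a b
  · -- anticomplete part : K4
    intro x hx y hy hxy
    have hvv' : ∀ c d : Fin 7, v (i + c) = v (i + d) ↔ c = d :=
      fun c d => ⟨fun h => add_left_cancel (hv h), fun h => by rw [h]⟩
    have Ex := hFa x hx
    have Ex' : ∀ c : Fin 7, G.Adj (v (i + c)) x ↔ ¬(c = 6 ∨ c = 0 ∨ c = 1) :=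
      fun c => (G.adj_comm _ _).trans (Ex c)
    have hxv : ∀ c : Fin 7, x ≠ v (i + c) := fun c h => ((hFs i x).1 hx).1 ⟨i + c, h.symm⟩
    have hvx : ∀ c : Fin 7, v (i + c) ≠ x := fun c h => hxv c h.symm
    have Ey := hTa 3 y hy
    have Ey' : ∀ c : Fin 7, G.Adj (v (i + c)) y ↔ (c = 3 - 1 ∨ c = 3 ∨ c = 3 + 1) :=
      fun c => (G.adj_comm _ _).trans (Ey c)
    have hyv : ∀ c : Fin 7, y ≠ v (i + c) := fun c h => ((hT (i + 3) y).1 hy).1 ⟨i + c, h.symm⟩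
    have hvy : ∀ c : Fin 7, v (i + c) ≠ y := fun c h => hyv c h.symm
    have hxyne : x ≠ y := hxy.ne
    have hyxne : y ≠ x := fun h => hxyne h.symm
    have hxyI : G.Adj x y ↔ True := iff_true_intro hxy
    have hyxI : G.Adj y x ↔ True := iff_true_intro hxy.symm
    have hxxI : G.Adj x x ↔ False := iff_false_intro G.irrefl
    have hyyI : G.Adj y y ↔ False := iff_false_intro G.irrefl
    have hinj : Function.Injective (![x, y, v (i+2), v (i+4)] : Fin 4 → V) := by
      have key : ∀ a b : Fin 4, (![x, y, v (i+2), v (i+4)] : Fin 4 → V) a = (![x, y, v (i+2), v (i+4)] : Fin 4 → V) b → a = b := by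
        simp only [Fin.forall_fin_succ, IsEmpty.forall_iff, Matrix.cons_val_zero,
          Matrix.cons_val_succ, hvv', hxv, hvx, hyv, hvy, hxyne, hyxne,
          eq_self_iff_true, true_implies, false_implies, implies_true, and_true, true_and]
        all_goals decide
      exact fun a b h => key a b h
    refine IsEmpty.elim hK4 ⟨⟨_, hinj⟩, ?_⟩
    have key : ∀ a b : Fin 4, G.Adj ((![x, y, v (i+2), v (i+4)] : Fin 4 → V) a) ((![x, y, v (i+2), v (i+4)] : Fin 4 → V) b) ↔ (completeGraph (Fin 4)).Adj a b := by
      simp only [Fin.forall_fin_succ, IsEmpty.forall_iff, Matrix.cons_val_zero,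
        Matrix.cons_val_succ, Ex, Ex', Ey, Ey', hvv, hxyI, hyxI, hxxI, hyyI,
        completeGraph, top_adj]
      all_goals decide
    exact fun {a b} => key a b
end

section
/- Let G be a connected graph that is P5-free, K4-free, W5-free and F-free, and let v1,...,v7 induce a 7-antihole in G, with v_i v_{i+1} (indices modulo 7) the nonedges among them. For each i let T_i be the set of vertices outside the antihole whose neighborhood on {v1,...,v7} is exactly {v_{i−1}, v_i, v_{i+1}}. Then for every i and every t ∈ T_i, N(t) ⊆ N(v_{i−3}) ∪ N(v_{i+3}) (indices modulo 7). -/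
open SimpleGraph

lemma K4_elim {V : Type} (G : SimpleGraph V) (hK4 : SGFree G (completeGraph (Fin 4)))
    (a b c d : V)
    (hab : G.Adj a b) (hac : G.Adj a c) (had : G.Adj a d)
    (hbc : G.Adj b c) (hbd : G.Adj b d) (hcd : G.Adj c d) : False := by
  have hba := hab.symm; have hca := hac.symm; have hda := had.symm
  have hcb := hbc.symm; have hdb := hbd.symm; have hdc := hcd.symm
  have n1 : a ≠ b := hab.ne
  have n2 : a ≠ c := hac.ne
  have n3 : a ≠ d := had.ne
  have n4 : b ≠ c := hbc.ne
  have n5 : b ≠ d := hbd.ne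
  have n6 : c ≠ d := hcd.ne
  refine hK4.false ⟨⟨![a,b,c,d], ?_⟩, ?_⟩
  · intro x y hxy
    fin_cases x <;> fin_cases y <;> simp_all
  · intro x y
    show G.Adj (![a,b,c,d] x) (![a,b,c,d] y) ↔ _
    fin_cases x <;> fin_cases y <;> simp_all [completeGraph]

lemma P5_elim {V : Type} (G : SimpleGraph V) (hP5 : SGFree G (pathGraph 5))
    (a b c d e : V)
    (hab : G.Adj a b) (hbc : G.Adj b c) (hcd : G.Adj c d) (hde : G.Adj d e)
    (hac : ¬G.Adj a c) (had : ¬G.Adj a d) (hae : ¬G.Adj a e)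
    (hbd : ¬G.Adj b d) (hbe : ¬G.Adj b e) (hce : ¬G.Adj c e) : False := by
  have hba := hab.symm; have hcb := hbc.symm; have hdc := hcd.symm; have hed := hde.symm
  have hca : ¬G.Adj c a := fun h => hac h.symm
  have hda : ¬G.Adj d a := fun h => had h.symm
  have hea : ¬G.Adj e a := fun h => hae h.symm
  have hdb : ¬G.Adj d b := fun h => hbd h.symm
  have heb : ¬G.Adj e b := fun h => hbe h.symm
  have hec : ¬G.Adj e c := fun h => hce h.symm
  have n1 : a ≠ b := hab.ne
  have n2 : a ≠ c := fun h => had (by rw [h]; exact hcd)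
  have n3 : a ≠ d := fun h => hae (by rw [h]; exact hde)
  have n4 : a ≠ e := fun h => heb (by rw [← h]; exact hab)
  have n5 : b ≠ c := hbc.ne
  have n6 : b ≠ d := fun h => hbe (by rw [h]; exact hde)
  have n7 : b ≠ e := fun h => hdb (by rw [h]; exact hde)
  have n8 : c ≠ d := hcd.ne
  have n9 : c ≠ e := fun h => heb (by rw [← h]; exact hcb)
  have n10 : d ≠ e := hde.ne
  refine hP5.false ⟨⟨![a,b,c,d,e], ?_⟩, ?_⟩
  · intro x y hxy
    fin_cases x <;> fin_cases y <;> simp_all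
  · intro x y
    show G.Adj (![a,b,c,d,e] x) (![a,b,c,d,e] y) ↔ _
    fin_cases x <;> fin_cases y <;> simp_all [pathGraph_adj] <;> decide

/-- With `T i` the set of vertices outside a 7-antihole whose neighborhood on it is
exactly `{v_{i-1}, v_i, v_{i+1}}` in a connected `(P5, K4, W5, F)`-free graph, every
`t ∈ T i` satisfies `N(t) ⊆ N(v_{i-3}) ∪ N(v_{i+3})`. -/
theorem stmt_13 {V : Type} [Fintype V] (G : SimpleGraph V)
    (hconn : G.Connected)
    (hP5 : SGFree G (pathGraph 5))
    (hK4 : SGFree G (completeGraph (Fin 4)))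
    (hW5 : SGFree G W5)
    (hF : SGFree G Fgraph)
    (v : Fin 7 → V) (hv : Function.Injective v)
    (hadj : ∀ i j : Fin 7, G.Adj (v i) (v j) ↔ (i ≠ j ∧ j ≠ i + 1 ∧ i ≠ j + 1))
    (T : Fin 7 → Set V)
    (hT : ∀ (i : Fin 7) (x : V), x ∈ T i ↔
      x ∉ Set.range v ∧ ∀ j : Fin 7, G.Adj x (v j) ↔ (j = i - 1 ∨ j = i ∨ j = i + 1)) :
    ∀ i : Fin 7, ∀ t ∈ T i,
      G.neighborSet t ⊆ G.neighborSet (v (i - 3)) ∪ G.neighborSet (v (i + 3)) := by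
  intro i t ht u hu
  obtain ⟨-, htv⟩ := (hT i t).mp ht
  have htu : G.Adj t u := hu
  have hc7 : ∀ j a b : Fin 7, (j + a = j + b) ↔ a = b := by decide
  have hVV : ∀ a b : Fin 7, G.Adj (v (i+a)) (v (i+b)) ↔ (a ≠ b ∧ b ≠ a+1 ∧ a ≠ b+1) := by
    intro a b; simp only [hadj, add_assoc, ne_eq, hc7]
  have hd : ∀ j k : Fin 7, ((j+k = j-1 ∨ j+k = j ∨ j+k = j+1) ↔ (k = 6 ∨ k = 0 ∨ k = 1)) := by
    decide
  have hTV : ∀ k : Fin 7, G.Adj t (v (i+k)) ↔ (k = 6 ∨ k = 0 ∨ k = 1) :=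
    fun k => (htv (i+k)).trans (hd i k)
  rw [show i - 3 = i + 4 from (by decide : ∀ j : Fin 7, j - 3 = j + 4) i]
  simp only [Set.mem_union, mem_neighborSet]
  by_contra hcon
  push_neg at hcon
  obtain ⟨hn4, hn3⟩ := hcon
  have hu4 : ¬ G.Adj u (v (i+4)) := fun h => hn4 h.symm
  have hu3 : ¬ G.Adj u (v (i+3)) := fun h => hn3 h.symm
  rcases em (G.Adj u (v (i+0))) with b0|b0
  · rcases em (G.Adj u (v (i+1))) with b1|b1
    · rcases em (G.Adj u (v (i+2))) with b2|b2
      · rcases em (G.Adj u (v (i+5))) with b5|b5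
        · rcases em (G.Adj u (v (i+6))) with b6|b6
          · exact K4_elim G hK4 (v (i+0)) (v (i+2)) (v (i+5)) u ((hVV 0 2).2 (by decide)) ((hVV 0 5).2 (by decide)) b0.symm ((hVV 2 5).2 (by decide)) b2.symm b5.symm
          · exact K4_elim G hK4 (v (i+0)) (v (i+2)) (v (i+5)) u ((hVV 0 2).2 (by decide)) ((hVV 0 5).2 (by decide)) b0.symm ((hVV 2 5).2 (by decide)) b2.symm b5.symm
        · rcases em (G.Adj u (v (i+6))) with b6|b6
          · exact K4_elim G hK4 (v (i+1)) (v (i+6)) t u ((hVV 1 6).2 (by decide)) ((hTV 1).2 (by decide)).symm b1.symm ((hTV 6).2 (by decide)).symm b6.symm htu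
          · exact P5_elim G hP5 (v (i+3)) (v (i+5)) (v (i+2)) u t ((hVV 3 5).2 (by decide)) ((hVV 5 2).2 (by decide)) b2.symm htu.symm (fun h => absurd ((hVV 3 2).1 h) (by decide)) (fun h => hu3 h.symm) (fun h => absurd ((hTV 3).1 h.symm) (by decide)) (fun h => b5 h.symm) (fun h => absurd ((hTV 5).1 h.symm) (by decide)) (fun h => absurd ((hTV 2).1 h.symm) (by decide))
      · rcases em (G.Adj u (v (i+5))) with b5|b5
        · rcases em (G.Adj u (v (i+6))) with b6|b6
          · exact K4_elim G hK4 (v (i+1)) (v (i+6)) t u ((hVV 1 6).2 (by decide)) ((hTV 1).2 (by decide)).symm b1.symm ((hTV 6).2 (by decide)).symm b6.symm htu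
          · exact P5_elim G hP5 (v (i+4)) (v (i+2)) (v (i+5)) u t ((hVV 4 2).2 (by decide)) ((hVV 2 5).2 (by decide)) b5.symm htu.symm (fun h => absurd ((hVV 4 5).1 h) (by decide)) (fun h => hu4 h.symm) (fun h => absurd ((hTV 4).1 h.symm) (by decide)) (fun h => b2 h.symm) (fun h => absurd ((hTV 2).1 h.symm) (by decide)) (fun h => absurd ((hTV 5).1 h.symm) (by decide))
        · rcases em (G.Adj u (v (i+6))) with b6|b6
          · exact K4_elim G hK4 (v (i+1)) (v (i+6)) t u ((hVV 1 6).2 (by decide)) ((hTV 1).2 (by decide)).symm b1.symm ((hTV 6).2 (by decide)).symm b6.symm htu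
          · exact P5_elim G hP5 (v (i+5)) (v (i+2)) (v (i+6)) t u ((hVV 5 2).2 (by decide)) ((hVV 2 6).2 (by decide)) ((hTV 6).2 (by decide)).symm htu (fun h => absurd ((hVV 5 6).1 h) (by decide)) (fun h => absurd ((hTV 5).1 h.symm) (by decide)) (fun h => b5 h.symm) (fun h => absurd ((hTV 2).1 h.symm) (by decide)) (fun h => b2 h.symm) (fun h => b6 h.symm)
    · rcases em (G.Adj u (v (i+2))) with b2|b2
      · rcases em (G.Adj u (v (i+5))) with b5|b5
        · rcases em (G.Adj u (v (i+6))) with b6|b6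
          · exact K4_elim G hK4 (v (i+0)) (v (i+2)) (v (i+5)) u ((hVV 0 2).2 (by decide)) ((hVV 0 5).2 (by decide)) b0.symm ((hVV 2 5).2 (by decide)) b2.symm b5.symm
          · exact K4_elim G hK4 (v (i+0)) (v (i+2)) (v (i+5)) u ((hVV 0 2).2 (by decide)) ((hVV 0 5).2 (by decide)) b0.symm ((hVV 2 5).2 (by decide)) b2.symm b5.symm
        · rcases em (G.Adj u (v (i+6))) with b6|b6
          · exact P5_elim G hP5 (v (i+2)) u t (v (i+1)) (v (i+3)) b2.symm htu.symm ((hTV 1).2 (by decide)) ((hVV 1 3).2 (by decide)) (fun h => absurd ((hTV 2).1 h.symm) (by decide)) (fun h => absurd ((hVV 2 1).1 h) (by decide)) (fun h => absurd ((hVV 2 3).1 h) (by decide)) b1 hu3 (fun h => absurd ((hTV 3).1 h) (by decide))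
          · exact P5_elim G hP5 (v (i+2)) u t (v (i+1)) (v (i+3)) b2.symm htu.symm ((hTV 1).2 (by decide)) ((hVV 1 3).2 (by decide)) (fun h => absurd ((hTV 2).1 h.symm) (by decide)) (fun h => absurd ((hVV 2 1).1 h) (by decide)) (fun h => absurd ((hVV 2 3).1 h) (by decide)) b1 hu3 (fun h => absurd ((hTV 3).1 h) (by decide))
      · rcases em (G.Adj u (v (i+5))) with b5|b5
        · rcases em (G.Adj u (v (i+6))) with b6|b6
          · exact P5_elim G hP5 (v (i+2)) (v (i+4)) (v (i+1)) t u ((hVV 2 4).2 (by decide)) ((hVV 4 1).2 (by decide)) ((hTV 1).2 (by decide)).symm htu (fun h => absurd ((hVV 2 1).1 h) (by decide)) (fun h => absurd ((hTV 2).1 h.symm) (by decide)) (fun h => b2 h.symm) (fun h => absurd ((hTV 4).1 h.symm) (by decide)) (fun h => hu4 h.symm) (fun h => b1 h.symm)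
          · exact P5_elim G hP5 (v (i+1)) (v (i+6)) (v (i+2)) (v (i+0)) u ((hVV 1 6).2 (by decide)) ((hVV 6 2).2 (by decide)) ((hVV 2 0).2 (by decide)) b0.symm (fun h => absurd ((hVV 1 2).1 h) (by decide)) (fun h => absurd ((hVV 1 0).1 h) (by decide)) (fun h => b1 h.symm) (fun h => absurd ((hVV 6 0).1 h) (by decide)) (fun h => b6 h.symm) (fun h => b2 h.symm)
        · rcases em (G.Adj u (v (i+6))) with b6|b6
          · exact P5_elim G hP5 (v (i+2)) (v (i+4)) (v (i+1)) t u ((hVV 2 4).2 (by decide)) ((hVV 4 1).2 (by decide)) ((hTV 1).2 (by decide)).symm htu (fun h => absurd ((hVV 2 1).1 h) (by decide)) (fun h => absurd ((hTV 2).1 h.symm) (by decide)) (fun h => b2 h.symm) (fun h => absurd ((hTV 4).1 h.symm) (by decide)) (fun h => hu4 h.symm) (fun h => b1 h.symm)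
          · exact P5_elim G hP5 (v (i+1)) (v (i+6)) (v (i+2)) (v (i+0)) u ((hVV 1 6).2 (by decide)) ((hVV 6 2).2 (by decide)) ((hVV 2 0).2 (by decide)) b0.symm (fun h => absurd ((hVV 1 2).1 h) (by decide)) (fun h => absurd ((hVV 1 0).1 h) (by decide)) (fun h => b1 h.symm) (fun h => absurd ((hVV 6 0).1 h) (by decide)) (fun h => b6 h.symm) (fun h => b2 h.symm)
  · rcases em (G.Adj u (v (i+1))) with b1|b1
    · rcases em (G.Adj u (v (i+2))) with b2|b2
      · rcases em (G.Adj u (v (i+5))) with b5|b5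
        · rcases em (G.Adj u (v (i+6))) with b6|b6
          · exact K4_elim G hK4 (v (i+1)) (v (i+6)) t u ((hVV 1 6).2 (by decide)) ((hTV 1).2 (by decide)).symm b1.symm ((hTV 6).2 (by decide)).symm b6.symm htu
          · exact P5_elim G hP5 (v (i+4)) (v (i+6)) (v (i+3)) (v (i+5)) u ((hVV 4 6).2 (by decide)) ((hVV 6 3).2 (by decide)) ((hVV 3 5).2 (by decide)) b5.symm (fun h => absurd ((hVV 4 3).1 h) (by decide)) (fun h => absurd ((hVV 4 5).1 h) (by decide)) (fun h => hu4 h.symm) (fun h => absurd ((hVV 6 5).1 h) (by decide)) (fun h => b6 h.symm) (fun h => hu3 h.symm)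
        · rcases em (G.Adj u (v (i+6))) with b6|b6
          · exact K4_elim G hK4 (v (i+1)) (v (i+6)) t u ((hVV 1 6).2 (by decide)) ((hTV 1).2 (by decide)).symm b1.symm ((hTV 6).2 (by decide)).symm b6.symm htu
          · exact P5_elim G hP5 (v (i+3)) (v (i+5)) (v (i+2)) u t ((hVV 3 5).2 (by decide)) ((hVV 5 2).2 (by decide)) b2.symm htu.symm (fun h => absurd ((hVV 3 2).1 h) (by decide)) (fun h => hu3 h.symm) (fun h => absurd ((hTV 3).1 h.symm) (by decide)) (fun h => b5 h.symm) (fun h => absurd ((hTV 5).1 h.symm) (by decide)) (fun h => absurd ((hTV 2).1 h.symm) (by decide))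
      · rcases em (G.Adj u (v (i+5))) with b5|b5
        · rcases em (G.Adj u (v (i+6))) with b6|b6
          · exact K4_elim G hK4 (v (i+1)) (v (i+6)) t u ((hVV 1 6).2 (by decide)) ((hTV 1).2 (by decide)).symm b1.symm ((hTV 6).2 (by decide)).symm b6.symm htu
          · exact P5_elim G hP5 (v (i+0)) (v (i+2)) (v (i+6)) (v (i+1)) u ((hVV 0 2).2 (by decide)) ((hVV 2 6).2 (by decide)) ((hVV 6 1).2 (by decide)) b1.symm (fun h => absurd ((hVV 0 6).1 h) (by decide)) (fun h => absurd ((hVV 0 1).1 h) (by decide)) (fun h => b0 h.symm) (fun h => absurd ((hVV 2 1).1 h) (by decide)) (fun h => b2 h.symm) (fun h => b6 h.symm)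
        · rcases em (G.Adj u (v (i+6))) with b6|b6
          · exact K4_elim G hK4 (v (i+1)) (v (i+6)) t u ((hVV 1 6).2 (by decide)) ((hTV 1).2 (by decide)).symm b1.symm ((hTV 6).2 (by decide)).symm b6.symm htu
          · exact P5_elim G hP5 (v (i+0)) (v (i+2)) (v (i+6)) (v (i+1)) u ((hVV 0 2).2 (by decide)) ((hVV 2 6).2 (by decide)) ((hVV 6 1).2 (by decide)) b1.symm (fun h => absurd ((hVV 0 6).1 h) (by decide)) (fun h => absurd ((hVV 0 1).1 h) (by decide)) (fun h => b0 h.symm) (fun h => absurd ((hVV 2 1).1 h) (by decide)) (fun h => b2 h.symm) (fun h => b6 h.symm)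
    · rcases em (G.Adj u (v (i+2))) with b2|b2
      · rcases em (G.Adj u (v (i+5))) with b5|b5
        · rcases em (G.Adj u (v (i+6))) with b6|b6
          · exact P5_elim G hP5 (v (i+1)) (v (i+3)) (v (i+0)) (v (i+2)) u ((hVV 1 3).2 (by decide)) ((hVV 3 0).2 (by decide)) ((hVV 0 2).2 (by decide)) b2.symm (fun h => absurd ((hVV 1 0).1 h) (by decide)) (fun h => absurd ((hVV 1 2).1 h) (by decide)) (fun h => b1 h.symm) (fun h => absurd ((hVV 3 2).1 h) (by decide)) (fun h => hu3 h.symm) (fun h => b0 h.symm)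
          · exact P5_elim G hP5 (v (i+1)) (v (i+3)) (v (i+0)) (v (i+2)) u ((hVV 1 3).2 (by decide)) ((hVV 3 0).2 (by decide)) ((hVV 0 2).2 (by decide)) b2.symm (fun h => absurd ((hVV 1 0).1 h) (by decide)) (fun h => absurd ((hVV 1 2).1 h) (by decide)) (fun h => b1 h.symm) (fun h => absurd ((hVV 3 2).1 h) (by decide)) (fun h => hu3 h.symm) (fun h => b0 h.symm)
        · rcases em (G.Adj u (v (i+6))) with b6|b6
          · exact P5_elim G hP5 (v (i+0)) (v (i+5)) (v (i+1)) (v (i+6)) u ((hVV 0 5).2 (by decide)) ((hVV 5 1).2 (by decide)) ((hVV 1 6).2 (by decide)) b6.symm (fun h => absurd ((hVV 0 1).1 h) (by decide)) (fun h => absurd ((hVV 0 6).1 h) (by decide)) (fun h => b0 h.symm) (fun h => absurd ((hVV 5 6).1 h) (by decide)) (fun h => b5 h.symm) (fun h => b1 h.symm)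
          · exact P5_elim G hP5 (v (i+1)) (v (i+3)) (v (i+0)) (v (i+2)) u ((hVV 1 3).2 (by decide)) ((hVV 3 0).2 (by decide)) ((hVV 0 2).2 (by decide)) b2.symm (fun h => absurd ((hVV 1 0).1 h) (by decide)) (fun h => absurd ((hVV 1 2).1 h) (by decide)) (fun h => b1 h.symm) (fun h => absurd ((hVV 3 2).1 h) (by decide)) (fun h => hu3 h.symm) (fun h => b0 h.symm)
      · rcases em (G.Adj u (v (i+5))) with b5|b5
        · rcases em (G.Adj u (v (i+6))) with b6|b6
          · exact P5_elim G hP5 (v (i+2)) (v (i+4)) (v (i+1)) t u ((hVV 2 4).2 (by decide)) ((hVV 4 1).2 (by decide)) ((hTV 1).2 (by decide)).symm htu (fun h => absurd ((hVV 2 1).1 h) (by decide)) (fun h => absurd ((hTV 2).1 h.symm) (by decide)) (fun h => b2 h.symm) (fun h => absurd ((hTV 4).1 h.symm) (by decide)) (fun h => hu4 h.symm) (fun h => b1 h.symm)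
          · exact P5_elim G hP5 (v (i+2)) (v (i+4)) (v (i+1)) t u ((hVV 2 4).2 (by decide)) ((hVV 4 1).2 (by decide)) ((hTV 1).2 (by decide)).symm htu (fun h => absurd ((hVV 2 1).1 h) (by decide)) (fun h => absurd ((hTV 2).1 h.symm) (by decide)) (fun h => b2 h.symm) (fun h => absurd ((hTV 4).1 h.symm) (by decide)) (fun h => hu4 h.symm) (fun h => b1 h.symm)
        · rcases em (G.Adj u (v (i+6))) with b6|b6
          · exact P5_elim G hP5 (v (i+0)) (v (i+5)) (v (i+1)) (v (i+6)) u ((hVV 0 5).2 (by decide)) ((hVV 5 1).2 (by decide)) ((hVV 1 6).2 (by decide)) b6.symm (fun h => absurd ((hVV 0 1).1 h) (by decide)) (fun h => absurd ((hVV 0 6).1 h) (by decide)) (fun h => b0 h.symm) (fun h => absurd ((hVV 5 6).1 h) (by decide)) (fun h => b5 h.symm) (fun h => b1 h.symm)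
          · exact P5_elim G hP5 (v (i+2)) (v (i+4)) (v (i+1)) t u ((hVV 2 4).2 (by decide)) ((hVV 4 1).2 (by decide)) ((hTV 1).2 (by decide)).symm htu (fun h => absurd ((hVV 2 1).1 h) (by decide)) (fun h => absurd ((hTV 2).1 h.symm) (by decide)) (fun h => b2 h.symm) (fun h => absurd ((hTV 4).1 h.symm) (by decide)) (fun h => hu4 h.symm) (fun h => b1 h.symm)
end

section
/- For every fixed integer k ≥ 1, there are only finitely many k-vertex-critical (P1+P3)-free graphs; that is, there exists a natural number N (depending only on k) such that every k-vertex-critical (P1+P3)-free graph has at most N vertices. -/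
open SimpleGraph

lemma free_elim {V : Type} {G : SimpleGraph V} (hfree : SGFree G P1P3)
    {a x y z : V} (hax : a ≠ x) (hay : a ≠ y) (haz : a ≠ z) (hxz : x ≠ z)
    (hxy : G.Adj x y) (hyz : G.Adj y z) (nxz : ¬ G.Adj x z)
    (nax : ¬ G.Adj a x) (nay : ¬ G.Adj a y) (naz : ¬ G.Adj a z) : False := by
  have hxy' : x ≠ y := hxy.ne
  have hyz' : y ≠ z := hyz.ne
  apply hfree.false
  refine ⟨⟨![a,x,y,z], ?_⟩, ?_⟩
  · intro i j hij
    fin_cases i <;> fin_cases j <;> simp_all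
  · intro i j
    show G.Adj (![a,x,y,z] i) (![a,x,y,z] j) ↔ P1P3.Adj i j
    fin_cases i <;> fin_cases j <;> simp_all [P1P3, Sym2.eq_iff, G.adj_comm, G.irrefl]

section Lemmas
variable {V : Type} {G : SimpleGraph V} (hfree : SGFree G P1P3)
variable {a b c : V} (hab : a ≠ b) (hac : a ≠ c) (hbc : b ≠ c)
variable (nab : ¬G.Adj a b) (nac : ¬G.Adj a c) (nbc : ¬G.Adj b c)

include hfree hab hac hbc nab nac nbc in
/-- Pattern lemma: a vertex adjacent to two of the triple is adjacent to the third. -/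
lemma L1 {x : V} (h1 : G.Adj a x) (h2 : G.Adj b x) : G.Adj c x := by
  by_contra ncx
  have hcx : c ≠ x := fun h => nac (h ▸ h1)
  have hcb : c ≠ b := hbc.symm
  exact free_elim hfree hac.symm hcx hcb hab h1 h2.symm nab
    (fun h => nac h.symm) ncx (fun h => nbc h.symm)

include hfree hab nab in
/-- The private neighbourhood of `a` (w.r.t. `b`) together with `a` is a clique. -/
lemma L2 {x y : V} (hax : G.Adj a x) (nbx : ¬G.Adj b x) (hay : G.Adj a y)
    (nby : ¬G.Adj b y) (hxy : x ≠ y) : G.Adj x y := by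
  by_contra nxy
  have hbx : b ≠ x := fun h => nab (by rw [h]; exact hax)
  have hby : b ≠ y := fun h => nab (by rw [h]; exact hay)
  exact free_elim hfree hbx hab.symm hby hxy hax.symm hay nxy nbx
    (fun h => nab h.symm) nby

include hfree hab hac hbc nab nac nbc in
/-- Neighbours of the private clique of `a` which are not in it are adjacent
to both `a` and `b`. -/
lemma L3 {x w : V} (hx : x = a ∨ (G.Adj a x ∧ ¬G.Adj b x)) (hxw : G.Adj x w)
    (hw : ¬(w = a ∨ (G.Adj a w ∧ ¬G.Adj b w))) : G.Adj a w ∧ G.Adj b w := by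
  push_neg at hw
  obtain ⟨hwa, hw2⟩ := hw
  rcases hx with rfl | ⟨hax, nbx⟩
  · -- x = a
    exact ⟨hxw, hw2 hxw⟩
  · have hbw : G.Adj b w := by
      by_contra nbw
      have naw : ¬G.Adj a w := fun h => nbw (hw2 h)
      have hba : b ≠ a := hab.symm
      have hbx : b ≠ x := fun h => nab (by rw [h]; exact hax)
      have hbw' : b ≠ w := fun h => nbx (by rw [h]; exact hxw.symm)
      exact free_elim hfree hba hbx hbw' (fun h => hwa h.symm)
        hax hxw naw (fun h => nab h.symm) nbx nbw
    refine ⟨?_, hbw⟩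
    by_contra naw
    have ncx : ¬G.Adj c x := fun h => nbx (L1 hfree hac hab hbc.symm nac nab
      (fun h' => nbc h'.symm) hax h)
    have ncw : ¬G.Adj c w := fun h => naw (L1 hfree hbc hab.symm hac.symm nbc
      (fun h' => nab h'.symm) (fun h' => nac h'.symm) hbw h)
    have hcx : c ≠ x := fun h => nac (by rw [h]; exact hax)
    have hcw : c ≠ w := fun h => nbc (by rw [h]; exact hbw)
    exact free_elim hfree hac.symm hcx hcw (fun h => hwa h.symm) hax hxw naw
      (fun h => nac h.symm) ncx ncw

include hfree hab hac hbc nab nac nbc in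
/-- Common neighbours of `a,b` are adjacent to the private neighbourhood of `b`. -/
lemma L4 {w y : V} (haw : G.Adj a w) (hbw : G.Adj b w) (hby : G.Adj b y)
    (nay : ¬G.Adj a y) : G.Adj w y := by
  by_contra nwy
  have hcw : G.Adj c w := L1 hfree hab hac hbc nab nac nbc haw hbw
  have ncy : ¬G.Adj c y := fun h => nay (L1 hfree hbc hab.symm hac.symm nbc
    (fun h' => nab h'.symm) (fun h' => nac h'.symm) hby h)
  have hya : y ≠ a := fun h => nab (by rw [h] at hby; exact hby.symm)
  have hyw : y ≠ w := fun h => nay (by rw [h]; exact haw)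
  have hyc : y ≠ c := fun h => nbc (by rw [h] at hby; exact hby)
  exact free_elim hfree hya hyw hyc hac haw hcw.symm nac
    (fun h => nay h.symm) (fun h => nwy h.symm) (fun h => ncy h.symm)
end Lemmas

lemma key {V : Type} [Fintype V] [DecidableEq V] {G : SimpleGraph V} [DecidableRel G.Adj]
    (hfree : SGFree G P1P3)
    {a b c : V} (hab : a ≠ b) (hac : a ≠ c) (hbc : b ≠ c)
    (nab : ¬G.Adj a b) (nac : ¬G.Adj a c) (nbc : ¬G.Adj b c)
    {m : ℕ}
    (hcard : (Finset.univ.filter fun x => G.Adj a x ∧ ¬G.Adj b x).card ≤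
             (Finset.univ.filter fun x => G.Adj b x ∧ ¬G.Adj a x).card)
    (f : (G.induce ({a}ᶜ : Set V)).Coloring (Fin m)) : G.Colorable m := by
  set A := Finset.univ.filter (fun x => G.Adj a x ∧ ¬G.Adj b x) with hAdef
  set B := Finset.univ.filter (fun x => G.Adj b x ∧ ¬G.Adj a x) with hBdef
  have haA : a ∉ A := by simp [hAdef]
  have hbB : b ∉ B := by simp [hBdef]
  have memAa : ∀ {v : V}, v ∈ insert a A ↔ (v = a ∨ (G.Adj a v ∧ ¬G.Adj b v)) := by
    intro v; simp [hAdef]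
  have memBb : ∀ {v : V}, v ∈ insert b B ↔ (v = b ∨ (G.Adj b v ∧ ¬G.Adj a v)) := by
    intro v; simp [hBdef]
  have hBne : ∀ {y : V}, y ∈ insert b B → y ≠ a := by
    intro y hy
    rcases memBb.mp hy with rfl | ⟨hby, _⟩
    · exact hab.symm
    · intro h; rw [h] at hby; exact nab hby.symm
  have cliqueB : ∀ {y z : V}, y ∈ insert b B → z ∈ insert b B → y ≠ z → G.Adj y z := by
    intro y z hy hz hyz
    rcases memBb.mp hy with rfl | ⟨hby, nay⟩ <;> rcases memBb.mp hz with rfl | ⟨hbz, naz⟩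
    · exact absurd rfl hyz
    · exact hbz
    · exact hby.symm
    · exact L2 hfree hab.symm (fun h => nab h.symm) hby nay hbz naz hyz
  have hcard3 : Fintype.card (insert a A : Finset V) ≤ Fintype.card (insert b B : Finset V) := by
    simp only [Fintype.card_coe]
    rw [Finset.card_insert_of_notMem haA, Finset.card_insert_of_notMem hbB]
    omega
  obtain ⟨h⟩ := Function.Embedding.nonempty_of_card_le hcard3
  let g : V → Fin m := fun v =>
    if hv : v ∈ insert a A then
      f ⟨((h ⟨v, hv⟩ : (insert b B : Finset V)) : V),
         Set.mem_compl_singleton_iff.mpr (hBne (h ⟨v, hv⟩).2)⟩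
    else
      f ⟨v, Set.mem_compl_singleton_iff.mpr
        (fun he => hv (he ▸ Finset.mem_insert_self a A))⟩
  refine ⟨Coloring.mk g ?_⟩
  intro u w huw
  by_cases hu : u ∈ insert a A <;> by_cases hw : w ∈ insert a A <;>
    simp only [g, dif_pos, dif_neg, hu, hw]
  · -- both in Aa
    have hne : (h ⟨u, hu⟩ : V) ≠ (h ⟨w, hw⟩ : V) := by
      intro he
      have : (⟨u, hu⟩ : (insert a A : Finset V)) = ⟨w, hw⟩ :=
        h.injective (Subtype.ext he)
      exact huw.ne (congrArg Subtype.val this)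
    exact f.valid (cliqueB (h ⟨u, hu⟩).2 (h ⟨w, hw⟩).2 hne)
  · -- u in Aa, w not
    obtain ⟨haw, hbw⟩ := L3 hfree hab hac hbc nab nac nbc (memAa.mp hu) huw
      (fun hmem => hw (memAa.mpr hmem))
    have hadj : G.Adj (h ⟨u, hu⟩ : V) w := by
      rcases memBb.mp (h ⟨u, hu⟩).2 with he | ⟨hby, nay⟩
      · rw [he]; exact hbw
      · exact (L4 hfree hab hac hbc nab nac nbc haw hbw hby nay).symm
    exact f.valid hadj
  · -- w in Aa, u not
    obtain ⟨hau, hbu⟩ := L3 hfree hab hac hbc nab nac nbc (memAa.mp hw) huw.symm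
      (fun hmem => hu (memAa.mpr hmem))
    have hadj : G.Adj u (h ⟨w, hw⟩ : V) := by
      rcases memBb.mp (h ⟨w, hw⟩).2 with he | ⟨hby, nay⟩
      · rw [he]; exact hbu.symm
      · exact L4 hfree hab hac hbc nab nac nbc hau hbu hby nay
    exact f.valid hadj
  · exact f.valid huw

lemma coloring_of_lt {V : Type} [Fintype V] (G : SimpleGraph V) {k : ℕ} (hk : 1 ≤ k)
    (h : G.chromaticNumber < (k : ℕ∞)) : G.Colorable (k - 1) := by
  have hfin := G.colorable_chromaticNumber_of_fintype
  have hne : G.chromaticNumber ≠ ⊤ := ne_top_of_lt h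
  have hcast : ((ENat.toNat G.chromaticNumber : ℕ) : ℕ∞) = G.chromaticNumber :=
    ENat.coe_toNat hne
  have hn : ENat.toNat G.chromaticNumber < k := by
    rw [← hcast] at h; exact_mod_cast h
  exact hfin.mono (by omega)


/-- For every fixed `k ≥ 1`, there is a uniform bound on the number of vertices of
`k`-vertex-critical `(P1 + P3)`-free graphs. -/
theorem stmt_14 (k : ℕ) (hk : 1 ≤ k) :
    ∃ N : ℕ, ∀ (V : Type) [Fintype V] (G : SimpleGraph V),
      IsKVertexCritical G k → SGFree G P1P3 → Fintype.card V ≤ N := by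
  classical
  refine ⟨2 * k, ?_⟩
  intro V _ G hcrit hfree
  by_contra hbig
  push_neg at hbig
  obtain ⟨hchrom, hcritv⟩ := hcrit
  have nocol : ¬ G.Colorable (k - 1) := by
    intro hc
    have h1 := hc.chromaticNumber_le
    rw [hchrom] at h1
    have h2 : k ≤ k - 1 := by exact_mod_cast h1
    omega
  have hcol : G.Colorable k := by
    rw [← chromaticNumber_le_iff_colorable, hchrom]
  obtain ⟨C⟩ := hcol
  obtain ⟨y, -, hy⟩ :
      ∃ y ∈ (Finset.univ : Finset (Fin k)),
        2 < (Finset.univ.filter fun v => C v = y).card := by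
    apply Finset.exists_lt_card_fiber_of_mul_lt_card_of_maps_to
    · intro x _; exact Finset.mem_univ _
    · simpa using (by omega : k * 2 < Fintype.card V)
  rw [Finset.two_lt_card] at hy
  obtain ⟨a, ha, b, hb, c, hc, hab, hac, hbc⟩ := hy
  simp only [Finset.mem_filter, Finset.mem_univ, true_and] at ha hb hc
  have nonadj : ∀ {u w : V}, C u = y → C w = y → ¬G.Adj u w := by
    intro u w h1 h2 hadj
    exact C.valid hadj (by rw [h1, h2])
  have nab : ¬G.Adj a b := nonadj ha hb
  have nac : ¬G.Adj a c := nonadj ha hc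
  have nbc : ¬G.Adj b c := nonadj hb hc
  rcases le_total
      ((Finset.univ.filter fun x => G.Adj a x ∧ ¬G.Adj b x).card)
      ((Finset.univ.filter fun x => G.Adj b x ∧ ¬G.Adj a x).card) with hle | hle
  · obtain ⟨f⟩ := coloring_of_lt (G.induce ({a}ᶜ : Set V)) hk (hcritv a)
    exact nocol (key hfree hab hac hbc nab nac nbc hle f)
  · obtain ⟨f⟩ := coloring_of_lt (G.induce ({b}ᶜ : Set V)) hk (hcritv b)
    exact nocol (key hfree hab.symm hbc hac (fun h => nab h.symm) nbc nac hle f)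
end

section
/- For every fixed integer k ≥ 1, there are only finitely many k-vertex-critical (P5, P2+2P1)-free graphs; that is, there exists a natural number N (depending only on k) such that every k-vertex-critical (P5, P2+2P1)-free graph has at most N vertices. -/
open SimpleGraph

/- ### Auxiliary lemmas -/

/-- If `G` is `P2+2P1`-free, there is no induced copy of an edge plus two isolated vertices. -/
private lemma p2free_app {V : Type} {G : SimpleGraph V} (h : SGFree G P2plus2P1)
    {a b c d : V} (hab : G.Adj a b)
    (hac : ¬G.Adj a c) (had : ¬G.Adj a d) (hbc : ¬G.Adj b c) (hbd : ¬G.Adj b d)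
    (hcd : ¬G.Adj c d) (hac' : a ≠ c) (had' : a ≠ d) (hbc' : b ≠ c) (hbd' : b ≠ d)
    (hcd' : c ≠ d) : False := by
  have hab' := hab.ne
  have hba := hab.symm
  have hca : ¬G.Adj c a := fun h' => hac h'.symm
  have hda : ¬G.Adj d a := fun h' => had h'.symm
  have hcb : ¬G.Adj c b := fun h' => hbc h'.symm
  have hdb : ¬G.Adj d b := fun h' => hbd h'.symm
  have hdc : ¬G.Adj d c := fun h' => hcd h'.symm
  apply h.false
  refine ⟨⟨![a,b,c,d], ?_⟩, ?_⟩
  · intro i j hij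
    fin_cases i <;> fin_cases j <;> simp_all
  · intro i j
    show G.Adj (![a,b,c,d] i) (![a,b,c,d] j) ↔ _
    fin_cases i <;> fin_cases j <;> simp_all [P2plus2P1, Sym2.eq, Sym2.rel_iff', Prod.ext_iff]

/-- If `G` is `P5`-free, there is no induced path `a-b-c-d-e`. -/
private lemma p5free_app {V : Type} {G : SimpleGraph V} (h : SGFree G (pathGraph 5))
    {a b c d e : V} (hab : G.Adj a b) (hbc : G.Adj b c) (hcd : G.Adj c d) (hde : G.Adj d e)
    (hac : ¬G.Adj a c) (had : ¬G.Adj a d) (hae : ¬G.Adj a e)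
    (hbd : ¬G.Adj b d) (hbe : ¬G.Adj b e) (hce : ¬G.Adj c e)
    (hac' : a ≠ c) (had' : a ≠ d) (hae' : a ≠ e) (hbd' : b ≠ d) (hbe' : b ≠ e)
    (hce' : c ≠ e) : False := by
  have hab' := hab.ne
  have hbc' := hbc.ne
  have hcd' := hcd.ne
  have hde' := hde.ne
  have hba := hab.symm
  have hcb := hbc.symm
  have hdc := hcd.symm
  have hed := hde.symm
  have hca : ¬G.Adj c a := fun h' => hac h'.symm
  have hda : ¬G.Adj d a := fun h' => had h'.symm
  have hea : ¬G.Adj e a := fun h' => hae h'.symm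
  have hdb : ¬G.Adj d b := fun h' => hbd h'.symm
  have heb : ¬G.Adj e b := fun h' => hbe h'.symm
  have hec : ¬G.Adj e c := fun h' => hce h'.symm
  apply h.false
  refine ⟨⟨![a,b,c,d,e], ?_⟩, ?_⟩
  · intro i j hij
    fin_cases i <;> fin_cases j <;> simp_all
  · intro i j
    show G.Adj (![a,b,c,d,e] i) (![a,b,c,d,e] j) ↔ _
    fin_cases i <;> fin_cases j <;> simp_all [pathGraph_adj] <;> decide

/-- A vertex-critical graph minus a vertex is `(k-1)`-colorable. -/
private lemma crit_colorable {V : Type} [Fintype V] {G : SimpleGraph V} {k : ℕ}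
    (h : IsKVertexCritical G k) (v : V) :
    (G.induce ({v}ᶜ : Set V)).Colorable (k-1) := by
  have h2 := h.2 v
  have hne : (G.induce ({v}ᶜ : Set V)).chromaticNumber ≠ ⊤ :=
    fun ht => by rw [ht] at h2; exact (lt_irrefl _ (lt_of_le_of_lt le_top h2)).elim
  have hcol := (G.induce ({v}ᶜ : Set V)).colorable_chromaticNumber_of_fintype
  apply hcol.mono
  have h2' := h2
  rw [← ENat.coe_toNat hne] at h2'
  have hlt : (G.induce ({v}ᶜ : Set V)).chromaticNumber.toNat < k := by exact_mod_cast h2'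
  omega

/-- A `k`-vertex-critical graph is not `(k-1)`-colorable. -/
private lemma not_col_pred {V : Type} [Fintype V] {G : SimpleGraph V} {k : ℕ}
    (hk : 1 ≤ k) (h : IsKVertexCritical G k) : ¬ G.Colorable (k-1) := by
  intro hc
  have hle := hc.chromaticNumber_le
  rw [h.1] at hle
  have : k ≤ k - 1 := by exact_mod_cast hle
  omega

/-- In a `k`-vertex-critical graph with `k ≥ 2`, for nonadjacent `u ≠ w` there is a
neighbor of `u` that is not a neighbor of `w`. -/
private lemma exists_private {V : Type} [Fintype V] {G : SimpleGraph V} {k : ℕ}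
    (hk : 2 ≤ k) (h : IsKVertexCritical G k) {u w : V} (hne : u ≠ w) (hadj : ¬ G.Adj u w) :
    ∃ x, G.Adj u x ∧ ¬ G.Adj w x := by
  by_contra hc
  push_neg at hc
  obtain ⟨c⟩ := crit_colorable h u
  apply not_col_pred (by omega) h
  classical
  have hw : w ∈ ({u}ᶜ : Set V) := by simp [Ne.symm hne]
  refine ⟨Coloring.mk (fun x => if hx : x = u then c ⟨w, hw⟩ else c ⟨x, by simp [hx]⟩) ?_⟩
  intro a b hab
  split_ifs with ha hb hb
  · subst ha hb; exact (G.irrefl hab).elim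
  · subst ha
    have hwb : G.Adj w b := hc b hab
    exact c.valid (by simp [hwb])
  · subst hb
    have hwa : G.Adj w a := hc a hab.symm
    exact fun hq => c.valid (by simp [hwa]) hq.symm
  · exact c.valid (by simp [hab])

/-- Key lemma: in a `k`-vertex-critical `(P5, P2+2P1)`-free graph with `k ≥ 2`,
every independent set has at most `k` vertices. -/
private lemma indep_le {V : Type} [Fintype V] {G : SimpleGraph V} {k : ℕ}
    (hk : 2 ≤ k) (hcrit : IsKVertexCritical G k) (hP5 : SGFree G (pathGraph 5))
    (hP2 : SGFree G P2plus2P1) (S : Finset V)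
    (hS : ∀ a ∈ S, ∀ b ∈ S, a ≠ b → ¬ G.Adj a b) : S.card ≤ k := by
  classical
  by_contra hbig
  push_neg at hbig
  obtain ⟨T, hTS, hTcard⟩ := Finset.exists_subset_card_eq (show k+1 ≤ S.card by omega)
  have hT : ∀ a ∈ T, ∀ b ∈ T, a ≠ b → ¬ G.Adj a b :=
    fun a ha b hb => hS a (hTS ha) b (hTS hb)
  -- for each s ∈ T, find x adjacent to all of T except s
  have hx : ∀ s ∈ T, ∃ x, ¬ G.Adj x s ∧ ∀ p ∈ T, p ≠ s → G.Adj x p := by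
    intro s hs
    obtain ⟨t, ht, hts⟩ := Finset.exists_mem_ne (show 1 < T.card by omega) s
    obtain ⟨x, hxt, hxs⟩ := exists_private hk hcrit hts (hT t ht s hs hts)
    refine ⟨x, fun h' => hxs h'.symm, ?_⟩
    intro p hp hps
    by_cases hpt : p = t
    · subst hpt; exact hxt.symm
    · by_contra hxp
      have hxp' : x ≠ p := fun h => (hT t ht p hp (Ne.symm hpt)) (h ▸ hxt)
      have hxs' : x ≠ s := fun h => (hT t ht s hs hts) (h ▸ hxt)
      exact p2free_app hP2 hxt (hT t ht p hp (Ne.symm hpt)) (hT t ht s hs hts)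
        hxp (fun h' => hxs h'.symm) (hT p hp s hs hps)
        (Ne.symm hpt) hts hxp' hxs' hps
  choose! f hf1 hf2 using hx
  -- f is injective on T
  have hinj : Set.InjOn f ↑T := by
    intro s hs s' hs' hss
    by_contra hne
    have h1 : G.Adj (f s') s := hf2 s' hs' s hs hne
    rw [← hss] at h1
    exact hf1 s hs h1
  -- the image of f is a clique
  have hclique : G.IsClique ↑(T.image f) := by
    intro x hx' y hy' hxy
    simp only [Finset.coe_image, Set.mem_image, Finset.mem_coe] at hx' hy'
    obtain ⟨s, hs, rfl⟩ := hx'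
    obtain ⟨s', hs', rfl⟩ := hy'
    have hss : s ≠ s' := fun h => hxy (by rw [h])
    by_contra hadj
    -- find r ∈ T distinct from s, s'
    have hr : (T \ {s, s'} : Finset V).Nonempty := by
      rw [Finset.sdiff_nonempty]
      intro hsub
      have h1 := Finset.card_le_card hsub
      have h2 : ({s, s'} : Finset V).card ≤ 2 :=
        le_trans (Finset.card_insert_le _ _) (by simp)
      omega
    obtain ⟨r, hrmem⟩ := hr
    rw [Finset.mem_sdiff, Finset.mem_insert, Finset.mem_singleton] at hrmem
    obtain ⟨hrT, hrne⟩ := hrmem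
    push_neg at hrne
    obtain ⟨hrs, hrs'⟩ := hrne
    -- induced P5 : s - f s' - r - f s - s'
    have e1 : G.Adj s (f s') := (hf2 s' hs' s hs hss).symm
    have e2 : G.Adj (f s') r := hf2 s' hs' r hrT hrs'
    have e3 : G.Adj r (f s) := (hf2 s hs r hrT hrs).symm
    have e4 : G.Adj (f s) s' := hf2 s hs s' hs' (Ne.symm hss)
    have n1 : ¬G.Adj s r := hT s hs r hrT (Ne.symm hrs)
    have n2 : ¬G.Adj s (f s) := fun h => hf1 s hs h.symm
    have n3 : ¬G.Adj s s' := hT s hs s' hs' hss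
    have n4 : ¬G.Adj (f s') (f s) := fun h => hadj h.symm
    have n5 : ¬G.Adj (f s') s' := hf1 s' hs'
    have n6 : ¬G.Adj r s' := hT r hrT s' hs' hrs'
    have d1 : s ≠ r := Ne.symm hrs
    have d2 : s ≠ f s := fun h => n3 (by rw [h]; exact e4)
    have d3 : s ≠ s' := hss
    have d4 : f s' ≠ f s := Ne.symm hxy
    have d5 : f s' ≠ s' := fun h => n3 (by rw [← h]; exact e1)
    have d6 : r ≠ s' := hrs'
    exact p5free_app hP5 e1 e2 e3 e4 n1 n2 n3 n4 n5 n6 d1 d2 d3 d4 d5 d6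
  -- a clique has at most k vertices
  have hcol : G.Colorable k := chromaticNumber_le_iff_colorable.mp (le_of_eq hcrit.1)
  have hle : (T.image f).card ≤ k := hclique.card_le_of_colorable hcol
  rw [Finset.card_image_of_injOn hinj, hTcard] at hle
  omega

/-- For every fixed `k ≥ 1`, there is a uniform bound on the number of vertices of
`k`-vertex-critical `(P5, P2 + 2P1)`-free graphs. -/
theorem stmt_15 (k : ℕ) (hk : 1 ≤ k) :
    ∃ N : ℕ, ∀ (V : Type) [Fintype V] (G : SimpleGraph V),
      IsKVertexCritical G k → SGFree G (pathGraph 5) → SGFree G P2plus2P1 →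
        Fintype.card V ≤ N := by
  classical
  refine ⟨k * k, ?_⟩
  intro V _ G hcrit hP5 hP2
  by_cases hk1 : k = 1
  · -- k = 1 : the graph has at most one vertex
    subst hk1
    by_contra hcard
    push_neg at hcard
    obtain ⟨v, w, hvw⟩ := Fintype.exists_pair_of_one_lt_card (show 1 < Fintype.card V by omega)
    have h2 := hcrit.2 v
    have h0 : (G.induce ({v}ᶜ : Set V)).chromaticNumber = 0 := by
      have := ENat.lt_one_iff_eq_zero.mp (by exact_mod_cast h2)
      exact this
    have hemp := (G.induce ({v}ᶜ : Set V)).isEmpty_of_chromaticNumber_eq_zero h0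
    exact hemp.false ⟨w, by simp [Ne.symm hvw]⟩
  · have hk2 : 2 ≤ k := by omega
    have hcol : G.Colorable k := chromaticNumber_le_iff_colorable.mp (le_of_eq hcrit.1)
    obtain ⟨c⟩ := hcol
    have hb : (Finset.univ : Finset V).card ≤
        k * ((Finset.univ : Finset V).image (fun v => c v)).card := by
      apply Finset.card_le_mul_card_image
      intro a _
      apply indep_le hk2 hcrit hP5 hP2
      intro x hxm y hym hxy hadj
      rw [Finset.mem_filter] at hxm hym
      exact (c.valid hadj) (by rw [hxm.2, hym.2])
    have him : ((Finset.univ : Finset V).image (fun v => c v)).card ≤ k := by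
      have := Finset.card_le_univ ((Finset.univ : Finset V).image (fun v => c v))
      simpa using this
    calc Fintype.card V = (Finset.univ : Finset V).card := (Finset.card_univ).symm
      _ ≤ k * ((Finset.univ : Finset V).image (fun v => c v)).card := hb
      _ ≤ k * k := Nat.mul_le_mul_left k him
end

section
/- Let G be a diamond-free graph and let v1,v2,v3,v4,v5 be vertices inducing a 5-cycle in G (indices modulo 5). Then for each i, there is at most one vertex x outside {v1,...,v5} with N(x) ∩ {v1,...,v5} = {v_{i−2}, v_i, v_{i+2}}. -/
open SimpleGraph

set_option linter.unreachableTactic false in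
set_option linter.unusedTactic false in
lemma embed_diamond {V : Type} (G : SimpleGraph V) (a b c d : V) (hab2 : a ≠ b)
    (hab : ¬G.Adj a b) (hac : G.Adj a c) (had : G.Adj a d) (hbc : G.Adj b c)
    (hbd : G.Adj b d) (hcd : G.Adj c d) : Nonempty (diamond ↪g G) := by
  have h1 := hac.ne; have h2 := had.ne; have h3 := hbc.ne; have h4 := hbd.ne
  have h5 := hcd.ne
  have hba : ¬ G.Adj b a := fun h => hab h.symm
  have hca := hac.symm; have hda := had.symm; have hcb := hbc.symm
  have hdb := hbd.symm; have hdc := hcd.symm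
  refine ⟨⟨![a,b,c,d], ?_⟩, ?_⟩
  · intro i j h
    fin_cases i <;> fin_cases j <;> simp_all <;> first | rfl | (exfalso; simp_all [eq_comm])
  · intro i j
    change G.Adj (![a,b,c,d] i) (![a,b,c,d] j) ↔ diamond.Adj i j
    fin_cases i <;> fin_cases j <;>
      simp_all [diamond, Sym2.eq_iff]

/-- In a diamond-free graph, for each `i` there is at most one vertex outside an
induced 5-cycle `v₁,…,v₅` whose neighborhood on the cycle is exactly
`{v_{i-2}, v_i, v_{i+2}}`. -/
theorem stmt_18 {V : Type} [Fintype V] (G : SimpleGraph V)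
    (hdiamond : SGFree G diamond)
    (v : Fin 5 → V) (hv : Function.Injective v)
    (hadj : ∀ i j : Fin 5, G.Adj (v i) (v j) ↔ (j = i + 1 ∨ i = j + 1)) :
    ∀ i : Fin 5,
      {x : V | x ∉ Set.range v ∧
        ∀ j : Fin 5, G.Adj x (v j) ↔ (j = i - 2 ∨ j = i ∨ j = i + 2)}.Subsingleton := by
  intro i x hx y hy
  by_contra hxy
  have hxm2 : G.Adj x (v (i-2)) := (hx.2 (i-2)).mpr (Or.inl rfl)
  have hxp2 : G.Adj x (v (i+2)) := (hx.2 (i+2)).mpr (Or.inr (Or.inr rfl))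
  have hxi : G.Adj x (v i) := (hx.2 i).mpr (Or.inr (Or.inl rfl))
  have hym2 : G.Adj y (v (i-2)) := (hy.2 (i-2)).mpr (Or.inl rfl)
  have hyp2 : G.Adj y (v (i+2)) := (hy.2 (i+2)).mpr (Or.inr (Or.inr rfl))
  have hyi : G.Adj y (v i) := (hy.2 i).mpr (Or.inr (Or.inl rfl))
  have harith : ∀ i : Fin 5, i - 2 = (i + 2) + 1 := by decide
  have hcyc : G.Adj (v (i-2)) (v (i+2)) := (hadj _ _).mpr (Or.inr (harith i))
  by_cases h : G.Adj x y
  · have hnon : ¬ G.Adj (v (i-2)) (v i) := by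
      rw [hadj]
      have : ∀ i : Fin 5, ¬(i = i - 2 + 1 ∨ i - 2 = i + 1) := by decide
      exact this i
    have hne : v (i-2) ≠ v i := fun he =>
      (by decide : ∀ j : Fin 5, j - 2 ≠ j) i (hv he)
    exact (show IsEmpty (diamond ↪g G) from hdiamond).false (embed_diamond G (v (i-2)) (v i) x y hne hnon
      hxm2.symm hym2.symm hxi.symm hyi.symm h).some
  · exact (show IsEmpty (diamond ↪g G) from hdiamond).false (embed_diamond G x y (v (i-2)) (v (i+2)) hxy h
      hxm2 hxp2 hym2 hyp2 hcyc).some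
end

section
/- Let k ≥ 1 and let G be a k-vertex-critical (P5, diamond)-free graph containing an induced 5-cycle on vertices v1,...,v5. Let Z be the set of vertices of G outside {v1,...,v5} having no neighbor in {v1,...,v5}. Then Z is an independent set and |Z| ≤ 32. -/
open SimpleGraph

set_option linter.unusedSectionVars false

section helpers
variable {V : Type} {G : SimpleGraph V}

lemma p5_contra (hP5 : SGFree G (pathGraph 5)) {a b c d e : V}
    (hab : G.Adj a b) (hbc : G.Adj b c) (hcd : G.Adj c d) (hde : G.Adj d e)
    (hac : ¬G.Adj a c) (had : ¬G.Adj a d) (hae : ¬G.Adj a e)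
    (hbd : ¬G.Adj b d) (hbe : ¬G.Adj b e) (hce : ¬G.Adj c e) : False := by
  have hba := hab.symm; have hcb := hbc.symm; have hdc := hcd.symm; have hed := hde.symm
  have hca : ¬G.Adj c a := fun h => hac h.symm
  have hda : ¬G.Adj d a := fun h => had h.symm
  have hea : ¬G.Adj e a := fun h => hae h.symm
  have hdb : ¬G.Adj d b := fun h => hbd h.symm
  have heb : ¬G.Adj e b := fun h => hbe h.symm
  have hec : ¬G.Adj e c := fun h => hce h.symm
  have nab : a ≠ b := hab.ne
  have nbc : b ≠ c := hbc.ne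
  have ncd : c ≠ d := hcd.ne
  have nde : d ≠ e := hde.ne
  have nac : a ≠ c := by rintro rfl; exact had hcd
  have nad : a ≠ d := by rintro rfl; exact hae hde
  have nae : a ≠ e := by rintro rfl; exact hda hde
  have nbd : b ≠ d := by rintro rfl; exact hda hba
  have nbe : b ≠ e := by rintro rfl; exact hdb hed.symm
  have nce : c ≠ e := by rintro rfl; exact hbe hbc
  refine hP5.false (⟨⟨![a,b,c,d,e], ?_⟩, ?_⟩ : pathGraph 5 ↪g G)
  · intro i j h
    fin_cases i <;> fin_cases j <;> simp_all
  · intro i j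
    show G.Adj (![a,b,c,d,e] i) (![a,b,c,d,e] j) ↔ _
    fin_cases i <;> fin_cases j <;>
      simp_all (config := { decide := true }) [pathGraph_adj]

lemma diamond_contra (hdia : SGFree G diamond) {a b c d : V} (hne : a ≠ b)
    (hab : ¬G.Adj a b) (hac : G.Adj a c) (had : G.Adj a d) (hbc : G.Adj b c)
    (hbd : G.Adj b d) (hcd : G.Adj c d) : False := by
  have hca := hac.symm; have hda := had.symm; have hcb := hbc.symm; have hdb := hbd.symm
  have hdc := hcd.symm
  have hba : ¬G.Adj b a := fun h => hab h.symm
  have nac : a ≠ c := hac.ne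
  have nad : a ≠ d := had.ne
  have nbc : b ≠ c := hbc.ne
  have nbd : b ≠ d := hbd.ne
  have ncd : c ≠ d := hcd.ne
  refine hdia.false (⟨⟨![a,b,c,d], ?_⟩, ?_⟩ : diamond ↪g G)
  · intro i j h
    fin_cases i <;> fin_cases j <;> simp_all
  · intro i j
    show G.Adj (![a,b,c,d] i) (![a,b,c,d] j) ↔ _
    fin_cases i <;> fin_cases j <;>
      simp_all (config := { decide := true }) [diamond]

end helpers

section col
variable {V : Type} [Fintype V] {G : SimpleGraph V} {k : ℕ}

lemma colorable_del (hcrit : IsKVertexCritical G k) (hk : 1 ≤ k) (w : V) :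
    (G.induce ({w}ᶜ : Set V)).Colorable (k-1) := by
  rw [← chromaticNumber_le_iff_colorable]
  have h := hcrit.2 w
  rw [show (k:ℕ∞) = ↑(k-1) + 1 by exact_mod_cast (Nat.sub_add_cancel hk).symm] at h
  exact (ENat.lt_add_one_iff (by simp)).mp h

lemma not_colorable (hcrit : IsKVertexCritical G k) (hk : 1 ≤ k) :
    ¬ G.Colorable (k-1) := by
  intro hc
  have h := hc.chromaticNumber_le
  rw [hcrit.1, Nat.cast_le] at h
  omega

lemma no_dom (hcrit : IsKVertexCritical G k) (hk : 1 ≤ k) {z z' : V} (hne : z' ≠ z)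
    (hdom : ∀ x, G.Adj z x → G.Adj z' x) : False := by
  classical
  obtain ⟨c⟩ := colorable_del hcrit hk z
  refine not_colorable hcrit hk ⟨Coloring.mk
    (fun x => if h : x = z then c ⟨z', Set.mem_compl_singleton_iff.mpr hne⟩
      else c ⟨x, Set.mem_compl_singleton_iff.mpr h⟩) ?_⟩
  intro x y hxy
  by_cases hx : x = z <;> by_cases hy : y = z
  · subst hx; subst hy; exact absurd hxy (G.irrefl)
  · subst hx
    simp only [dif_pos, dif_neg hy]
    have hzy : G.Adj z' y := hdom y hxy
    have : y ≠ z' := fun h => G.irrefl (h ▸ hzy)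
    exact c.valid (by simp [hzy, hne, this, Ne.symm this])
  · subst hy
    simp only [dif_pos, dif_neg hx]
    have hzx : G.Adj z' x := hdom x hxy.symm
    have : x ≠ z' := fun h => G.irrefl (h ▸ hzx)
    exact c.valid (by simp [hzx.symm, this])
  · simp only [dif_neg hx, dif_neg hy]
    exact c.valid (by simp [hxy])

lemma pre_conn (hcrit : IsKVertexCritical G k) (hk : 1 ≤ k) :
    ∀ x y : V, G.Reachable x y := by
  classical
  intro x y
  by_contra h
  have hne : x ≠ y := fun e => h (e ▸ Reachable.refl x)
  obtain ⟨c1⟩ := colorable_del hcrit hk y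
  obtain ⟨c2⟩ := colorable_del hcrit hk x
  refine not_colorable hcrit hk ⟨Coloring.mk
    (fun w => if hw : G.Reachable x w then
        c1 ⟨w, Set.mem_compl_singleton_iff.mpr (fun e => h (e ▸ hw))⟩
      else c2 ⟨w, Set.mem_compl_singleton_iff.mpr
        (fun e => hw (e ▸ (Reachable.refl x : G.Reachable x x)))⟩) ?_⟩
  intro a b hab
  by_cases ha : G.Reachable x a
  · have hb : G.Reachable x b := ha.trans hab.reachable
    simp only [dif_pos ha, dif_pos hb]
    exact c1.valid (by simp [hab])
  · have hb : ¬ G.Reachable x b := fun hb => ha (hb.trans hab.symm.reachable)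
    simp only [dif_neg ha, dif_neg hb]
    exact c2.valid (by simp [hab])

lemma walk_prefix_dist (hconn : G.Connected) {u w : V} (p : G.Walk u w) :
    ∀ a, a ≤ p.length → G.dist u (p.getVert a) ≤ a := by
  induction p with
  | nil => intro a _; simp [SimpleGraph.Walk.getVert, dist_self]
  | @cons u b w h q ih =>
    intro a ha
    cases a with
    | zero => simp [SimpleGraph.Walk.getVert_zero]
    | succ a =>
      rw [SimpleGraph.Walk.getVert_cons_succ]
      calc G.dist u (q.getVert a) ≤ G.dist u b + G.dist b (q.getVert a) :=
            hconn.dist_triangle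
        _ ≤ 1 + a := by
            have h1 : G.dist u b = 1 := dist_eq_one_iff_adj.mpr h
            have h2 := ih a (by simpa [SimpleGraph.Walk.length_cons] using ha)
            omega
        _ = a + 1 := by omega

lemma walk_suffix_dist {u w : V} (p : G.Walk u w) :
    ∀ a, G.dist (p.getVert a) w ≤ p.length - a := by
  induction p with
  | nil => intro a; simp [SimpleGraph.Walk.getVert]
  | @cons u b w h q ih =>
    intro a
    cases a with
    | zero =>
      simpa [SimpleGraph.Walk.getVert_zero] using dist_le (SimpleGraph.Walk.cons h q)
    | succ a =>
      rw [SimpleGraph.Walk.getVert_cons_succ]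
      simpa [SimpleGraph.Walk.length_cons] using ih a

end col

abbrev inT (i a : Fin 5) : Prop := a = i ∨ a = i + 1 ∨ a = i + 3
abbrev cadj (a b : Fin 5) : Prop := b = a + 1 ∨ a = b + 1

instance (i a : Fin 5) : Decidable (inT i a) := by unfold inT; infer_instance
instance (a b : Fin 5) : Decidable (cadj a b) := by unfold cadj; infer_instance

lemma pure_shape : ∀ b : Fin 5 → Bool, (∃ i, b i = true) →
    (∀ i, ¬(b i = true ∧ b (i+1) = true ∧ b (i+2) = true)) →
    (∀ i, b i = true → (b (i+1) = true ∨ b (i+2) = true) ∧ (b (i+4) = true ∨ b (i+3) = true)) →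
    ∃ i, ∀ j, (b j = true ↔ inT i j) := by decide

lemma pure_ss : ∀ i i' : Fin 5,
    (∃ a b, inT i a ∧ inT i' a ∧ inT i b ∧ inT i' b ∧ ¬cadj a b ∧ a ≠ b) ∨
    (∃ a b, inT i a ∧ inT i' a ∧ cadj a b ∧ inT i b ∧ ¬ inT i' b) ∨
    (∃ a b, inT i a ∧ inT i' a ∧ cadj a b ∧ inT i' b ∧ ¬ inT i b) := by decide

section struct
variable {V : Type} [Fintype V] {G : SimpleGraph V} {k : ℕ} {v : Fin 5 → V}

lemma stype (hP5 : SGFree G (pathGraph 5)) (hdia : SGFree G diamond)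
    (hv : Function.Injective v)
    (hadj : ∀ i j : Fin 5, G.Adj (v i) (v j) ↔ cadj i j)
    {z s : V} (hzs : G.Adj z s) (hznc : ∀ j, ¬ G.Adj z (v j))
    (hsome : ∃ i, G.Adj s (v i)) :
    ∃ i, ∀ j, G.Adj s (v j) ↔ inT i j := by
  classical
  set b : Fin 5 → Bool := fun j => decide (G.Adj s (v j)) with hb
  have hbe : ∀ j, b j = true ↔ G.Adj s (v j) := fun j => by simp [hb]
  have h1 : ∀ i, ¬(b i = true ∧ b (i+1) = true ∧ b (i+2) = true) := by
    rintro i ⟨hi, hi1, hi2⟩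
    rw [hbe] at hi hi1 hi2
    exact diamond_contra hdia (hv.ne ((by decide : ∀ i : Fin 5, i ≠ i + 2) i))
      (fun h => ((by decide : ∀ i : Fin 5, ¬ cadj i (i+2)) i) ((hadj _ _).mp h))
      hi.symm ((hadj i (i+1)).mpr ((by decide : ∀ i : Fin 5, cadj i (i+1)) i))
      hi2.symm ((hadj (i+2) (i+1)).mpr ((by decide : ∀ i : Fin 5, cadj (i+2) (i+1)) i)) hi1
  have h2 : ∀ i, b i = true →
      (b (i+1) = true ∨ b (i+2) = true) ∧ (b (i+4) = true ∨ b (i+3) = true) := by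
    intro i hi
    rw [hbe] at hi
    constructor
    · by_contra hcon
      push_neg at hcon
      obtain ⟨ha1, ha2⟩ := hcon
      have hn1 : ¬ G.Adj s (v (i+1)) := fun h => ha1 ((hbe _).mpr h)
      have hn2 : ¬ G.Adj s (v (i+2)) := fun h => ha2 ((hbe _).mpr h)
      exact p5_contra hP5 hzs hi
        ((hadj i (i+1)).mpr ((by decide : ∀ i : Fin 5, cadj i (i+1)) i))
        ((hadj (i+1) (i+2)).mpr ((by decide : ∀ i : Fin 5, cadj (i+1) (i+2)) i))
        (hznc i) (hznc (i+1)) (hznc (i+2)) hn1 hn2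
        (fun h => ((by decide : ∀ i : Fin 5, ¬ cadj i (i+2)) i) ((hadj _ _).mp h))
    · by_contra hcon
      push_neg at hcon
      obtain ⟨ha1, ha2⟩ := hcon
      have hn1 : ¬ G.Adj s (v (i+4)) := fun h => ha1 ((hbe _).mpr h)
      have hn2 : ¬ G.Adj s (v (i+3)) := fun h => ha2 ((hbe _).mpr h)
      exact p5_contra hP5 hzs hi
        ((hadj i (i+4)).mpr ((by decide : ∀ i : Fin 5, cadj i (i+4)) i))
        ((hadj (i+4) (i+3)).mpr ((by decide : ∀ i : Fin 5, cadj (i+4) (i+3)) i))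
        (hznc i) (hznc (i+4)) (hznc (i+3)) hn1 hn2
        (fun h => ((by decide : ∀ i : Fin 5, ¬ cadj i (i+3)) i) ((hadj _ _).mp h))
  obtain ⟨i₀, hi₀⟩ := hsome
  obtain ⟨i, hi⟩ := pure_shape b ⟨i₀, (hbe i₀).mpr hi₀⟩ h1 h2
  exact ⟨i, fun j => (hbe j).symm.trans (hi j)⟩

lemma SZadj (hP5 : SGFree G (pathGraph 5)) (hdia : SGFree G diamond)
    (hv : Function.Injective v)
    (hadj : ∀ i j : Fin 5, G.Adj (v i) (v j) ↔ cadj i j)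
    {z z' s s' : V} {i i' : Fin 5}
    (hznc : ∀ j, ¬ G.Adj z (v j)) (hz'nc : ∀ j, ¬ G.Adj z' (v j))
    (hzs : G.Adj z s) (hz's' : G.Adj z' s')
    (hts : ∀ j, G.Adj s (v j) ↔ inT i j) (hts' : ∀ j, G.Adj s' (v j) ↔ inT i' j)
    (hss' : G.Adj s s') : False := by
  rcases pure_ss i i' with ⟨a,b,h1,h2,h3,h4,h5,h6⟩ | ⟨a,b,h1,h2,h3,h4,h5⟩ | ⟨a,b,h1,h2,h3,h4,h5⟩
  · exact diamond_contra hdia (hv.ne h6) (fun h => h5 ((hadj _ _).mp h))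
      ((hts a).mpr h1).symm ((hts' a).mpr h2).symm
      ((hts b).mpr h3).symm ((hts' b).mpr h4).symm hss'
  · exact diamond_contra hdia (fun e => hz'nc b (by rw [← e]; exact hz's'))
      (fun h => h5 ((hts' b).mp h)) hss'.symm ((hts' a).mpr h2)
      ((hts b).mpr h4).symm ((hadj a b).mpr h3).symm ((hts a).mpr h1)
  · exact diamond_contra hdia (fun e => hznc b (by rw [← e]; exact hzs))
      (fun h => h5 ((hts b).mp h)) hss' ((hts a).mpr h1)
      ((hts' b).mpr h4).symm ((hadj a b).mpr h3).symm ((hts' a).mpr h2)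

lemma distTwo (hcrit : IsKVertexCritical G k) (hk : 1 ≤ k)
    (hP5 : SGFree G (pathGraph 5)) (hdia : SGFree G diamond)
    (hv : Function.Injective v)
    (hadj : ∀ i j : Fin 5, G.Adj (v i) (v j) ↔ cadj i j)
    {z : V} (hznc : ∀ j, ¬ G.Adj z (v j)) (hzC : z ∉ Set.range v) :
    ∃ s i, G.Adj z s ∧ G.Adj s (v i) := by
  classical
  have hpre : G.Preconnected := fun x y => pre_conn hcrit hk x y
  have hconn : G.Connected := (connected_iff G).mpr ⟨hpre, ⟨z⟩⟩
  set f : Fin 5 → ℕ := fun i => G.dist z (v i) with hf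
  set m : ℕ := Finset.univ.inf' Finset.univ_nonempty f with hm
  obtain ⟨i₀, _, hi₀⟩ := Finset.exists_mem_eq_inf' Finset.univ_nonempty f
  have hdist : G.dist z (v i₀) = m := hi₀.symm
  have hmle : ∀ j, m ≤ G.dist z (v j) := fun j => Finset.inf'_le f (Finset.mem_univ j)
  have hm0 : m ≠ 0 := by
    intro h
    exact hzC ⟨i₀, (((hpre z (v i₀)).dist_eq_zero_iff).mp (by omega)).symm⟩
  have hm1 : m ≠ 1 := by
    intro h
    exact hznc i₀ (dist_eq_one_iff_adj.mp (by omega))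
  obtain ⟨p, hp⟩ := (hpre z (v i₀)).exists_walk_length_eq_dist
  have hpl : p.length = m := by rw [hp, hdist]
  have hadj01 : G.Adj z (p.getVert 1) := by
    have := p.adj_getVert_succ (i := 0) (by omega)
    rwa [p.getVert_zero] at this
  by_cases hm2 : m = 2
  · refine ⟨p.getVert 1, i₀, hadj01, ?_⟩
    have h12 := p.adj_getVert_succ (i := 1) (by omega)
    have : p.getVert 2 = v i₀ := by
      rw [show (2:ℕ) = p.length by omega, p.getVert_length]
    rwa [this] at h12
  -- now m ≥ 3
  exfalso
  have hm3 : 3 ≤ m := by omega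
  have hdza : ∀ a, a ≤ m → G.dist z (p.getVert a) ≤ a := by
    intro a ha
    exact walk_prefix_dist hconn p a (by omega)
  have hdav : ∀ a, G.dist (p.getVert a) (v i₀) ≤ m - a := by
    intro a
    have := walk_suffix_dist p a
    rwa [hpl] at this
  have hnadj : ∀ a b, a + 2 ≤ b → b ≤ m → ¬ G.Adj (p.getVert a) (p.getVert b) := by
    intro a b hab hbm hAB
    have h1 : G.dist z (v i₀) ≤ G.dist z (p.getVert a) + G.dist (p.getVert a) (v i₀) :=
      hconn.dist_triangle
    have h2 : G.dist (p.getVert a) (v i₀) ≤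
        G.dist (p.getVert a) (p.getVert b) + G.dist (p.getVert b) (v i₀) :=
      hconn.dist_triangle
    have h3 : G.dist (p.getVert a) (p.getVert b) = 1 := dist_eq_one_iff_adj.mpr hAB
    have h4 := hdza a (by omega)
    have h5 := hdav b
    rw [hdist] at h1
    omega
  by_cases hm4 : 4 ≤ m
  · exact p5_contra hP5
      (by have := p.adj_getVert_succ (i := 0) (by omega); rwa [p.getVert_zero] at this)
      (p.adj_getVert_succ (i := 1) (by omega))
      (p.adj_getVert_succ (i := 2) (by omega))
      (p.adj_getVert_succ (i := 3) (by omega))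
      (by have := hnadj 0 2 (by omega) (by omega); rwa [p.getVert_zero] at this)
      (by have := hnadj 0 3 (by omega) (by omega); rwa [p.getVert_zero] at this)
      (by have := hnadj 0 4 (by omega) (by omega); rwa [p.getVert_zero] at this)
      (hnadj 1 3 (by omega) (by omega))
      (hnadj 1 4 (by omega) (by omega))
      (hnadj 2 4 (by omega) (by omega))
  -- m = 3
  have hm3' : m = 3 := by omega
  set x1 := p.getVert 1 with hx1
  set x2 := p.getVert 2 with hx2
  have h3v : p.getVert 3 = v i₀ := by rw [show (3:ℕ) = p.length by omega, p.getVert_length]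
  have hadj12 : G.Adj x1 x2 := p.adj_getVert_succ (i := 1) (by omega)
  have hadj2v : G.Adj x2 (v i₀) := by
    have := p.adj_getVert_succ (i := 2) (by omega)
    rwa [h3v] at this
  have hz2 : ¬ G.Adj z x2 := by
    have := hnadj 0 2 (by omega) (by omega)
    rwa [p.getVert_zero] at this
  have hx1v : ¬ G.Adj x1 (v i₀) := by
    have := hnadj 1 3 (by omega) (by omega)
    rwa [h3v] at this
  have hx1far : ∀ j, ¬ G.Adj x1 (v j) := by
    intro j hAdj
    have h1 : G.dist z (v j) ≤ G.dist z x1 + G.dist x1 (v j) := hconn.dist_triangle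
    have h2 : G.dist z x1 ≤ 1 := hdza 1 (by omega)
    have h3 : G.dist x1 (v j) = 1 := dist_eq_one_iff_adj.mpr hAdj
    have := hmle j
    omega
  by_cases hj1 : G.Adj x2 (v (i₀+1))
  · by_cases hj2 : G.Adj x2 (v (i₀+2))
    · -- x2 adjacent to v i₀, v (i₀+1), v (i₀+2): diamond
      exact diamond_contra hdia (hv.ne ((by decide : ∀ i : Fin 5, i ≠ i + 2) i₀))
        (fun h => ((by decide : ∀ i : Fin 5, ¬ cadj i (i+2)) i₀) ((hadj _ _).mp h))
        hadj2v.symm ((hadj i₀ (i₀+1)).mpr ((by decide : ∀ i : Fin 5, cadj i (i+1)) i₀))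
        hj2.symm ((hadj (i₀+2) (i₀+1)).mpr ((by decide : ∀ i : Fin 5, cadj (i+2) (i+1)) i₀))
        hj1
    · -- P5: z, x1, x2, v(i₀+1), v(i₀+2)
      exact p5_contra hP5 hadj01 hadj12 hj1
        ((hadj (i₀+1) (i₀+2)).mpr ((by decide : ∀ i : Fin 5, cadj (i+1) (i+2)) i₀))
        hz2 (hznc (i₀+1)) (hznc (i₀+2)) (hx1far (i₀+1)) (hx1far (i₀+2)) hj2
  · -- P5: z, x1, x2, v i₀, v(i₀+1)
    exact p5_contra hP5 hadj01 hadj12 hadj2v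
      ((hadj i₀ (i₀+1)).mpr ((by decide : ∀ i : Fin 5, cadj i (i+1)) i₀))
      hz2 (hznc i₀) (hznc (i₀+1)) hx1v (hx1far (i₀+1)) hj1

end struct

section main
variable {V : Type} [Fintype V] {G : SimpleGraph V} {k : ℕ} {v : Fin 5 → V}

lemma z_indep (hcrit : IsKVertexCritical G k) (hk : 1 ≤ k)
    (hP5 : SGFree G (pathGraph 5)) (hdia : SGFree G diamond)
    (hv : Function.Injective v)
    (hadj : ∀ i j : Fin 5, G.Adj (v i) (v j) ↔ cadj i j)
    {z1 z2 : V} (h1nc : ∀ j, ¬ G.Adj z1 (v j)) (h1C : z1 ∉ Set.range v)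
    (h2nc : ∀ j, ¬ G.Adj z2 (v j))
    (h12 : G.Adj z1 z2) : False := by
  classical
  obtain ⟨s1, i₀, hzs1, hs1v⟩ := distTwo hcrit hk hP5 hdia hv hadj h1nc h1C
  obtain ⟨i1, ht1⟩ := stype hP5 hdia hv hadj hzs1 h1nc ⟨i₀, hs1v⟩
  have claimA : ∀ (s : V) (i : Fin 5), G.Adj z1 s → (∀ j, G.Adj s (v j) ↔ inT i j) →
      ∀ w, (∀ j, ¬ G.Adj w (v j)) → G.Adj z1 w → G.Adj w s := by
    intro s i hzs hts w hwnc hz1w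
    by_contra hna
    exact p5_contra hP5
      ((hadj (i+2) (i+1)).mpr ((by decide : ∀ i : Fin 5, cadj (i+2) (i+1)) i))
      ((hts (i+1)).mpr ((by decide : ∀ i : Fin 5, inT i (i+1)) i)).symm
      hzs.symm hz1w
      (fun h => ((by decide : ∀ i : Fin 5, ¬ inT i (i+2)) i) ((hts (i+2)).mp h.symm))
      (fun h => h1nc (i+2) h.symm)
      (fun h => hwnc (i+2) h.symm)
      (fun h => h1nc (i+1) h.symm)
      (fun h => hwnc (i+1) h.symm)
      (fun h => hna h.symm)
  have hz2s1 : G.Adj z2 s1 := claimA s1 i1 hzs1 ht1 z2 h2nc h12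
  have huniq : ∀ x, G.Adj z1 x → x ≠ s1 → ∀ j, ¬ G.Adj x (v j) := by
    intro x hx hxs j hxj
    obtain ⟨ix, htx⟩ := stype hP5 hdia hv hadj hx h1nc ⟨j, hxj⟩
    have hz2x : G.Adj z2 x := claimA x ix hx htx z2 h2nc h12
    by_cases hsx : G.Adj s1 x
    · exact SZadj hP5 hdia hv hadj h1nc h1nc hzs1 hx ht1 htx hsx
    · exact diamond_contra hdia (Ne.symm hxs) hsx hzs1.symm hz2s1.symm hx.symm hz2x.symm h12
  have hclq : ∀ w w', G.Adj z1 w → G.Adj z1 w' → w ≠ w' → G.Adj w w' := by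
    intro w w' hw hw' hne
    by_cases hws : w = s1
    · have hw's : w' ≠ s1 := fun e => hne (hws.trans e.symm)
      rw [hws]
      exact (claimA s1 i1 hzs1 ht1 w' (huniq w' hw' hw's) hw').symm
    · by_cases hw's : w' = s1
      · rw [hw's]
        exact claimA s1 i1 hzs1 ht1 w (huniq w hw hws) hw
      · have hwnc := huniq w hw hws
        have hw'nc := huniq w' hw' hw's
        have hws1 : G.Adj w s1 := claimA s1 i1 hzs1 ht1 w hwnc hw
        have hw's1 : G.Adj w' s1 := claimA s1 i1 hzs1 ht1 w' hw'nc hw'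
        by_contra hnad
        exact diamond_contra hdia hne hnad hw.symm hws1 hw'.symm hw's1 hzs1
  have hk2 : 2 ≤ k := by
    by_contra hcon
    have hk1 : k = 1 := by omega
    obtain ⟨c⟩ := colorable_del hcrit hk (v 0)
    subst hk1
    exact (c ⟨v 1, Set.mem_compl_singleton_iff.mpr (hv.ne (by decide))⟩).elim0
  haveI : NeZero (k-1) := ⟨by omega⟩
  let N : Finset V := Finset.univ.filter (G.Adj z1)
  have hNmem : ∀ x, x ∈ N ↔ G.Adj z1 x := by intro x; simp [N]
  by_cases hcard : N.card ≤ k - 2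
  · obtain ⟨c⟩ := colorable_del hcrit hk z1
    let g : V → Fin (k-1) := fun x =>
      if hx : x = z1 then 0 else c ⟨x, Set.mem_compl_singleton_iff.mpr hx⟩
    let used : Finset (Fin (k-1)) := N.image g
    have husedcard : used.card < k - 1 :=
      lt_of_le_of_lt (le_trans Finset.card_image_le hcard) (by omega)
    have hne : usedᶜ.Nonempty := by
      rw [← Finset.card_pos, Finset.card_compl, Fintype.card_fin]
      omega
    obtain ⟨col, hcol⟩ := hne
    have hcolnot : col ∉ used := Finset.mem_compl.mp hcol
    refine not_colorable hcrit hk ⟨Coloring.mk (fun x =>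
      if hx : x = z1 then col else c ⟨x, Set.mem_compl_singleton_iff.mpr hx⟩) ?_⟩
    intro x y hxy
    by_cases hx : x = z1 <;> by_cases hy : y = z1
    · exact absurd hxy (by rw [hx, hy]; exact G.irrefl)
    · rw [dif_pos hx, dif_neg hy]
      have hxy' : G.Adj z1 y := by rw [← hx]; exact hxy
      have hmem : g y ∈ used := Finset.mem_image_of_mem g ((hNmem y).mpr hxy')
      rw [show g y = c ⟨y, Set.mem_compl_singleton_iff.mpr hy⟩ from dif_neg hy] at hmem
      intro he
      exact hcolnot (he ▸ hmem)
    · rw [dif_pos hy, dif_neg hx]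
      have hxy' : G.Adj z1 x := by rw [← hy]; exact hxy.symm
      have hmem : g x ∈ used := Finset.mem_image_of_mem g ((hNmem x).mpr hxy')
      rw [show g x = c ⟨x, Set.mem_compl_singleton_iff.mpr hx⟩ from dif_neg hx] at hmem
      intro he
      exact hcolnot (he.symm ▸ hmem)
    · rw [dif_neg hx, dif_neg hy]
      exact c.valid (by simp [hxy])
  · obtain ⟨c1⟩ := colorable_del hcrit hk (v 0)
    let K : Finset V := insert z1 N
    have hz1N : z1 ∉ N := fun h => G.irrefl ((hNmem z1).mp h)
    have hKcard : k ≤ K.card := by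
      rw [Finset.card_insert_of_notMem hz1N]
      omega
    have hKne : ∀ x ∈ K, x ≠ v 0 := by
      intro x hx
      rcases Finset.mem_insert.mp hx with rfl | hxN
      · exact fun he => h1C ⟨0, he.symm⟩
      · intro he
        exact h1nc 0 (by rw [← he]; exact (hNmem x).mp hxN)
    have hKadj : ∀ x ∈ K, ∀ y ∈ K, x ≠ y → G.Adj x y := by
      intro x hx y hy hne
      rcases Finset.mem_insert.mp hx with rfl | hxN <;>
        rcases Finset.mem_insert.mp hy with rfl | hyN
      · exact absurd rfl hne
      · exact (hNmem y).mp hyN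
      · exact ((hNmem x).mp hxN).symm
      · exact hclq x y ((hNmem x).mp hxN) ((hNmem y).mp hyN) hne
    let F : V → Fin (k-1) := fun x =>
      if hx : x = v 0 then 0 else c1 ⟨x, Set.mem_compl_singleton_iff.mpr hx⟩
    have hinj : Set.InjOn F (K : Set V) := by
      intro x hx y hy hFxy
      by_contra hne
      have hxK := Finset.mem_coe.mp hx
      have hyK := Finset.mem_coe.mp hy
      have hxv := hKne x hxK
      have hyv := hKne y hyK
      rw [show F x = c1 ⟨x, Set.mem_compl_singleton_iff.mpr hxv⟩ from dif_neg hxv,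
        show F y = c1 ⟨y, Set.mem_compl_singleton_iff.mpr hyv⟩ from dif_neg hyv] at hFxy
      exact c1.valid (by simp [hKadj x hxK y hyK hne]) hFxy
    have hle := Finset.card_le_card_of_injOn F (fun a _ => Finset.mem_univ (F a)) hinj
    rw [Finset.card_univ, Fintype.card_fin] at hle
    omega

end main

/-- In a `k`-vertex-critical `(P5, diamond)`-free graph with an induced 5-cycle
`v₁,…,v₅`, the set `Z` of vertices outside the cycle with no neighbor on the cycle is
an independent set of size at most 32. -/
theorem stmt_19 (k : ℕ) (hk : 1 ≤ k) {V : Type} [Fintype V] (G : SimpleGraph V)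
    (hcrit : IsKVertexCritical G k)
    (hP5 : SGFree G (pathGraph 5))
    (hdiamond : SGFree G diamond)
    (v : Fin 5 → V) (hv : Function.Injective v)
    (hadj : ∀ i j : Fin 5, G.Adj (v i) (v j) ↔ (j = i + 1 ∨ i = j + 1))
    (Z : Set V)
    (hZ : ∀ x : V, x ∈ Z ↔ x ∉ Set.range v ∧ ∀ j : Fin 5, ¬ G.Adj x (v j)) :
    Z.Pairwise (fun a b => ¬ G.Adj a b) ∧ Z.ncard ≤ 32 := by
  classical
  have hadj' : ∀ i j : Fin 5, G.Adj (v i) (v j) ↔ cadj i j := hadj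
  have hindep : ∀ a ∈ Z, ∀ b ∈ Z, G.Adj a b → False := by
    intro a ha b hb hab
    obtain ⟨haC, hanc⟩ := (hZ a).mp ha
    obtain ⟨hbC, hbnc⟩ := (hZ b).mp hb
    exact z_indep hcrit hk hP5 hdiamond hv hadj' hanc haC hbnc hab
  constructor
  · intro a ha b hb _ hab
    exact hindep a ha b hb hab
  · set f : V → (Fin 5 → Bool) := fun z i =>
      if (∃ s, G.Adj z s ∧ ∀ j, G.Adj s (v j) ↔ inT i j) then true else false with hf
    have hinj : Set.InjOn f Z := by
      intro z hz z' hz' hff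
      by_contra hne
      obtain ⟨hzC, hznc⟩ := (hZ z).mp hz
      obtain ⟨hz'C, hz'nc⟩ := (hZ z').mp hz'
      obtain ⟨s, hzs, hns⟩ : ∃ s, G.Adj z s ∧ ¬ G.Adj z' s := by
        by_contra h
        push_neg at h
        exact no_dom hcrit hk (Ne.symm hne) h
      have hsC : s ∉ Set.range v := by
        rintro ⟨j, hj⟩
        exact hznc j (by rw [hj]; exact hzs)
      have hsj : ∃ j, G.Adj s (v j) := by
        by_contra hno
        push_neg at hno
        exact hindep z hz s ((hZ s).mpr ⟨hsC, hno⟩) hzs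
      obtain ⟨i, hts⟩ := stype hP5 hdiamond hv hadj' hzs hznc hsj
      have hfz : f z i = true := by
        rw [hf]
        simp only
        rw [if_pos ⟨s, hzs, hts⟩]
      have hfz' : f z' i = true := by rw [← hff]; exact hfz
      have hex : ∃ s', G.Adj z' s' ∧ ∀ j, G.Adj s' (v j) ↔ inT i j := by
        by_contra hcon
        rw [hf] at hfz'
        simp only at hfz'
        rw [if_neg hcon] at hfz'
        exact Bool.false_ne_true hfz'
      obtain ⟨s', hz's', hts'⟩ := hex
      by_cases hss' : G.Adj s s'
      · exact SZadj hP5 hdiamond hv hadj' hznc hz'nc hzs hz's' hts hts' hss'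
      · have hnes : s ≠ s' := by
          rintro rfl
          exact hns hz's'
        exact diamond_contra hdiamond hnes hss'
          ((hts i).mpr (Or.inl rfl))
          ((hts (i+1)).mpr ((by decide : ∀ i : Fin 5, inT i (i+1)) i))
          ((hts' i).mpr (Or.inl rfl))
          ((hts' (i+1)).mpr ((by decide : ∀ i : Fin 5, inT i (i+1)) i))
          ((hadj' i (i+1)).mpr ((by decide : ∀ i : Fin 5, cadj i (i+1)) i))
    calc Z.ncard ≤ (Set.univ : Set (Fin 5 → Bool)).ncard :=
          Set.ncard_le_ncard_of_injOn f (fun x _ => Set.mem_univ (f x)) hinj Set.finite_univ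
      _ = 32 := by
          rw [Set.ncard_univ, Nat.card_eq_fintype_card]
          simp
end
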